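/- arXiv:2108.06391 — 7 statements merged into one kernel-verified Lean document; each statement's English description precedes it below -/
import Mathlib

section
/- Let U be a random variable taking values in the open interval (0,1). Then U is uniformly distributed on (0,1) if and only if E[(2U−1)·1{U ≥ t}] − t(1−t) = 0 for every t ∈ (0,1). -/
open MeasureTheory Set Filter
open scoped ENNReal

section Aux

lemma leb_Ici (t : ℝ) (ht0 : 0 < t) (ht1 : t ≤ 1) :
    ∫ x in Ici t, (2 * x - 1) ∂(volume.restrict (Ioo (0:ℝ) 1)) = t * (1 - t) := by
  rw [Measure.restrict_restrict measurableSet_Ici]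
  have hset : Ici t ∩ Ioo (0:ℝ) 1 = Ico t 1 := by
    ext x
    simp only [mem_inter_iff, mem_Ici, mem_Ioo, mem_Ico]
    constructor
    · rintro ⟨h1, h2, h3⟩; exact ⟨h1, h3⟩
    · rintro ⟨h1, h2⟩; exact ⟨h1, lt_of_lt_of_le ht0 h1, h2⟩
  rw [hset, MeasureTheory.integral_Ico_eq_integral_Ioo, ← MeasureTheory.integral_Ioc_eq_integral_Ioo,
    ← intervalIntegral.integral_of_le ht1]
  have : ∫ x in t..1, (2 * x - 1) = (1^2 - 1) - (t^2 - t) := by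
    apply intervalIntegral.integral_eq_sub_of_hasDerivAt (f := fun x => x^2 - x)
    · intro x _
      have h1 : HasDerivAt (fun x : ℝ => x ^ 2) (2 * x) x := by
        simpa using hasDerivAt_pow 2 x
      exact h1.sub (hasDerivAt_id x)
    · exact (Continuous.intervalIntegrable (by continuity) t 1)
  rw [this]; ring

lemma leb_total : ∫ x, (2 * x - 1) ∂(volume.restrict (Ioo (0:ℝ) 1)) = 0 := by
  rw [← MeasureTheory.integral_Ioc_eq_integral_Ioo, ← intervalIntegral.integral_of_le (by norm_num : (0:ℝ) ≤ 1)]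
  have : ∫ x in (0:ℝ)..1, (2 * x - 1) = (1^2 - 1) - (0^2 - 0) := by
    apply intervalIntegral.integral_eq_sub_of_hasDerivAt (f := fun x => x^2 - x)
    · intro x _
      have h1 : HasDerivAt (fun x : ℝ => x ^ 2) (2 * x) x := by
        simpa using hasDerivAt_pow 2 x
      exact h1.sub (hasDerivAt_id x)
    · exact (Continuous.intervalIntegrable (by continuity) 0 1)
  rw [this]; ring

lemma restrict_eq_of_withDensity_eq (μ ν : Measure ℝ) {φ : ℝ → ℝ≥0∞} (hφ : Measurable φ)
    {s : Set ℝ} (hs : MeasurableSet s) (hφs : ∀ x, φ x ≠ 0 ↔ x ∈ s) (hφtop : ∀ x, φ x ≠ ∞)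
    (h : μ.withDensity φ = ν.withDensity φ) : μ.restrict s = ν.restrict s := by
  have h2 : φ * φ⁻¹ = s.indicator 1 := by
    funext x
    by_cases hx : x ∈ s
    · rw [indicator_of_mem hx]
      exact ENNReal.mul_inv_cancel ((hφs x).2 hx) (hφtop x)
    · have h0 : φ x = 0 := of_not_not fun hc => hx ((hφs x).1 hc)
      rw [indicator_of_notMem hx]
      simp [Pi.mul_apply, Pi.inv_apply, h0]
  have key : ∀ m : Measure ℝ, (m.withDensity φ).withDensity φ⁻¹ = m.restrict s := by
    intro m
    rw [show φ⁻¹ = fun x => (φ x)⁻¹ from rfl, ← withDensity_mul m hφ (g := fun x => (φ x)⁻¹) hφ.inv,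
      show (φ * fun x => (φ x)⁻¹) = φ * φ⁻¹ from rfl, h2, withDensity_indicator_one hs]
  rw [← key μ, ← key ν, h]

lemma withDensity_ofReal_apply (μ : Measure ℝ) {f : ℝ → ℝ}
    (hfi : Integrable f μ) {s : Set ℝ} (hs : MeasurableSet s) (hpos : ∀ x ∈ s, 0 ≤ f x) :
    (μ.withDensity fun x => ENNReal.ofReal (f x)) s = ENNReal.ofReal (∫ x in s, f x ∂μ) := by
  rw [withDensity_apply _ hs]
  exact (ofReal_integral_eq_lintegral_ofReal hfi.restrict
    ((ae_restrict_iff' hs).2 (ae_of_all _ hpos))).symm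

end Aux

lemma uniform_of_integral (μ : Measure ℝ) [IsProbabilityMeasure μ]
    (hsupp : μ ((Ioo (0:ℝ) 1)ᶜ) = 0)
    (h : ∀ t ∈ Ioo (0:ℝ) 1, ∫ x in Ici t, (2 * x - 1) ∂μ = t * (1 - t)) :
    μ = volume.restrict (Ioo (0:ℝ) 1) := by
  set L := volume.restrict (Ioo (0:ℝ) 1) with hLdef
  haveI hLP : IsProbabilityMeasure L :=
    ⟨by rw [hLdef, Measure.restrict_apply_univ, Real.volume_Ioo]; norm_num⟩
  have hsuppL : L ((Ioo (0:ℝ) 1)ᶜ) = 0 := by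
    rw [hLdef, Measure.restrict_apply (measurableSet_Ioo.compl)]
    simp
  have hfm : Measurable (fun x : ℝ => 2 * x - 1) := by fun_prop
  have haeμ : ∀ᵐ x ∂μ, x ∈ Ioo (0:ℝ) 1 := by
    rw [ae_iff]
    simpa [Set.compl_def] using hsupp
  have haeL : ∀ᵐ x ∂L, x ∈ Ioo (0:ℝ) 1 := ae_restrict_mem measurableSet_Ioo
  have hbound : ∀ x ∈ Ioo (0:ℝ) 1, ‖2 * x - 1‖ ≤ 1 := by
    intro x hx
    rw [Real.norm_eq_abs, abs_le]
    exact ⟨by linarith [hx.1], by linarith [hx.2]⟩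
  have hint : Integrable (fun x : ℝ => 2 * x - 1) μ :=
    Integrable.mono' (integrable_const 1) hfm.aestronglyMeasurable
      (haeμ.mono fun x hx => hbound x hx)
  have hintL : Integrable (fun x : ℝ => 2 * x - 1) L :=
    Integrable.mono' (integrable_const 1) hfm.aestronglyMeasurable
      (haeL.mono fun x hx => hbound x hx)
  have hLIci : ∀ t ∈ Ioo (0:ℝ) 1, ∫ x in Ici t, (2 * x - 1) ∂L = t * (1 - t) :=
    fun t ht => leb_Ici t ht.1 ht.2.le
  -- total integral of f with respect to μ vanishes
  have hμtot : ∫ x, (2 * x - 1) ∂μ = 0 := by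
    have hmono : Monotone (fun n : ℕ => Ici ((1:ℝ)/(n+2))) := by
      intro n m hnm
      apply Ici_subset_Ici.2
      apply one_div_le_one_div_of_le (by positivity)
      have : (n:ℝ) ≤ m := Nat.cast_le.2 hnm
      linarith
    have hunion : ⋃ n : ℕ, Ici ((1:ℝ)/(n+2)) = Ioi (0:ℝ) := by
      ext x
      simp only [mem_iUnion, mem_Ici, mem_Ioi]
      constructor
      · rintro ⟨n, hn⟩
        exact lt_of_lt_of_le (by positivity) hn
      · intro hx
        obtain ⟨n, hn⟩ := exists_nat_one_div_lt hx
        refine ⟨n, le_of_lt (lt_of_le_of_lt ?_ hn)⟩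
        exact one_div_le_one_div_of_le (by positivity) (by linarith)
    have h1 : Tendsto (fun n : ℕ => ∫ x in Ici ((1:ℝ)/(n+2)), (2 * x - 1) ∂μ) atTop
        (nhds (∫ x in Ioi (0:ℝ), (2 * x - 1) ∂μ)) := by
      have := tendsto_setIntegral_of_monotone (fun n => measurableSet_Ici) hmono
        (by rw [hunion]; exact hint.integrableOn)
      rwa [hunion] at this
    have hIoi : ∫ x in Ioi (0:ℝ), (2 * x - 1) ∂μ = ∫ x, (2 * x - 1) ∂μ := by
      rw [Measure.restrict_eq_self_of_ae_mem (s := Ioi (0:ℝ)) (haeμ.mono fun x hx => hx.1)]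
    have hval : ∀ n : ℕ, ∫ x in Ici ((1:ℝ)/(n+2)), (2 * x - 1) ∂μ
        = (1/((n:ℝ)+2)) * (1 - 1/((n:ℝ)+2)) := by
      intro n
      refine h _ ⟨by positivity, ?_⟩
      rw [div_lt_one (by positivity)]
      have : (0:ℝ) ≤ n := Nat.cast_nonneg n
      linarith
    have ht0 : Tendsto (fun n : ℕ => (1:ℝ)/((n:ℝ)+2)) atTop (nhds 0) := by
      have hdiv : Tendsto (fun n : ℕ => ((n:ℝ)+2)) atTop atTop :=
        tendsto_atTop_add_const_right _ 2 tendsto_natCast_atTop_atTop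
      simpa [one_div, Pi.inv_def] using hdiv.inv_tendsto_atTop
    have h2 : Tendsto (fun n : ℕ => (1/((n:ℝ)+2)) * (1 - 1/((n:ℝ)+2))) atTop (nhds 0) := by
      have := ht0.mul ((tendsto_const_nhds (x := (1:ℝ)) (f := atTop (α := ℕ))).sub ht0)
      simpa using this
    have h3 : Tendsto (fun n : ℕ => ∫ x in Ici ((1:ℝ)/(n+2)), (2 * x - 1) ∂μ) atTop (nhds 0) :=
      h2.congr (fun n => (hval n).symm)
    rw [← hIoi]
    exact tendsto_nhds_unique h1 h3
  have hLtot : ∫ x, (2 * x - 1) ∂L = 0 := leb_total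
  -- integrals over Iio
  have hIio : ∀ (m : Measure ℝ), Integrable (fun x : ℝ => 2 * x - 1) m →
      (∫ x, (2 * x - 1) ∂m = 0) → ∀ t : ℝ, (∫ x in Ici t, (2 * x - 1) ∂m = t * (1 - t)) →
      ∫ x in Iio t, (2 * x - 1) ∂m = -(t * (1 - t)) := by
    intro m hm hm0 t hmt
    have hsplit := integral_add_compl (measurableSet_Iio (a := t)) hm
    rw [compl_Iio, hmt, hm0] at hsplit
    linarith

  -- positive part density
  set g : ℝ → ℝ≥0∞ := fun x => ENNReal.ofReal (2 * x - 1) with hgdef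
  have hgm : Measurable g := ENNReal.measurable_ofReal.comp hfm
  have hg0 : ∀ x, g x ≠ 0 ↔ x ∈ Ioi (2⁻¹:ℝ) := by
    intro x
    simp only [hgdef, ne_eq, ENNReal.ofReal_eq_zero, not_le, mem_Ioi]
    constructor <;> intro hx <;> linarith
  have hgtop : ∀ x, g x ≠ ∞ := fun x => ENNReal.ofReal_ne_top
  haveI hfin1 : IsFiniteMeasure (μ.withDensity g) := by
    refine isFiniteMeasure_withDensity ?_
    have hle : ∫⁻ x, g x ∂μ ≤ ∫⁻ _, 1 ∂μ := by
      refine lintegral_mono_ae (haeμ.mono fun x hx => ?_)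
      simp only [hgdef]
      exact ENNReal.ofReal_le_one.2 (by linarith [hx.2])
    rw [lintegral_one] at hle
    exact ne_top_of_le_ne_top (measure_ne_top μ univ) hle
  haveI hfin2 : IsFiniteMeasure (L.withDensity g) := by
    refine isFiniteMeasure_withDensity ?_
    have hle : ∫⁻ x, g x ∂L ≤ ∫⁻ _, 1 ∂L := by
      refine lintegral_mono_ae (haeL.mono fun x hx => ?_)
      simp only [hgdef]
      exact ENNReal.ofReal_le_one.2 (by linarith [hx.2])
    rw [lintegral_one] at hle
    exact ne_top_of_le_ne_top (measure_ne_top L univ) hle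
  have hmid : ∀ (m : Measure ℝ), Integrable (fun x : ℝ => 2 * x - 1) m →
      ∀ t : ℝ, 2⁻¹ ≤ t → (∫ x in Ici t, (2 * x - 1) ∂m = t * (1 - t)) →
      (m.withDensity g) (Ici t) = ENNReal.ofReal (t * (1 - t)) := by
    intro m hm t ht hmt
    rw [hgdef, withDensity_ofReal_apply m hm measurableSet_Ici (fun x hx => by
      have := mem_Ici.1 hx; linarith), hmt]
  have hgind : ∀ m : Measure ℝ, m.withDensity g = (m.restrict (Ioi (2⁻¹:ℝ))).withDensity g := by
    intro m
    conv_lhs => rw [show g = (Ioi (2⁻¹:ℝ)).indicator g by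
      funext x
      by_cases hx : x ∈ Ioi (2⁻¹:ℝ)
      · rw [indicator_of_mem hx]
      · rw [indicator_of_notMem hx]
        exact of_not_not fun hc => hx ((hg0 x).1 hc)]
    exact withDensity_indicator measurableSet_Ioi _
  have hlow : ∀ (m : Measure ℝ) (t : ℝ), t ≤ 2⁻¹ →
      (m.withDensity g) (Ici t) = (m.withDensity g) (Ioi (2⁻¹:ℝ)) := by
    intro m t ht
    have hss : Ioi (2⁻¹:ℝ) ⊆ Ici t := fun x hx => le_trans ht (le_of_lt hx)
    rw [hgind m, withDensity_apply _ measurableSet_Ici, withDensity_apply _ measurableSet_Ioi,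
      Measure.restrict_restrict measurableSet_Ici, Measure.restrict_restrict measurableSet_Ioi,
      inter_self, inter_eq_self_of_subset_right hss]
  have hIci_all : ∀ t : ℝ, (μ.withDensity g) (Ici t) = (L.withDensity g) (Ici t) := by
    have hhalf : (μ.withDensity g) (Ioi (2⁻¹:ℝ)) = (L.withDensity g) (Ioi (2⁻¹:ℝ)) := by
      have hmono : Monotone (fun n : ℕ => Ici ((2⁻¹:ℝ) + 1/(n+4))) := by
        intro n m hnm
        apply Ici_subset_Ici.2
        have h1 : (1:ℝ)/(m+4) ≤ 1/(n+4) :=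
          one_div_le_one_div_of_le (by positivity) (by have : (n:ℝ) ≤ m := Nat.cast_le.2 hnm; linarith)
        linarith
      have hunion : ⋃ n : ℕ, Ici ((2⁻¹:ℝ) + 1/(n+4)) = Ioi (2⁻¹:ℝ) := by
        ext x
        simp only [mem_iUnion, mem_Ici, mem_Ioi]
        constructor
        · rintro ⟨n, hn⟩
          have : (0:ℝ) < 1/(n+4) := by positivity
          linarith
        · intro hx
          obtain ⟨n, hn⟩ := exists_nat_one_div_lt (sub_pos.2 hx)
          refine ⟨n, ?_⟩
          have h1 : (1:ℝ)/(n+4) ≤ 1/(n+1) :=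
            one_div_le_one_div_of_le (by positivity) (by linarith)
          linarith
      have hep : ∀ n : ℕ, (2⁻¹:ℝ) ≤ 2⁻¹ + 1/(n+4) ∧ (2⁻¹:ℝ) + 1/(n+4) ∈ Ioo (0:ℝ) 1 := by
        intro n
        have h4 : (1:ℝ)/(n+4) ≤ 1/4 :=
          one_div_le_one_div_of_le (by norm_num) (by linarith [Nat.cast_nonneg (α := ℝ) n])
        have h0 : (0:ℝ) < 1/(n+4) := by positivity
        refine ⟨by linarith, by constructor <;> [linarith; linarith]⟩
      have h1 := tendsto_measure_iUnion_atTop (μ := μ.withDensity g) hmono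
      have h2 := tendsto_measure_iUnion_atTop (μ := L.withDensity g) hmono
      rw [hunion] at h1 h2
      refine tendsto_nhds_unique (h1.congr fun n => ?_) h2
      show (μ.withDensity g) (Ici _) = (L.withDensity g) (Ici _)
      rw [hmid μ hint _ (hep n).1 (h _ (hep n).2), hmid L hintL _ (hep n).1 (hLIci _ (hep n).2)]
    intro t
    rcases le_or_gt t 2⁻¹ with hc | hc
    · rw [hlow μ t hc, hlow L t hc, hhalf]
    · rcases lt_or_ge t 1 with hc1 | hc1
      · have ht : t ∈ Ioo (0:ℝ) 1 := ⟨lt_trans (by norm_num) hc, hc1⟩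
        rw [hmid μ hint t hc.le (h t ht), hmid L hintL t hc.le (hLIci t ht)]
      · have hsub : Ici t ⊆ (Ioo (0:ℝ) 1)ᶜ := fun x hx => by
          simp only [mem_compl_iff, mem_Ioo, not_and, not_lt]
          intro _
          linarith [mem_Ici.1 hx]
        rw [(withDensity_absolutelyContinuous μ g) (measure_mono_null hsub hsupp),
            (withDensity_absolutelyContinuous L g) (measure_mono_null hsub hsuppL)]
  have hμIoi : μ.restrict (Ioi (2⁻¹:ℝ)) = L.restrict (Ioi (2⁻¹:ℝ)) :=
    restrict_eq_of_withDensity_eq μ L hgm measurableSet_Ioi hg0 hgtop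
      (Measure.ext_of_Ici _ _ hIci_all)

  -- negative part density
  set gn : ℝ → ℝ≥0∞ := fun x => ENNReal.ofReal (1 - 2 * x) with hgndef
  have hgnm : Measurable gn := ENNReal.measurable_ofReal.comp (by fun_prop)
  have hgn0 : ∀ x, gn x ≠ 0 ↔ x ∈ Iio (2⁻¹:ℝ) := by
    intro x
    simp only [hgndef, ne_eq, ENNReal.ofReal_eq_zero, not_le, mem_Iio]
    constructor <;> intro hx <;> linarith
  have hgntop : ∀ x, gn x ≠ ∞ := fun x => ENNReal.ofReal_ne_top
  haveI hfin3 : IsFiniteMeasure (μ.withDensity gn) := by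
    refine isFiniteMeasure_withDensity ?_
    have hle : ∫⁻ x, gn x ∂μ ≤ ∫⁻ _, 1 ∂μ := by
      refine lintegral_mono_ae (haeμ.mono fun x hx => ?_)
      simp only [hgndef]
      exact ENNReal.ofReal_le_one.2 (by linarith [hx.1])
    rw [lintegral_one] at hle
    exact ne_top_of_le_ne_top (measure_ne_top μ univ) hle
  haveI hfin4 : IsFiniteMeasure (L.withDensity gn) := by
    refine isFiniteMeasure_withDensity ?_
    have hle : ∫⁻ x, gn x ∂L ≤ ∫⁻ _, 1 ∂L := by
      refine lintegral_mono_ae (haeL.mono fun x hx => ?_)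
      simp only [hgndef]
      exact ENNReal.ofReal_le_one.2 (by linarith [hx.1])
    rw [lintegral_one] at hle
    exact ne_top_of_le_ne_top (measure_ne_top L univ) hle
  have hintn : ∀ m : Measure ℝ, Integrable (fun x : ℝ => 2 * x - 1) m →
      Integrable (fun x : ℝ => 1 - 2 * x) m := by
    intro m hm
    exact hm.neg.congr (ae_of_all _ fun x => by simp [neg_sub])
  have hIioval : ∀ m : Measure ℝ, Integrable (fun x : ℝ => 2 * x - 1) m → ∀ t : ℝ, t ≤ 2⁻¹ →
      (∫ x in Iio t, (2 * x - 1) ∂m = -(t * (1 - t))) →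
      (m.withDensity gn) (Iio t) = ENNReal.ofReal (t * (1 - t)) := by
    intro m hm t ht hval
    have e : ∫ x in Iio t, (1 - 2 * x) ∂m = t * (1 - t) := by
      have e2 : (fun x : ℝ => 1 - 2 * x) = fun x : ℝ => -(2 * x - 1) := funext fun x => by ring
      rw [e2, integral_neg, hval, neg_neg]
    rw [hgndef, withDensity_ofReal_apply m (hintn m hm) measurableSet_Iio (fun x hx => by
      have := mem_Iio.1 hx; linarith), e]
  have hgnind : ∀ m : Measure ℝ, m.withDensity gn = (m.restrict (Iio (2⁻¹:ℝ))).withDensity gn := by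
    intro m
    conv_lhs => rw [show gn = (Iio (2⁻¹:ℝ)).indicator gn by
      funext x
      by_cases hx : x ∈ Iio (2⁻¹:ℝ)
      · rw [indicator_of_mem hx]
      · rw [indicator_of_notMem hx]
        exact of_not_not fun hc => hx ((hgn0 x).1 hc)]
    exact withDensity_indicator measurableSet_Iio _
  have hlown : ∀ (m : Measure ℝ) (t : ℝ), 2⁻¹ ≤ t →
      (m.withDensity gn) (Iio t) = (m.withDensity gn) (Iio (2⁻¹:ℝ)) := by
    intro m t ht
    have hss : Iio (2⁻¹:ℝ) ⊆ Iio t := fun x hx => lt_of_lt_of_le hx ht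
    rw [hgnind m, withDensity_apply _ measurableSet_Iio, withDensity_apply _ measurableSet_Iio,
      Measure.restrict_restrict measurableSet_Iio, Measure.restrict_restrict measurableSet_Iio,
      inter_self, inter_eq_self_of_subset_right hss]
  have hIio_all : ∀ t : ℝ, (μ.withDensity gn) (Iio t) = (L.withDensity gn) (Iio t) := by
    have hmid2 : ∀ t : ℝ, 0 < t → t ≤ 2⁻¹ →
        (μ.withDensity gn) (Iio t) = (L.withDensity gn) (Iio t) := by
      intro t ht0 ht
      have htI : t ∈ Ioo (0:ℝ) 1 := ⟨ht0, lt_of_le_of_lt ht (by norm_num)⟩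
      rw [hIioval μ hint t ht (hIio μ hint hμtot t (h t htI)),
          hIioval L hintL t ht (hIio L hintL hLtot t (hLIci t htI))]
    intro t
    rcases le_or_gt t 0 with hc | hc
    · have hsub : Iio t ⊆ (Ioo (0:ℝ) 1)ᶜ := fun x hx => by
        simp only [mem_compl_iff, mem_Ioo, not_and, not_lt]
        intro hx0
        exfalso
        exact absurd (lt_of_lt_of_le (mem_Iio.1 hx) hc) (not_lt.2 hx0.le)
      rw [(withDensity_absolutelyContinuous μ gn) (measure_mono_null hsub hsupp),
          (withDensity_absolutelyContinuous L gn) (measure_mono_null hsub hsuppL)]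
    · rcases le_or_gt t 2⁻¹ with hc2 | hc2
      · exact hmid2 t hc hc2
      · rw [hlown μ t hc2.le, hlown L t hc2.le]
        exact hmid2 2⁻¹ (by norm_num) le_rfl
  have hunivn : (μ.withDensity gn) univ = (L.withDensity gn) univ := by
    have h1 : ∀ m : Measure ℝ, m ((Ioo (0:ℝ) 1)ᶜ) = 0 →
        (m.withDensity gn) univ = (m.withDensity gn) (Iio 1) := by
      intro m hm
      have hu : (univ : Set ℝ) = Iio 1 ∪ Ici 1 := Iio_union_Ici.symm
      have hsub : Ici (1:ℝ) ⊆ (Ioo (0:ℝ) 1)ᶜ := fun x hx => by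
        simp only [mem_compl_iff, mem_Ioo, not_and, not_lt]
        intro _
        exact mem_Ici.1 hx
      have h0 : (m.withDensity gn) (Ici (1:ℝ)) = 0 :=
        (withDensity_absolutelyContinuous m gn) (measure_mono_null hsub hm)
      rw [hu, measure_union (Iio_disjoint_Ici le_rfl) measurableSet_Ici, h0, add_zero]
    rw [h1 μ hsupp, h1 L hsuppL, hIio_all 1]
  have hIci_alln : ∀ t : ℝ, (μ.withDensity gn) (Ici t) = (L.withDensity gn) (Ici t) := by
    intro t
    rw [← compl_Iio, measure_compl measurableSet_Iio (measure_ne_top _ _),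
        measure_compl measurableSet_Iio (measure_ne_top _ _), hunivn, hIio_all t]
  have hμIio2 : μ.restrict (Iio (2⁻¹:ℝ)) = L.restrict (Iio (2⁻¹:ℝ)) :=
    restrict_eq_of_withDensity_eq μ L hgnm measurableSet_Iio hgn0 hgntop
      (Measure.ext_of_Ici _ _ hIci_alln)

  -- the atom at 1/2 vanishes
  have happly : ∀ (s' : Set ℝ), MeasurableSet s' → μ.restrict s' = L.restrict s' →
      (v : ℝ≥0∞) → volume (s' ∩ Ioo (0:ℝ) 1) = v → μ s' = v := by
    intro s' hs' hres v hv
    have := congrArg (fun m : Measure ℝ => m s') hres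
    rw [Measure.restrict_apply hs', inter_self, Measure.restrict_apply hs',
      inter_self, hLdef, Measure.restrict_apply hs', hv] at this
    exact this
  have hIioap : μ (Iio (2⁻¹:ℝ)) = ENNReal.ofReal 2⁻¹ := by
    refine happly _ measurableSet_Iio hμIio2 _ ?_
    have he : Iio (2⁻¹:ℝ) ∩ Ioo 0 1 = Ioo (0:ℝ) 2⁻¹ := by
      ext x
      simp only [mem_inter_iff, mem_Iio, mem_Ioo]
      constructor
      · rintro ⟨h1, h2, h3⟩; exact ⟨h2, h1⟩
      · rintro ⟨h1, h2⟩; exact ⟨h2, h1, by linarith⟩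
    rw [he, Real.volume_Ioo]
    norm_num
  have hIoiap : μ (Ioi (2⁻¹:ℝ)) = ENNReal.ofReal 2⁻¹ := by
    refine happly _ measurableSet_Ioi hμIoi _ ?_
    have he : Ioi (2⁻¹:ℝ) ∩ Ioo 0 1 = Ioo (2⁻¹:ℝ) 1 := by
      ext x
      simp only [mem_inter_iff, mem_Ioi, mem_Ioo]
      constructor
      · rintro ⟨h1, h2, h3⟩; exact ⟨h1, h3⟩
      · rintro ⟨h1, h2⟩; exact ⟨h1, by linarith, h2⟩
    rw [he, Real.volume_Ioo]
    norm_num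
  have hatom : μ {(2⁻¹:ℝ)} = 0 := by
    have hd : Disjoint (Iio (2⁻¹:ℝ)) (Ioi 2⁻¹) :=
      disjoint_left.2 fun x hx hx' => absurd (mem_Iio.1 hx) (not_lt.2 (le_of_lt (mem_Ioi.1 hx')))
    have hu : μ (Iio (2⁻¹:ℝ) ∪ Ioi 2⁻¹) = 1 := by
      rw [measure_union hd measurableSet_Ioi, hIioap, hIoiap, ← ENNReal.ofReal_add (by norm_num) (by norm_num)]
      norm_num
    have hc : ({(2⁻¹:ℝ)} : Set ℝ) = (Iio 2⁻¹ ∪ Ioi 2⁻¹)ᶜ := by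
      rw [Iio_union_Ioi, compl_compl]
    rw [hc, measure_compl (measurableSet_Iio.union measurableSet_Ioi) (measure_ne_top _ _), hu,
      measure_univ, tsub_self]
  have hLatom : L {(2⁻¹:ℝ)} = 0 := by
    rw [hLdef, Measure.restrict_apply (measurableSet_singleton _)]
    exact measure_mono_null inter_subset_left (Real.volume_singleton)
  have hdecomp : ∀ m : Measure ℝ, m {(2⁻¹:ℝ)} = 0 →
      m = m.restrict (Iio 2⁻¹) + m.restrict (Ioi 2⁻¹) := by
    intro m hm
    have h1 : m.restrict (Iio (2⁻¹:ℝ)) + m.restrict (Ici 2⁻¹) = m := by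
      rw [← compl_Iio]
      exact Measure.restrict_add_restrict_compl measurableSet_Iio
    have hci : Ici (2⁻¹:ℝ) = {(2⁻¹:ℝ)} ∪ Ioi 2⁻¹ := by
      ext x
      simp only [mem_Ici, mem_union, mem_singleton_iff, mem_Ioi]
      constructor
      · intro hx
        rcases eq_or_lt_of_le hx with h' | h'
        · exact Or.inl h'.symm
        · exact Or.inr h'
      · rintro (h' | h')
        · exact h'.ge
        · exact h'.le
    have h2 : m.restrict (Ici (2⁻¹:ℝ)) = m.restrict (Ioi 2⁻¹) := by
      rw [hci, Measure.restrict_union (disjoint_left.2 fun x hx hx' =>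
        absurd (mem_singleton_iff.1 hx) (ne_of_lt (mem_Ioi.1 hx')).symm) measurableSet_Ioi,
        Measure.restrict_eq_zero.2 hm, zero_add]
    rw [← h2]
    exact h1.symm
  rw [hdecomp μ hatom, hdecomp L hLatom, hμIio2, hμIoi]

/-- **Corollary 1**: A random variable `U` taking values in `(0,1)` is uniformly
distributed on `(0,1)` if and only if `E[(2U−1)·1{U ≥ t}] − t(1−t) = 0` for every
`t ∈ (0,1)`. -/
theorem uniform_char_expectation
    {Ω : Type*} [MeasurableSpace Ω] (ℙ : Measure Ω) [IsProbabilityMeasure ℙ]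
    (U : Ω → ℝ) (hU : Measurable U) (hrange : ∀ ω, U ω ∈ Set.Ioo (0 : ℝ) 1) :
    ℙ.map U = volume.restrict (Set.Ioo (0 : ℝ) 1) ↔
      ∀ t ∈ Set.Ioo (0 : ℝ) 1,
        (∫ ω in {ω | t ≤ U ω}, (2 * U ω - 1) ∂ℙ) - t * (1 - t) = 0 := by
  have hfm : Measurable (fun x : ℝ => 2 * x - 1) := by fun_prop
  have transfer : ∀ t : ℝ,
      ∫ ω in {ω | t ≤ U ω}, (2 * U ω - 1) ∂ℙ = ∫ x in Ici t, (2 * x - 1) ∂(ℙ.map U) := by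
    intro t
    rw [setIntegral_map measurableSet_Ici hfm.aestronglyMeasurable hU.aemeasurable]
    rfl
  constructor
  · intro hmap t ht
    rw [sub_eq_zero, transfer t, hmap]
    exact leb_Ici t ht.1 ht.2.le
  · intro hE
    haveI : IsProbabilityMeasure (ℙ.map U) := Measure.isProbabilityMeasure_map hU.aemeasurable
    refine uniform_of_integral (ℙ.map U) ?_ ?_
    · rw [Measure.map_apply hU measurableSet_Ioo.compl]
      have he : U ⁻¹' (Ioo (0:ℝ) 1)ᶜ = ∅ := by
        ext ω
        simp [hrange ω]
      rw [he]
      exact measure_empty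
    · intro t ht
      have := hE t ht
      rw [← transfer t]
      linarith
end

section
/- For any n ≥ 1 and any real numbers u_1,…,u_n ∈ (0,1), the identity n·∫₀¹ | (1/n)·Σ_{j=1}^n (2u_j−1)·1{u_j ≥ t} − t(1−t) |² dt = (1/n)·Σ_{j=1}^n Σ_{k=1}^n (4u_j u_k − 2(u_j+u_k) + 1)·min(u_j,u_k) − (1/3)·Σ_{j=1}^n (2u_j−1)·u_j²·(3−2u_j) + n/30 holds. -/
open MeasureTheory Set Finset

lemma aux_ind_eq (a : ℝ) (p : ℝ → ℝ) :
    (fun t => (if t ≤ a then (1:ℝ) else 0) * p t) = (Set.Iic a).indicator p := by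
  funext t
  by_cases h : t ≤ a <;> simp [Set.indicator, h]

lemma aux_integrable (a : ℝ) (p : ℝ → ℝ) (hp : Continuous p) :
    IntegrableOn (fun t => (if t ≤ a then (1:ℝ) else 0) * p t) (Set.Ioo 0 1) := by
  rw [aux_ind_eq]
  exact ((hp.integrableOn_Icc (a := 0) (b := 1)).mono_set Set.Ioo_subset_Icc_self).indicator
    measurableSet_Iic

lemma aux_integral (a : ℝ) (ha : a ∈ Set.Ioo (0:ℝ) 1) (p : ℝ → ℝ) :
    ∫ t in Set.Ioo (0:ℝ) 1, (if t ≤ a then (1:ℝ) else 0) * p t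
      = ∫ t in (0:ℝ)..a, p t := by
  rw [show (fun t => (if t ≤ a then (1:ℝ) else 0) * p t) = (Set.Iic a).indicator p from
    aux_ind_eq a p, MeasureTheory.integral_indicator measurableSet_Iic,
    Measure.restrict_restrict measurableSet_Iic]
  have hset : Set.Iic a ∩ Set.Ioo (0:ℝ) 1 = Set.Ioc 0 a := by
    ext t
    simp only [Set.mem_inter_iff, Set.mem_Ioo, Set.mem_Iic, Set.mem_Ioc]
    constructor
    · rintro ⟨h3, h1, _⟩; exact ⟨h1, h3⟩
    · rintro ⟨h1, h2⟩; exact ⟨h2, h1, lt_of_le_of_lt h2 ha.2⟩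
  rw [hset, intervalIntegral.integral_of_le ha.1.le]

lemma int_one (a : ℝ) (ha : a ∈ Set.Ioo (0:ℝ) 1) :
    ∫ t in Set.Ioo (0:ℝ) 1, (if t ≤ a then (1:ℝ) else 0) = a := by
  have := aux_integral a ha (fun _ => 1)
  simp only [mul_one] at this
  rw [this]
  simp

lemma int_tp (a : ℝ) (ha : a ∈ Set.Ioo (0:ℝ) 1) :
    ∫ t in Set.Ioo (0:ℝ) 1, (if t ≤ a then (1:ℝ) else 0) * (t * (1 - t))
      = a^2/2 - a^3/3 := by
  rw [aux_integral a ha]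
  have h1 : ∫ t in (0:ℝ)..a, t*(1-t) = ∫ t in (0:ℝ)..a, (t - t^2) := by
    apply intervalIntegral.integral_congr; intro t _; ring
  rw [h1, intervalIntegral.integral_sub (intervalIntegral.intervalIntegrable_id)
    (intervalIntegral.intervalIntegrable_pow 2), integral_id, integral_pow]
  ring

lemma int_sq : ∫ t in Set.Ioo (0:ℝ) 1, (t * (1 - t))^2 = 1/30 := by
  rw [← MeasureTheory.integral_Ioc_eq_integral_Ioo,
    ← intervalIntegral.integral_of_le (zero_le_one)]
  have h1 : ∫ t in (0:ℝ)..1, (t*(1-t))^2 = ∫ t in (0:ℝ)..1, (t^2 - 2*t^3 + t^4) := by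
    apply intervalIntegral.integral_congr; intro t _; ring
  rw [h1]
  rw [intervalIntegral.integral_add (((intervalIntegral.intervalIntegrable_pow 2)).sub
      (((intervalIntegral.intervalIntegrable_pow 3)).const_mul 2))
      (intervalIntegral.intervalIntegrable_pow 4),
    intervalIntegral.integral_sub (intervalIntegral.intervalIntegrable_pow 2)
      ((intervalIntegral.intervalIntegrable_pow 3).const_mul 2),
    intervalIntegral.integral_const_mul, integral_pow, integral_pow, integral_pow]
  norm_num

/-- **Computable form of the test statistic `T_n`**: for `u_1, …, u_n ∈ (0,1)`,
`n·∫₀¹ |(1/n)·Σ_j (2u_j−1)·1{u_j ≥ t} − t(1−t)|² dt`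
equals
`(1/n)·Σ_j Σ_k (4u_ju_k − 2(u_j+u_k) + 1)·min(u_j,u_k) − (1/3)·Σ_j (2u_j−1)·u_j²·(3−2u_j) + n/30`. -/
theorem test_statistic_computable_form
    (n : ℕ) (hn : 1 ≤ n) (u : Fin n → ℝ) (hu : ∀ j, u j ∈ Set.Ioo (0 : ℝ) 1) :
    (n : ℝ) * ∫ t in Set.Ioo (0 : ℝ) 1,
        |(1 / (n : ℝ)) * ∑ j, (2 * u j - 1) * (if t ≤ u j then (1 : ℝ) else 0)
          - t * (1 - t)| ^ 2
      = (1 / (n : ℝ)) * ∑ j, ∑ k,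
            (4 * u j * u k - 2 * (u j + u k) + 1) * min (u j) (u k)
        - (1 / 3) * ∑ j, (2 * u j - 1) * (u j) ^ 2 * (3 - 2 * u j)
        + (n : ℝ) / 30 := by
  have hn0 : (n : ℝ) ≠ 0 := Nat.cast_ne_zero.mpr (by omega)
  -- integrability helpers
  have Iind : ∀ a : ℝ, IntegrableOn (fun t => (if t ≤ a then (1:ℝ) else 0))
      (Set.Ioo 0 1) := by
    intro a
    have := aux_integrable a (fun _ => 1) continuous_const
    simpa using this
  have Iip : ∀ a : ℝ, IntegrableOn (fun t => (if t ≤ a then (1:ℝ) else 0) * (t * (1 - t)))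
      (Set.Ioo 0 1) := fun a => aux_integrable a _ (by continuity)
  have Isq : IntegrableOn (fun t : ℝ => (t * (1 - t)) ^ 2) (Set.Ioo 0 1) :=
    ((by continuity : Continuous fun t : ℝ => (t * (1 - t)) ^ 2).integrableOn_Icc
      (a := 0) (b := 1)).mono_set Set.Ioo_subset_Icc_self
  -- pointwise expansion
  have key : ∀ t : ℝ,
      |(1 / (n : ℝ)) * ∑ j, (2 * u j - 1) * (if t ≤ u j then (1 : ℝ) else 0)
          - t * (1 - t)| ^ 2
      = (1/(n:ℝ))^2 * (∑ j, ∑ k, ((2 * u j - 1) * (2 * u k - 1))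
            * (if t ≤ min (u j) (u k) then (1:ℝ) else 0))
        - (2/(n:ℝ)) * (∑ j, (2 * u j - 1)
            * ((if t ≤ u j then (1:ℝ) else 0) * (t * (1 - t))))
        + (t * (1 - t)) ^ 2 := by
    intro t
    rw [sq_abs]
    have expand : (∑ j, (2 * u j - 1) * (if t ≤ u j then (1:ℝ) else 0)) ^ 2
        = ∑ j, ∑ k, ((2 * u j - 1) * (2 * u k - 1))
            * (if t ≤ min (u j) (u k) then (1:ℝ) else 0) := by
      rw [sq, Finset.sum_mul_sum]
      refine Finset.sum_congr rfl fun j _ => Finset.sum_congr rfl fun k _ => ?_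
      by_cases h1 : t ≤ u j <;> by_cases h2 : t ≤ u k <;>
        simp [h1, h2, le_min_iff]
    rw [← expand]
    have hB : ∑ j, (2 * u j - 1) * ((if t ≤ u j then (1:ℝ) else 0) * (t * (1 - t)))
        = (∑ j, (2 * u j - 1) * (if t ≤ u j then (1:ℝ) else 0)) * (t * (1 - t)) := by
      rw [Finset.sum_mul]; exact Finset.sum_congr rfl fun j _ => by ring
    rw [hB]; ring
  simp only [key]
  -- integrability of the assembled pieces
  have IA : IntegrableOn (fun t => ∑ j, ∑ k, ((2 * u j - 1) * (2 * u k - 1))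
      * (if t ≤ min (u j) (u k) then (1:ℝ) else 0)) (Set.Ioo 0 1) :=
    integrable_finset_sum _ fun j _ =>
      integrable_finset_sum _ fun k _ => (Iind _).const_mul _
  have IB : IntegrableOn (fun t => ∑ j, (2 * u j - 1)
      * ((if t ≤ u j then (1:ℝ) else 0) * (t * (1 - t)))) (Set.Ioo 0 1) :=
    integrable_finset_sum _ fun j _ => (Iip (u j)).const_mul _
  have IA' : IntegrableOn (fun t => (1/(n:ℝ))^2 * ∑ j, ∑ k, ((2 * u j - 1) * (2 * u k - 1))
      * (if t ≤ min (u j) (u k) then (1:ℝ) else 0)) (Set.Ioo 0 1) := IA.const_mul _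
  have IB' : IntegrableOn (fun t => (2/(n:ℝ)) * ∑ j, (2 * u j - 1)
      * ((if t ≤ u j then (1:ℝ) else 0) * (t * (1 - t)))) (Set.Ioo 0 1) := IB.const_mul _
  have IAB : IntegrableOn (fun t => (1/(n:ℝ))^2 * (∑ j, ∑ k, ((2 * u j - 1) * (2 * u k - 1))
      * (if t ≤ min (u j) (u k) then (1:ℝ) else 0)) - (2/(n:ℝ)) * (∑ j, (2 * u j - 1)
      * ((if t ≤ u j then (1:ℝ) else 0) * (t * (1 - t))))) (Set.Ioo 0 1) := IA'.sub IB'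
  rw [MeasureTheory.integral_add IAB Isq,
    MeasureTheory.integral_sub IA' IB',
    MeasureTheory.integral_const_mul, MeasureTheory.integral_const_mul, int_sq]
  have hA : ∫ t in Set.Ioo (0:ℝ) 1, ∑ j, ∑ k, ((2 * u j - 1) * (2 * u k - 1))
      * (if t ≤ min (u j) (u k) then (1:ℝ) else 0)
      = ∑ j, ∑ k, ((2 * u j - 1) * (2 * u k - 1)) * min (u j) (u k) := by
    rw [MeasureTheory.integral_finset_sum _ (fun j _ =>
      integrable_finset_sum _ fun k _ => (Iind _).const_mul _)]
    refine Finset.sum_congr rfl fun j _ => ?_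
    rw [MeasureTheory.integral_finset_sum _ (fun k _ => (Iind _).const_mul _)]
    refine Finset.sum_congr rfl fun k _ => ?_
    rw [MeasureTheory.integral_const_mul,
      int_one _ ⟨lt_min (hu j).1 (hu k).1, min_lt_iff.mpr (Or.inl (hu j).2)⟩]
  have hB : ∫ t in Set.Ioo (0:ℝ) 1, ∑ j, (2 * u j - 1)
      * ((if t ≤ u j then (1:ℝ) else 0) * (t * (1 - t)))
      = ∑ j, (2 * u j - 1) * ((u j)^2/2 - (u j)^3/3) := by
    rw [MeasureTheory.integral_finset_sum _ (fun j _ => (Iip (u j)).const_mul _)]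
    refine Finset.sum_congr rfl fun j _ => ?_
    rw [show (fun t => (2 * u j - 1) * ((if t ≤ u j then (1:ℝ) else 0) * (t * (1 - t))))
        = (fun t => (2 * u j - 1) * ((fun s => (if s ≤ u j then (1:ℝ) else 0) * (s * (1 - s))) t))
      from rfl, MeasureTheory.integral_const_mul, int_tp _ (hu j)]
  rw [hA, hB]
  have e1 : ∑ j, ∑ k, ((2 * u j - 1) * (2 * u k - 1)) * min (u j) (u k)
      = ∑ j, ∑ k, (4 * u j * u k - 2 * (u j + u k) + 1) * min (u j) (u k) :=
    Finset.sum_congr rfl fun j _ => Finset.sum_congr rfl fun k _ => by ring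
  have e2 : ∑ j, (2 * u j - 1) * (u j) ^ 2 * (3 - 2 * u j)
      = 6 * ∑ j, (2 * u j - 1) * ((u j)^2/2 - (u j)^3/3) := by
    rw [Finset.mul_sum]; exact Finset.sum_congr rfl fun j _ => by ring
  rw [e1, e2]
  field_simp
  ring
end

section
/- Define the kernel K_Z(s,t) = (1 − (2·max(s,t) − 1)³)/6 − s·t·(1−s)·(1−t) for s,t ∈ (0,1). Then 2·∫₀¹∫₀¹ K_Z(s,t)² ds dt = 109/4050. -/
open MeasureTheory Set

lemma ip9 (a b c0 c1 c2 c3 c4 c5 c6 c7 c8 : ℝ) :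
    ∫ x in a..b, (c0 + c1*x + c2*x^2 + c3*x^3 + c4*x^4 + c5*x^5 + c6*x^6 + c7*x^7 + c8*x^8)
      = (c0*b + c1/2*b^2 + c2/3*b^3 + c3/4*b^4 + c4/5*b^5 + c5/6*b^6 + c6/7*b^7 + c7/8*b^8 + c8/9*b^9)
        - (c0*a + c1/2*a^2 + c2/3*a^3 + c3/4*a^4 + c4/5*a^5 + c5/6*a^6 + c6/7*a^7 + c7/8*a^8 + c8/9*a^9) := by
  have h : ∀ x : ℝ, HasDerivAt
      (fun x : ℝ => c0*x + c1/2*x^2 + c2/3*x^3 + c3/4*x^4 + c4/5*x^5 + c5/6*x^6 + c6/7*x^7 + c7/8*x^8 + c8/9*x^9)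
      (c0 + c1*x + c2*x^2 + c3*x^3 + c4*x^4 + c5*x^5 + c6*x^6 + c7*x^7 + c8*x^8) x := by
    intro x
    have h' := ((((((((((hasDerivAt_id x).const_mul c0).add
      ((hasDerivAt_pow 2 x).const_mul (c1/2))).add
      ((hasDerivAt_pow 3 x).const_mul (c2/3))).add
      ((hasDerivAt_pow 4 x).const_mul (c3/4))).add
      ((hasDerivAt_pow 5 x).const_mul (c4/5))).add
      ((hasDerivAt_pow 6 x).const_mul (c5/6))).add
      ((hasDerivAt_pow 7 x).const_mul (c6/7))).add
      ((hasDerivAt_pow 8 x).const_mul (c7/8))).add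
      ((hasDerivAt_pow 9 x).const_mul (c8/9)))
    exact h'.congr_deriv (by push_cast; ring)
  rw [intervalIntegral.integral_eq_sub_of_hasDerivAt (fun x _ => h x)
    ((Continuous.intervalIntegrable (by fun_prop) a b))]

/-- The covariance kernel of the limiting Gaussian process. -/
noncomputable def KZ (s t : ℝ) : ℝ :=
  (1 - (2 * max s t - 1) ^ 3) / 6 - s * t * (1 - s) * (1 - t)

lemma KZ_cont (s : ℝ) : Continuous fun t => KZ s t ^ 2 := by
  unfold KZ; fun_prop

lemma inner_eval (s : ℝ) (hs : s ∈ Set.Ioo (0:ℝ) 1) :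
    (∫ t in Set.Ioo (0:ℝ) 1, KZ s t ^ 2)
      = 2/63 + (-1/18)*s + (-11/45)*s^2 + (67/45)*s^3 + (-33/10)*s^4 + (23/6)*s^5
        + (-35/18)*s^6 + (-16/63)*s^7 + (4/9)*s^8 := by
  obtain ⟨hs0, hs1⟩ := hs
  have hI : ∀ a b : ℝ, IntervalIntegrable (fun t => KZ s t ^ 2) volume a b :=
    fun a b => (KZ_cont s).intervalIntegrable a b
  rw [← MeasureTheory.integral_Ioc_eq_integral_Ioo,
    ← intervalIntegral.integral_of_le (zero_le_one),
    ← intervalIntegral.integral_add_adjacent_intervals (hI 0 s) (hI s 1)]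
  have e1 : (∫ t in (0:ℝ)..s, KZ s t ^ 2)
      = ∫ t in (0:ℝ)..s,
        ((1/9 - 2/3*s + 7/3*s^2 - 44/9*s^3 + 20/3*s^4 - 16/3*s^5 + 16/9*s^6)
          + (-2/3*s + 8/3*s^2 - 6*s^3 + 20/3*s^4 - 8/3*s^5)*t
          + (2/3*s - 5/3*s^2 + 4*s^3 - 17/3*s^4 + 8/3*s^5)*t^2
          + (-2*s^2 + 4*s^3 - 2*s^4)*t^3
          + (s^2 - 2*s^3 + s^4)*t^4
          + 0*t^5 + 0*t^6 + 0*t^7 + 0*t^8) := by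
    apply intervalIntegral.integral_congr
    intro t ht
    rw [Set.uIcc_of_le hs0.le] at ht
    have hmax : max s t = s := max_eq_left ht.2
    simp only [KZ, hmax]
    ring
  have e2 : (∫ t in s..(1:ℝ), KZ s t ^ 2)
      = ∫ t in s..(1:ℝ),
        ((1/9 : ℝ)
          + (-2/3 - 2/3*s + 2/3*s^2)*t
          + (7/3 + 8/3*s - 5/3*s^2 - 2*s^3 + s^4)*t^2
          + (-44/9 - 6*s + 4*s^2 + 4*s^3 - 2*s^4)*t^3
          + (20/3 + 20/3*s - 17/3*s^2 - 2*s^3 + s^4)*t^4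
          + (-16/3 - 8/3*s + 8/3*s^2)*t^5
          + (16/9)*t^6 + 0*t^7 + 0*t^8) := by
    apply intervalIntegral.integral_congr
    intro t ht
    rw [Set.uIcc_of_le hs1.le] at ht
    have hmax : max s t = t := max_eq_right ht.1
    simp only [KZ, hmax]
    ring
  rw [e1, e2, ip9, ip9]
  ring

/-- **Second cumulant (variance) of the limit distribution**:
`2·∫₀¹∫₀¹ K_Z(s,t)² ds dt = 109/4050`. -/
theorem second_cumulant_limit :
    2 * ∫ s in Set.Ioo (0 : ℝ) 1, ∫ t in Set.Ioo (0 : ℝ) 1, (KZ s t) ^ 2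
      = 109 / 4050 := by
  have h : (∫ s in Set.Ioo (0:ℝ) 1, ∫ t in Set.Ioo (0:ℝ) 1, KZ s t ^ 2)
      = ∫ s in Set.Ioo (0:ℝ) 1,
        (2/63 + (-1/18)*s + (-11/45)*s^2 + (67/45)*s^3 + (-33/10)*s^4 + (23/6)*s^5
          + (-35/18)*s^6 + (-16/63)*s^7 + (4/9)*s^8) :=
    setIntegral_congr_fun measurableSet_Ioo fun s hs => inner_eval s hs
  rw [h, ← MeasureTheory.integral_Ioc_eq_integral_Ioo,
    ← intervalIntegral.integral_of_le (zero_le_one), ip9]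
  norm_num
end

section
/- Define the kernel K_Z(s,t) = (1 − (2·max(s,t) − 1)³)/6 − s·t·(1−s)·(1−t) for s,t ∈ (0,1), let K_1 = K_Z, and define the iterated kernels K_j(s,t) = ∫₀¹ K_{j−1}(s,u)·K_Z(u,t) du for j ≥ 2. Then the third cumulant of the limiting null distribution, κ_3 = 2²·2!·∫₀¹ K_3(t,t) dt, equals 502883/40540500. -/
open MeasureTheory Set

/-- The iterated kernels: `Kiter 1 = K_Z` (i.e. `K_1`) and, for `j ≥ 2`,
`K_j(s,t) = ∫₀¹ K_{j−1}(s,u)·K_Z(u,t) du`.  Here `Kiter j` represents `K_j`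
(the value at `j = 0` is irrelevant). -/
noncomputable def Kiter : ℕ → ℝ → ℝ → ℝ
  | 0, s, t => KZ s t
  | 1, s, t => KZ s t
  | (j + 2), s, t => ∫ u in Set.Ioo (0 : ℝ) 1, Kiter (j + 1) s u * KZ u t

lemma ipoly (a b c0 c1 c2 c3 c4 c5 c6 c7 c8 c9 c10 c11 c12 : ℝ) :
    (∫ x in a..b, (c0 + c1 * x + c2 * x ^ 2 + c3 * x ^ 3 + c4 * x ^ 4 + c5 * x ^ 5 + c6 * x ^ 6 + c7 * x ^ 7 + c8 * x ^ 8 + c9 * x ^ 9 + c10 * x ^ 10 + c11 * x ^ 11 + c12 * x ^ 12)) =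
      (c0 / 1 * b ^ 1 + c1 / 2 * b ^ 2 + c2 / 3 * b ^ 3 + c3 / 4 * b ^ 4 + c4 / 5 * b ^ 5 + c5 / 6 * b ^ 6 + c6 / 7 * b ^ 7 + c7 / 8 * b ^ 8 + c8 / 9 * b ^ 9 + c9 / 10 * b ^ 10 + c10 / 11 * b ^ 11 + c11 / 12 * b ^ 12 + c12 / 13 * b ^ 13) - (c0 / 1 * a ^ 1 + c1 / 2 * a ^ 2 + c2 / 3 * a ^ 3 + c3 / 4 * a ^ 4 + c4 / 5 * a ^ 5 + c5 / 6 * a ^ 6 + c6 / 7 * a ^ 7 + c7 / 8 * a ^ 8 + c8 / 9 * a ^ 9 + c9 / 10 * a ^ 10 + c10 / 11 * a ^ 11 + c11 / 12 * a ^ 12 + c12 / 13 * a ^ 13) := by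
  have h : ∀ x : ℝ, HasDerivAt (fun y : ℝ => c0 / 1 * y ^ 1 + c1 / 2 * y ^ 2 + c2 / 3 * y ^ 3 + c3 / 4 * y ^ 4 + c4 / 5 * y ^ 5 + c5 / 6 * y ^ 6 + c6 / 7 * y ^ 7 + c7 / 8 * y ^ 8 + c8 / 9 * y ^ 9 + c9 / 10 * y ^ 10 + c10 / 11 * y ^ 11 + c11 / 12 * y ^ 12 + c12 / 13 * y ^ 13) (c0 + c1 * x + c2 * x ^ 2 + c3 * x ^ 3 + c4 * x ^ 4 + c5 * x ^ 5 + c6 * x ^ 6 + c7 * x ^ 7 + c8 * x ^ 8 + c9 * x ^ 9 + c10 * x ^ 10 + c11 * x ^ 11 + c12 * x ^ 12) x := by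
    intro x
    have H := ((((((((((((((hasDerivAt_pow 1 x).const_mul (c0/1)).add ((hasDerivAt_pow 2 x).const_mul (c1/2))).add ((hasDerivAt_pow 3 x).const_mul (c2/3))).add ((hasDerivAt_pow 4 x).const_mul (c3/4))).add ((hasDerivAt_pow 5 x).const_mul (c4/5))).add ((hasDerivAt_pow 6 x).const_mul (c5/6))).add ((hasDerivAt_pow 7 x).const_mul (c6/7))).add ((hasDerivAt_pow 8 x).const_mul (c7/8))).add ((hasDerivAt_pow 9 x).const_mul (c8/9))).add ((hasDerivAt_pow 10 x).const_mul (c9/10))).add ((hasDerivAt_pow 11 x).const_mul (c10/11))).add ((hasDerivAt_pow 12 x).const_mul (c11/12))).add ((hasDerivAt_pow 13 x).const_mul (c12/13)))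
    refine H.congr_deriv ?_
    push_cast; ring
  exact intervalIntegral.integral_eq_sub_of_hasDerivAt (fun x _ => h x)
    ((Continuous.intervalIntegrable (by fun_prop) a b))

noncomputable def K2poly (s t : ℝ) : ℝ :=
  (2 / 63 : ℝ) + (-1 / 36 : ℝ) * t + (-5 / 36 : ℝ) * t ^ 2 + (11 / 18 : ℝ) * t ^ 3 + (-1 : ℝ) * t ^ 4 + (1 : ℝ) * t ^ 5 + (-2 / 3 : ℝ) * t ^ 6 + (4 / 21 : ℝ) * t ^ 7 + (-1 / 36 : ℝ) * s + (1 / 30 : ℝ) * s * t + (-1 / 30 : ℝ) * s * t ^ 2 + (1 / 6 : ℝ) * s * t ^ 3 + (-7 / 12 : ℝ) * s * t ^ 4 + (2 / 3 : ℝ) * s * t ^ 5 + (-2 / 9 : ℝ) * s * t ^ 6 + (-5 / 36 : ℝ) * s ^ 2 + (7 / 15 : ℝ) * s ^ 2 * t + (-29 / 30 : ℝ) * s ^ 2 * t ^ 2 + (1 / 2 : ℝ) * s ^ 2 * t ^ 3 + (7 / 12 : ℝ) * s ^ 2 * t ^ 4 + (-2 / 3 : ℝ) * s ^ 2 * t ^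 5 + (2 / 9 : ℝ) * s ^ 2 * t ^ 6 + (4 / 9 : ℝ) * s ^ 3 + (-7 / 6 : ℝ) * s ^ 3 * t + (5 / 2 : ℝ) * s ^ 3 * t ^ 2 + (-16 / 9 : ℝ) * s ^ 3 * t ^ 3 + (-1 / 3 : ℝ) * s ^ 4 + (5 / 12 : ℝ) * s ^ 4 * t + (-17 / 12 : ℝ) * s ^ 4 * t ^ 2 + (4 / 3 : ℝ) * s ^ 4 * t ^ 3 + (2 / 3 : ℝ) * s ^ 5 * t + (-2 / 3 : ℝ) * s ^ 5 * t ^ 2 + (-2 / 9 : ℝ) * s ^ 6 * t + (2 / 9 : ℝ) * s ^ 6 * t ^ 2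

noncomputable def K3poly (t : ℝ) : ℝ :=
  (1823 / 498960 : ℝ) + (-5 / 756 : ℝ) * t + (-179 / 8100 : ℝ) * t ^ 2 + (1639 / 14175 : ℝ) * t ^ 3 + (-10741 / 113400 : ℝ) * t ^ 4 + (-89 / 180 : ℝ) * t ^ 5 + (3019 / 1620 : ℝ) * t ^ 6 + (-2441 / 756 : ℝ) * t ^ 7 + (50131 / 15120 : ℝ) * t ^ 8 + (-1513 / 756 : ℝ) * t ^ 9 + (1921 / 3780 : ℝ) * t ^ 10 + (1208 / 10395 : ℝ) * t ^ 11 + (-212 / 2835 : ℝ) * t ^ 12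

lemma KZ_symm (s t : ℝ) : KZ s t = KZ t s := by
  unfold KZ; rw [max_comm]; ring

lemma Kiter2_symm (s t : ℝ) : Kiter 2 s t = Kiter 2 t s := by
  show (∫ u in Set.Ioo (0:ℝ) 1, KZ s u * KZ u t) = ∫ u in Set.Ioo (0:ℝ) 1, KZ t u * KZ u s
  congr 1; funext u
  rw [KZ_symm s u, KZ_symm u t]; ring

lemma K2_eval (s t : ℝ) (hs : 0 < s) (hst : s ≤ t) (ht : t < 1) :
    Kiter 2 s t = K2poly s t := by
  have hc : Continuous fun u : ℝ => KZ s u * KZ u t := by unfold KZ; fun_prop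
  have hint : ∀ a b : ℝ, IntervalIntegrable (fun u => KZ s u * KZ u t) volume a b :=
    fun a b => hc.intervalIntegrable a b
  have h0 : Kiter 2 s t = ∫ u in (0:ℝ)..1, KZ s u * KZ u t := by
    show (∫ u in Set.Ioo (0:ℝ) 1, KZ s u * KZ u t) = _
    rw [intervalIntegral.integral_of_le zero_le_one, MeasureTheory.integral_Ioc_eq_integral_Ioo]
  have e1 : (∫ u in (0:ℝ)..s, KZ s u * KZ u t) = (1 / 9 : ℝ) * s + (-1 / 3 : ℝ) * s * t + (2 / 3 : ℝ) * s * t ^ 2 + (-4 / 9 : ℝ) * s * t ^ 3 + (-1 / 3 : ℝ) * s ^ 2 + (5 / 6 : ℝ) * s ^ 2 * t + (-11 / 6 : ℝ) * s ^ 2 * t ^ 2 + (4 / 3 : ℝ) * s ^ 2 * t ^ 3 + (1 / 2 : ℝ) * s ^ 3 + (-8 / 9 : ℝ) * s ^ 3 * t + (43 / 18 : ℝ) * s ^ 3 * t ^ 2 + (-2 : ℝ) * s ^ 3 * t ^ 3 + (-1 / 6 : ℝ) * s ^ 4 + (-1 / 2 : ℝ) * s ^ 4 * t + (2 / 3 :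 ℝ) * s ^ 4 * t ^ 3 + (-1 / 9 : ℝ) * s ^ 5 + (5 / 6 : ℝ) * s ^ 5 * t + (-7 / 6 : ℝ) * s ^ 5 * t ^ 2 + (4 / 9 : ℝ) * s ^ 5 * t ^ 3 + (23 / 90 : ℝ) * s ^ 6 * t + (-23 / 90 : ℝ) * s ^ 6 * t ^ 2 + (-1 / 5 : ℝ) * s ^ 7 * t + (1 / 5 : ℝ) * s ^ 7 * t ^ 2 := by
    rw [intervalIntegral.integral_congr
      (g := fun x => ((1 / 9 : ℝ) + (-1 / 3 : ℝ) * t + (2 / 3 : ℝ) * t ^ 2 + (-4 / 9 : ℝ) * t ^ 3 + (-1 / 3 : ℝ) * s + (1 : ℝ) * s * t + (-2 : ℝ) * s * t ^ 2 + (4 / 3 : ℝ) * s * t ^ 3 + (2 / 3 : ℝ) * s ^ 2 + (-2 : ℝ) * s ^ 2 * t + (4 : ℝ) * s ^ 2 * t ^ 2 + (-8 / 3 : ℝ) * s ^ 2 * t ^ 3 + (-4 / 9 : ℝ) * s ^ 3 + (4 / 3 : ℝ) * s ^ 3 * t + (-8 / 3 : ℝ) * s ^ 3 * t ^ 2 +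 (16 / 9 : ℝ) * s ^ 3 * t ^ 3) + ((-1 / 3 : ℝ) * t + (1 / 3 : ℝ) * t ^ 2 + (-1 / 3 : ℝ) * s + (2 : ℝ) * s * t + (-3 : ℝ) * s * t ^ 2 + (4 / 3 : ℝ) * s * t ^ 3 + (1 / 3 : ℝ) * s ^ 2 + (-3 : ℝ) * s ^ 2 * t + (4 : ℝ) * s ^ 2 * t ^ 2 + (-4 / 3 : ℝ) * s ^ 2 * t ^ 3 + (4 / 3 : ℝ) * s ^ 3 * t + (-4 / 3 : ℝ) * s ^ 3 * t ^ 2) * x + ((1 / 3 : ℝ) * t + (-1 / 3 : ℝ) * t ^ 2 + (1 / 3 : ℝ) * s + (-1 : ℝ) * s * t + (2 : ℝ) * s * t ^ 2 + (-4 / 3 : ℝ) * s * t ^ 3 + (-1 / 3 : ℝ) * s ^ 2 + (2 : ℝ) * s ^ 2 * t + (-3 : ℝ) * s ^ 2 * t ^ 2 + (4 / 3 : ℝ) * s ^ 2 * t ^ 3 + (-4 / 3 : ℝ) * s ^ 3 * t + (4 / 3 : ℝ) * s ^ 3 * t ^ 2) * x ^ 2 + ((-2 : ℝ) * s * t + (2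 : ℝ) * s * t ^ 2 + (2 : ℝ) * s ^ 2 * t + (-2 : ℝ) * s ^ 2 * t ^ 2) * x ^ 3 + ((1 : ℝ) * s * t + (-1 : ℝ) * s * t ^ 2 + (-1 : ℝ) * s ^ 2 * t + (1 : ℝ) * s ^ 2 * t ^ 2) * x ^ 4 + ((0 : ℝ)) * x ^ 5 + ((0 : ℝ)) * x ^ 6 + ((0 : ℝ)) * x ^ 7 + ((0 : ℝ)) * x ^ 8 + ((0 : ℝ)) * x ^ 9 + ((0 : ℝ)) * x ^ 10 + ((0 : ℝ)) * x ^ 11 + ((0 : ℝ)) * x ^ 12) ?_, ipoly]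
    · ring
    · intro x hx
      rw [Set.uIcc_of_le hs.le] at hx
      simp only [KZ]
      rw [max_eq_left hx.2, max_eq_right (hx.2.trans hst)]
      ring
  have e2 : (∫ u in s..t, KZ s u * KZ u t) = (1 / 9 : ℝ) * t + (-1 / 2 : ℝ) * t ^ 2 + (11 / 9 : ℝ) * t ^ 3 + (-29 / 18 : ℝ) * t ^ 4 + (41 / 36 : ℝ) * t ^ 5 + (-5 / 36 : ℝ) * t ^ 6 + (-4 / 9 : ℝ) * t ^ 7 + (2 / 9 : ℝ) * t ^ 8 + (-1 / 9 : ℝ) * s + (1 / 3 : ℝ) * s * t + (-5 / 6 : ℝ) * s * t ^ 2 + (19 / 18 : ℝ) * s * t ^ 3 + (-1 : ℝ) * s * t ^ 4 + (1 / 2 : ℝ) * s * t ^ 5 + (23 / 90 : ℝ) * s * t ^ 6 + (-1 / 5 : ℝ) * s * t ^ 7 + (1 / 6 : ℝ) * s ^ 2 + (-1 / 3 : ℝ) * s ^ 2 * t + (1 : ℝ) * s ^ 2 * t ^ 2 + (-23 / 18 : ℝ) * s ^ 2 * t ^ 3 + (1 : ℝ) * s ^ 2 * t ^ 4 + (-1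 / 2 : ℝ) * s ^ 2 * t ^ 5 + (-23 / 90 : ℝ) * s ^ 2 * t ^ 6 + (1 / 5 : ℝ) * s ^ 2 * t ^ 7 + (-1 / 18 : ℝ) * s ^ 3 + (-5 / 18 : ℝ) * s ^ 3 * t + (1 / 9 : ℝ) * s ^ 3 * t ^ 2 + (2 / 9 : ℝ) * s ^ 3 * t ^ 3 + (-1 / 6 : ℝ) * s ^ 4 + (11 / 12 : ℝ) * s ^ 4 * t + (-17 / 12 : ℝ) * s ^ 4 * t ^ 2 + (2 / 3 : ℝ) * s ^ 4 * t ^ 3 + (1 / 9 : ℝ) * s ^ 5 + (-1 / 6 : ℝ) * s ^ 5 * t + (1 / 2 : ℝ) * s ^ 5 * t ^ 2 + (-4 / 9 : ℝ) * s ^ 5 * t ^ 3 + (-43 / 90 : ℝ) * s ^ 6 * t + (43 / 90 : ℝ) * s ^ 6 * t ^ 2 + (1 / 5 : ℝ) * s ^ 7 * t + (-1 / 5 : ℝ) * s ^ 7 * t ^ 2 := by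
    rw [intervalIntegral.integral_congr
      (g := fun x => ((1 / 9 : ℝ) + (-1 / 3 : ℝ) * t + (2 / 3 : ℝ) * t ^ 2 + (-4 / 9 : ℝ) * t ^ 3) + ((-1 / 3 : ℝ) + (2 / 3 : ℝ) * t + (-5 / 3 : ℝ) * t ^ 2 + (4 / 3 : ℝ) * t ^ 3 + (-1 / 3 : ℝ) * s + (1 : ℝ) * s * t + (-2 : ℝ) * s * t ^ 2 + (4 / 3 : ℝ) * s * t ^ 3 + (1 / 3 : ℝ) * s ^ 2 + (-1 : ℝ) * s ^ 2 * t + (2 : ℝ) * s ^ 2 * t ^ 2 + (-4 / 3 : ℝ) * s ^ 2 * t ^ 3) * x + ((2 / 3 : ℝ) + (-2 / 3 : ℝ) * t + (8 / 3 : ℝ) * t ^ 2 + (-8 / 3 : ℝ) * t ^ 3 + (1 / 3 : ℝ) * s + (1 : ℝ) * s * t ^ 2 + (-4 / 3 : ℝ) * s * t ^ 3 + (-1 / 3 : ℝ) * s ^ 2 + (-1 : ℝ) * s ^ 2 * t ^ 2 + (4 / 3 : ℝ) * s ^ 2 * t ^ 3) * x ^ 2 + ((-4 / 9 : ℝ)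 + (-5 / 3 : ℝ) * t + (1 / 3 : ℝ) * t ^ 2 + (16 / 9 : ℝ) * t ^ 3 + (-2 : ℝ) * s * t + (2 : ℝ) * s * t ^ 2 + (2 : ℝ) * s ^ 2 * t + (-2 : ℝ) * s ^ 2 * t ^ 2) * x ^ 3 + ((10 / 3 : ℝ) * t + (-10 / 3 : ℝ) * t ^ 2 + (1 : ℝ) * s * t + (-1 : ℝ) * s * t ^ 2 + (-1 : ℝ) * s ^ 2 * t + (1 : ℝ) * s ^ 2 * t ^ 2) * x ^ 4 + ((-4 / 3 : ℝ) * t + (4 / 3 : ℝ) * t ^ 2) * x ^ 5 + ((0 : ℝ)) * x ^ 6 + ((0 : ℝ)) * x ^ 7 + ((0 : ℝ)) * x ^ 8 + ((0 : ℝ)) * x ^ 9 + ((0 : ℝ)) * x ^ 10 + ((0 : ℝ)) * x ^ 11 + ((0 : ℝ)) * x ^ 12) ?_, ipoly]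
    · ring
    · intro x hx
      rw [Set.uIcc_of_le hst] at hx
      simp only [KZ]
      rw [max_eq_right hx.1, max_eq_right hx.2]
      ring
  have e3 : (∫ u in t..(1:ℝ), KZ s u * KZ u t) = (2 / 63 : ℝ) + (-5 / 36 : ℝ) * t + (13 / 36 : ℝ) * t ^ 2 + (-11 / 18 : ℝ) * t ^ 3 + (11 / 18 : ℝ) * t ^ 4 + (-5 / 36 : ℝ) * t ^ 5 + (-19 / 36 : ℝ) * t ^ 6 + (40 / 63 : ℝ) * t ^ 7 + (-2 / 9 : ℝ) * t ^ 8 + (-1 / 36 : ℝ) * s + (1 / 30 : ℝ) * s * t + (2 / 15 : ℝ) * s * t ^ 2 + (-4 / 9 : ℝ) * s * t ^ 3 + (5 / 12 : ℝ) * s * t ^ 4 + (1 / 6 : ℝ) * s * t ^ 5 + (-43 / 90 : ℝ) * s * t ^ 6 + (1 / 5 : ℝ) * s * t ^ 7 + (1 / 36 : ℝ) * s ^ 2 + (-1 / 30 : ℝ) * s ^ 2 * t + (-2 / 15 : ℝ) * s ^ 2 * t ^ 2 + (4 / 9 : ℝ) * s ^ 2 * t ^ 3 + (-5 / 12 : ℝ)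 * s ^ 2 * t ^ 4 + (-1 / 6 : ℝ) * s ^ 2 * t ^ 5 + (43 / 90 : ℝ) * s ^ 2 * t ^ 6 + (-1 / 5 : ℝ) * s ^ 2 * t ^ 7 := by
    rw [intervalIntegral.integral_congr
      (g := fun x => ((1 / 9 : ℝ)) + ((-2 / 3 : ℝ) + (-1 / 3 : ℝ) * t + (1 / 3 : ℝ) * t ^ 2 + (-1 / 3 : ℝ) * s + (1 / 3 : ℝ) * s ^ 2) * x + ((7 / 3 : ℝ) + (4 / 3 : ℝ) * t + (-4 / 3 : ℝ) * t ^ 2 + (4 / 3 : ℝ) * s + (1 : ℝ) * s * t + (-1 : ℝ) * s * t ^ 2 + (-4 / 3 : ℝ) * s ^ 2 + (-1 : ℝ) * s ^ 2 * t + (1 : ℝ) * s ^ 2 * t ^ 2) * x ^ 2 + ((-44 / 9 : ℝ) + (-3 : ℝ) * t + (3 : ℝ) * t ^ 2 + (-3 : ℝ) * s + (-2 : ℝ) * s * t + (2 : ℝ) * s * t ^ 2 + (3 : ℝ) * s ^ 2 + (2 : ℝ) * s ^ 2 * t + (-2 : ℝ) * s ^ 2 * t ^ 2) * x ^ 3 +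 ((20 / 3 : ℝ) + (10 / 3 : ℝ) * t + (-10 / 3 : ℝ) * t ^ 2 + (10 / 3 : ℝ) * s + (1 : ℝ) * s * t + (-1 : ℝ) * s * t ^ 2 + (-10 / 3 : ℝ) * s ^ 2 + (-1 : ℝ) * s ^ 2 * t + (1 : ℝ) * s ^ 2 * t ^ 2) * x ^ 4 + ((-16 / 3 : ℝ) + (-4 / 3 : ℝ) * t + (4 / 3 : ℝ) * t ^ 2 + (-4 / 3 : ℝ) * s + (4 / 3 : ℝ) * s ^ 2) * x ^ 5 + ((16 / 9 : ℝ)) * x ^ 6 + ((0 : ℝ)) * x ^ 7 + ((0 : ℝ)) * x ^ 8 + ((0 : ℝ)) * x ^ 9 + ((0 : ℝ)) * x ^ 10 + ((0 : ℝ)) * x ^ 11 + ((0 : ℝ)) * x ^ 12) ?_, ipoly]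
    · ring
    · intro x hx
      rw [Set.uIcc_of_le ht.le] at hx
      simp only [KZ]
      rw [max_eq_right (hst.trans hx.1), max_eq_left hx.1]
      ring
  rw [h0, ← intervalIntegral.integral_add_adjacent_intervals (hint 0 t) (hint t 1),
      ← intervalIntegral.integral_add_adjacent_intervals (hint 0 s) (hint s t),
      e1, e2, e3]
  unfold K2poly; ring

lemma K3_eval (t : ℝ) (ht : t ∈ Set.Ioo (0:ℝ) 1) : Kiter 3 t t = K3poly t := by
  obtain ⟨ht0, ht1⟩ := ht
  have h0 : Kiter 3 t t
      = ∫ u in Set.Ioo (0:ℝ) 1, (if u ≤ t then K2poly u t else K2poly t u) * KZ u t := by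
    show (∫ u in Set.Ioo (0:ℝ) 1, Kiter 2 t u * KZ u t) = _
    refine MeasureTheory.setIntegral_congr_fun measurableSet_Ioo fun u hu => ?_
    by_cases hut : u ≤ t
    · rw [if_pos hut, Kiter2_symm, K2_eval u t hu.1 hut ht1]
    · rw [if_neg hut, K2_eval t u ht0 (le_of_not_ge hut) hu.2]
  have hc : Continuous fun u : ℝ => (if u ≤ t then K2poly u t else K2poly t u) * KZ u t := by
    refine Continuous.mul (Continuous.if_le ?_ ?_ continuous_id continuous_const ?_) ?_
    · unfold K2poly; fun_prop
    · unfold K2poly; fun_prop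
    · intro x hx; rw [hx]
    · unfold KZ; fun_prop
  have hint : ∀ a b : ℝ, IntervalIntegrable
      (fun u => (if u ≤ t then K2poly u t else K2poly t u) * KZ u t) volume a b :=
    fun a b => hc.intervalIntegrable a b
  have e1 : (∫ u in (0:ℝ)..t, (if u ≤ t then K2poly u t else K2poly t u) * KZ u t)
      = (2 / 189 : ℝ) * t + (-23 / 504 : ℝ) * t ^ 2 + (751 / 22680 : ℝ) * t ^ 3 + (2869 / 7560 : ℝ) * t ^ 4 + (-12337 / 7560 : ℝ) * t ^ 5 + (11111 / 3240 : ℝ) * t ^ 6 + (-23081 / 5400 : ℝ) * t ^ 7 + (112669 / 37800 : ℝ) * t ^ 8 + (-69791 / 113400 : ℝ) * t ^ 9 + (-211 / 315 : ℝ) * t ^ 10 + (1187 / 2835 : ℝ) * t ^ 11 + (22 / 405 : ℝ) * t ^ 12 + (-28 / 405 : ℝ) * t ^ 13 := by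
    rw [intervalIntegral.integral_congr
      (g := fun x => ((2 / 189 : ℝ) + (-31 / 756 : ℝ) * t + (17 / 378 : ℝ) * t ^ 2 + (185 / 756 : ℝ) * t ^ 3 + (-32 / 27 : ℝ) * t ^ 4 + (74 / 27 : ℝ) * t ^ 5 + (-109 / 27 : ℝ) * t ^ 6 + (256 / 63 : ℝ) * t ^ 7 + (-20 / 7 : ℝ) * t ^ 8 + (80 / 63 : ℝ) * t ^ 9 + (-16 / 63 : ℝ) * t ^ 10) + ((-1 / 108 : ℝ) + (1 / 140 : ℝ) * t + (-17 / 420 : ℝ) * t ^ 2 + (41 / 135 : ℝ) * t ^ 3 + (-11 / 9 : ℝ) * t ^ 4 + (503 / 180 : ℝ) * t ^ 5 + (-223 / 54 : ℝ) * t ^ 6 + (4 : ℝ) * t ^ 7 + (-46 / 21 : ℝ) * t ^ 8 + (92 / 189 : ℝ) * t ^ 9) * x + ((-5 / 108 : ℝ) + (223 / 630 : ℝ) * t + (-374 / 315 : ℝ) * t ^ 2 + (298 / 135 : ℝ) * t ^ 3 + (-104 / 45 : ℝ) * t ^ 4 + (28 / 45 : ℝ) * t ^ 5 + (215 / 108 :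 ℝ) * t ^ 6 + (-28 / 9 : ℝ) * t ^ 7 + (124 / 63 : ℝ) * t ^ 8 + (-92 / 189 : ℝ) * t ^ 9) * x ^ 2 + ((4 / 27 : ℝ) + (-13 / 18 : ℝ) * t + (211 / 90 : ℝ) * t ^ 2 + (-628 / 135 : ℝ) * t ^ 3 + (106 / 15 : ℝ) * t ^ 4 + (-139 / 18 : ℝ) * t ^ 5 + (263 / 54 : ℝ) * t ^ 6 + (-16 / 9 : ℝ) * t ^ 7 + (4 / 9 : ℝ) * t ^ 8) * x ^ 3 + ((-1 / 9 : ℝ) + (-1 / 9 : ℝ) * t + (119 / 180 : ℝ) * t ^ 2 + (-353 / 180 : ℝ) * t ^ 3 + (46 / 45 : ℝ) * t ^ 4 + (103 / 36 : ℝ) * t ^ 5 + (-109 / 36 : ℝ) * t ^ 6 + (8 / 9 : ℝ) * t ^ 7 + (-2 / 9 : ℝ) * t ^ 8) * x ^ 4 + ((1 : ℝ) * t + (-13 / 4 : ℝ) * t ^ 2 + (15 / 2 : ℝ) * t ^ 3 + (-37 / 4 : ℝ) * t ^ 4 + (4 : ℝ) * t ^ 5) * x ^ 5 + ((-11 / 27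 : ℝ) * t + (41 / 108 : ℝ) * t ^ 2 + (-7 / 6 : ℝ) * t ^ 3 + (305 / 108 : ℝ) * t ^ 4 + (-44 / 27 : ℝ) * t ^ 5) * x ^ 6 + ((8 / 9 : ℝ) * t ^ 2 + (-16 / 9 : ℝ) * t ^ 3 + (8 / 9 : ℝ) * t ^ 4) * x ^ 7 + ((-2 / 9 : ℝ) * t ^ 2 + (4 / 9 : ℝ) * t ^ 3 + (-2 / 9 : ℝ) * t ^ 4) * x ^ 8 + ((0 : ℝ)) * x ^ 9 + ((0 : ℝ)) * x ^ 10 + ((0 : ℝ)) * x ^ 11 + ((0 : ℝ)) * x ^ 12) ?_, ipoly]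
    · ring
    · intro x hx
      rw [Set.uIcc_of_le ht0.le] at hx
      dsimp only
      rw [if_pos hx.2]
      simp only [K2poly, KZ]
      rw [max_eq_right hx.2]
      ring
  have e2 : (∫ u in t..(1:ℝ), (if u ≤ t then K2poly u t else K2poly t u) * KZ u t)
      = (1823 / 498960 : ℝ) + (-13 / 756 : ℝ) * t + (2669 / 113400 : ℝ) * t ^ 2 + (3119 / 37800 : ℝ) * t ^ 3 + (-6722 / 14175 : ℝ) * t ^ 4 + (8599 / 7560 : ℝ) * t ^ 5 + (-1691 / 1080 : ℝ) * t ^ 6 + (39517 / 37800 : ℝ) * t ^ 7 + (2813 / 8400 : ℝ) * t ^ 8 + (-157159 / 113400 : ℝ) * t ^ 9 + (4453 / 3780 : ℝ) * t ^ 10 + (-9433 / 31185 : ℝ) * t ^ 11 + (-122 / 945 : ℝ) * t ^ 12 + (28 / 405 : ℝ) * t ^ 13 := by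
    rw [intervalIntegral.integral_congr
      (g := fun x => ((2 / 189 : ℝ) + (-1 / 108 : ℝ) * t + (-5 / 108 : ℝ) * t ^ 2 + (4 / 27 : ℝ) * t ^ 3 + (-1 / 9 : ℝ) * t ^ 4) + ((-31 / 756 : ℝ) + (1 / 140 : ℝ) * t + (223 / 630 : ℝ) * t ^ 2 + (-13 / 18 : ℝ) * t ^ 3 + (-1 / 9 : ℝ) * t ^ 4 + (1 : ℝ) * t ^ 5 + (-11 / 27 : ℝ) * t ^ 6) * x + ((17 / 378 : ℝ) + (-17 / 420 : ℝ) * t + (-374 / 315 : ℝ) * t ^ 2 + (211 / 90 : ℝ) * t ^ 3 + (119 / 180 : ℝ) * t ^ 4 + (-13 / 4 : ℝ) * t ^ 5 + (41 / 108 : ℝ) * t ^ 6 + (8 / 9 : ℝ) * t ^ 7 + (-2 / 9 : ℝ) * t ^ 8) * x ^ 2 + ((185 / 756 : ℝ) + (41 / 135 : ℝ) * t + (298 / 135 : ℝ) * t ^ 2 + (-628 / 135 : ℝ) * t ^ 3 + (-353 / 180 : ℝ) * t ^ 4 + (15 / 2 : ℝ) * t ^ 5 + (-7 / 6 : ℝ)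 * t ^ 6 + (-16 / 9 : ℝ) * t ^ 7 + (4 / 9 : ℝ) * t ^ 8) * x ^ 3 + ((-32 / 27 : ℝ) + (-11 / 9 : ℝ) * t + (-104 / 45 : ℝ) * t ^ 2 + (106 / 15 : ℝ) * t ^ 3 + (46 / 45 : ℝ) * t ^ 4 + (-37 / 4 : ℝ) * t ^ 5 + (305 / 108 : ℝ) * t ^ 6 + (8 / 9 : ℝ) * t ^ 7 + (-2 / 9 : ℝ) * t ^ 8) * x ^ 4 + ((74 / 27 : ℝ) + (503 / 180 : ℝ) * t + (28 / 45 : ℝ) * t ^ 2 + (-139 / 18 : ℝ) * t ^ 3 + (103 / 36 : ℝ) * t ^ 4 + (4 : ℝ) * t ^ 5 + (-44 / 27 : ℝ) * t ^ 6) * x ^ 5 + ((-109 / 27 : ℝ) + (-223 / 54 : ℝ) * t + (215 / 108 : ℝ) * t ^ 2 + (263 / 54 : ℝ) * t ^ 3 + (-109 / 36 : ℝ) * t ^ 4) * x ^ 6 + ((256 / 63 : ℝ) + (4 : ℝ) * t + (-28 / 9 : ℝ) * t ^ 2 + (-16 / 9 : ℝ) * t ^ 3 + (8 / 9 : ℝ)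 * t ^ 4) * x ^ 7 + ((-20 / 7 : ℝ) + (-46 / 21 : ℝ) * t + (124 / 63 : ℝ) * t ^ 2 + (4 / 9 : ℝ) * t ^ 3 + (-2 / 9 : ℝ) * t ^ 4) * x ^ 8 + ((80 / 63 : ℝ) + (92 / 189 : ℝ) * t + (-92 / 189 : ℝ) * t ^ 2) * x ^ 9 + ((-16 / 63 : ℝ)) * x ^ 10 + ((0 : ℝ)) * x ^ 11 + ((0 : ℝ)) * x ^ 12) ?_, ipoly]
    · ring
    · intro x hx
      rw [Set.uIcc_of_le ht1.le] at hx
      dsimp only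
      by_cases hxt : x ≤ t
      · have hx_eq : x = t := le_antisymm hxt hx.1
        subst hx_eq
        rw [if_pos le_rfl]
        simp only [K2poly, KZ]
        rw [max_self]
        ring
      · rw [if_neg hxt]
        simp only [K2poly, KZ]
        rw [max_eq_left hx.1]
        ring
  have h1 : (∫ u in Set.Ioo (0:ℝ) 1, (if u ≤ t then K2poly u t else K2poly t u) * KZ u t)
      = ∫ u in (0:ℝ)..1, (if u ≤ t then K2poly u t else K2poly t u) * KZ u t := by
    rw [intervalIntegral.integral_of_le zero_le_one, MeasureTheory.integral_Ioc_eq_integral_Ioo]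
  rw [h0, h1, ← intervalIntegral.integral_add_adjacent_intervals (hint 0 t) (hint t 1), e1, e2]
  unfold K3poly; ring

/-- **Third cumulant of the limit distribution**:
`κ₃ = 2²·2!·∫₀¹ K₃(t,t) dt = 502883/40540500`. -/
theorem third_cumulant_limit :
    (2 : ℝ) ^ 2 * (Nat.factorial 2 : ℝ) * ∫ t in Set.Ioo (0 : ℝ) 1, Kiter 3 t t
      = 502883 / 40540500 := by
  have h : Set.EqOn (fun t => Kiter 3 t t) K3poly (Set.Ioo (0:ℝ) 1) := fun t ht => K3_eval t ht
  rw [MeasureTheory.setIntegral_congr_fun measurableSet_Ioo h]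
  have h1 : (∫ t in Set.Ioo (0:ℝ) 1, K3poly t) = ∫ t in (0:ℝ)..1, K3poly t := by
    rw [intervalIntegral.integral_of_le zero_le_one, MeasureTheory.integral_Ioc_eq_integral_Ioo]
  rw [h1, intervalIntegral.integral_congr
    (g := fun x => ((1823 / 498960 : ℝ)) + ((-5 / 756 : ℝ)) * x + ((-179 / 8100 : ℝ)) * x ^ 2 + ((1639 / 14175 : ℝ)) * x ^ 3 + ((-10741 / 113400 : ℝ)) * x ^ 4 + ((-89 / 180 : ℝ)) * x ^ 5 + ((3019 / 1620 : ℝ)) * x ^ 6 + ((-2441 / 756 : ℝ)) * x ^ 7 + ((50131 / 15120 : ℝ)) * x ^ 8 + ((-1513 / 756 : ℝ)) * x ^ 9 + ((1921 / 3780 : ℝ)) * x ^ 10 + ((1208 / 10395 : ℝ)) * x ^ 11 + ((-212 / 2835 : ℝ)) * x ^ 12)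
    (fun x hx => by simp only [K3poly]; try ring), ipoly]
  norm_num [Nat.factorial]
end

section
/- Define the kernel K_Z(s,t) = (1 − (2·max(s,t) − 1)³)/6 − s·t·(1−s)·(1−t) for s,t ∈ (0,1), let K_1 = K_Z, and define the iterated kernels K_j(s,t) = ∫₀¹ K_{j−1}(s,u)·K_Z(u,t) du for j ≥ 2. Then the fourth cumulant of the limiting null distribution, κ_4 = 2³·3!·∫₀¹ K_4(t,t) dt, equals 200311667/23260111875. -/
set_option maxHeartbeats 4000000

open MeasureTheory Set

noncomputable def Klo (x y : ℝ) : ℝ := (1 - (2 * y - 1) ^ 3) / 6 - x * y * (1 - x) * (1 - y)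

lemma KZ_symm_s6 (x y : ℝ) : KZ x y = KZ y x := by unfold KZ; rw [max_comm]; ring

lemma KZ_eq_Klo {x y : ℝ} (h : x ≤ y) : KZ x y = Klo x y := by
  unfold KZ Klo; rw [max_eq_right h]

lemma KZ_eq_Klo' {x y : ℝ} (h : y ≤ x) : KZ x y = Klo y x := by
  unfold KZ Klo; rw [max_eq_left h]; ring

lemma ioo01 (f : ℝ → ℝ) : ∫ x in Ioo (0:ℝ) 1, f x = ∫ x in (0:ℝ)..1, f x := by
  rw [intervalIntegral.integral_of_le zero_le_one, integral_Ioc_eq_integral_Ioo]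

lemma pint (a b c0 c1 c2 c3 c4 c5 c6 c7 c8 c9 c10 c11 c12 c13 c14 c15 c16 : ℝ) :
    (∫ x in a..b, (c0 * x ^ 0 + c1 * x ^ 1 + c2 * x ^ 2 + c3 * x ^ 3 + c4 * x ^ 4 + c5 * x ^ 5 + c6 * x ^ 6 + c7 * x ^ 7 + c8 * x ^ 8 + c9 * x ^ 9 + c10 * x ^ 10 + c11 * x ^ 11 + c12 * x ^ 12 + c13 * x ^ 13 + c14 * x ^ 14 + c15 * x ^ 15 + c16 * x ^ 16))
      = c0 * (b ^ 1 - a ^ 1) / 1 + c1 * (b ^ 2 - a ^ 2) / 2 + c2 * (b ^ 3 - a ^ 3) / 3 + c3 * (b ^ 4 - a ^ 4) / 4 + c4 * (b ^ 5 - a ^ 5) / 5 + c5 * (b ^ 6 - a ^ 6) / 6 + c6 * (b ^ 7 - a ^ 7) / 7 + c7 * (b ^ 8 - a ^ 8) / 8 + c8 * (b ^ 9 - a ^ 9) / 9 + c9 * (b ^ 10 - a ^ 10) / 10 + c10 * (b ^ 11 - a ^ 11) / 11 + c11 * (b ^ 12 - a ^ 12) / 12 + c12 * (b ^ 13 - a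 ^ 13) / 13 + c13 * (b ^ 14 - a ^ 14) / 14 + c14 * (b ^ 15 - a ^ 15) / 15 + c15 * (b ^ 16 - a ^ 16) / 16 + c16 * (b ^ 17 - a ^ 17) / 17 := by
  rw [intervalIntegral.integral_add ((by fun_prop : Continuous fun x : ℝ => c0 * x ^ 0 + c1 * x ^ 1 + c2 * x ^ 2 + c3 * x ^ 3 + c4 * x ^ 4 + c5 * x ^ 5 + c6 * x ^ 6 + c7 * x ^ 7 + c8 * x ^ 8 + c9 * x ^ 9 + c10 * x ^ 10 + c11 * x ^ 11 + c12 * x ^ 12 + c13 * x ^ 13 + c14 * x ^ 14 + c15 * x ^ 15).intervalIntegrable a b) ((by fun_prop : Continuous fun x : ℝ => c16 * x ^ 16).intervalIntegrable a b)]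
  rw [intervalIntegral.integral_add ((by fun_prop : Continuous fun x : ℝ => c0 * x ^ 0 + c1 * x ^ 1 + c2 * x ^ 2 + c3 * x ^ 3 + c4 * x ^ 4 + c5 * x ^ 5 + c6 * x ^ 6 + c7 * x ^ 7 + c8 * x ^ 8 + c9 * x ^ 9 + c10 * x ^ 10 + c11 * x ^ 11 + c12 * x ^ 12 + c13 * x ^ 13 + c14 * x ^ 14).intervalIntegrable a b) ((by fun_prop : Continuous fun x : ℝ => c15 * x ^ 15).intervalIntegrable a b)]
  rw [intervalIntegral.integral_add ((by fun_prop : Continuous fun x : ℝ => c0 * x ^ 0 + c1 * x ^ 1 + c2 * x ^ 2 + c3 * x ^ 3 + c4 * x ^ 4 + c5 * x ^ 5 + c6 * x ^ 6 + c7 * x ^ 7 + c8 * x ^ 8 + c9 * x ^ 9 + c10 * x ^ 10 + c11 * x ^ 11 + c12 * x ^ 12 + c13 * x ^ 13).intervalIntegrable a b) ((by fun_prop : Continuous fun x : ℝ => c14 * x ^ 14).intervalIntegrable a b)]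
  rw [intervalIntegral.integral_add ((by fun_prop : Continuous fun x : ℝ => c0 * x ^ 0 + c1 * x ^ 1 + c2 * x ^ 2 + c3 * x ^ 3 + c4 * x ^ 4 + c5 * x ^ 5 + c6 * x ^ 6 + c7 * x ^ 7 + c8 * x ^ 8 + c9 * x ^ 9 + c10 * x ^ 10 + c11 * x ^ 11 + c12 * x ^ 12).intervalIntegrable a b) ((by fun_prop : Continuous fun x : ℝ => c13 * x ^ 13).intervalIntegrable a b)]
  rw [intervalIntegral.integral_add ((by fun_prop : Continuous fun x : ℝ => c0 * x ^ 0 + c1 * x ^ 1 + c2 * x ^ 2 + c3 * x ^ 3 + c4 * x ^ 4 + c5 * x ^ 5 + c6 * x ^ 6 + c7 * x ^ 7 + c8 * x ^ 8 + c9 * x ^ 9 + c10 * x ^ 10 + c11 * x ^ 11).intervalIntegrable a b) ((by fun_prop : Continuous fun x : ℝ => c12 * x ^ 12).intervalIntegrable a b)]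
  rw [intervalIntegral.integral_add ((by fun_prop : Continuous fun x : ℝ => c0 * x ^ 0 + c1 * x ^ 1 + c2 * x ^ 2 + c3 * x ^ 3 + c4 * x ^ 4 + c5 * x ^ 5 + c6 * x ^ 6 + c7 * x ^ 7 + c8 * x ^ 8 + c9 * x ^ 9 + c10 * x ^ 10).intervalIntegrable a b) ((by fun_prop : Continuous fun x : ℝ => c11 * x ^ 11).intervalIntegrable a b)]
  rw [intervalIntegral.integral_add ((by fun_prop : Continuous fun x : ℝ => c0 * x ^ 0 + c1 * x ^ 1 + c2 * x ^ 2 + c3 * x ^ 3 + c4 * x ^ 4 + c5 * x ^ 5 + c6 * x ^ 6 + c7 * x ^ 7 + c8 * x ^ 8 + c9 * x ^ 9).intervalIntegrable a b) ((by fun_prop : Continuous fun x : ℝ => c10 * x ^ 10).intervalIntegrable a b)]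
  rw [intervalIntegral.integral_add ((by fun_prop : Continuous fun x : ℝ => c0 * x ^ 0 + c1 * x ^ 1 + c2 * x ^ 2 + c3 * x ^ 3 + c4 * x ^ 4 + c5 * x ^ 5 + c6 * x ^ 6 + c7 * x ^ 7 + c8 * x ^ 8).intervalIntegrable a b) ((by fun_prop : Continuous fun x : ℝ => c9 * x ^ 9).intervalIntegrable a b)]
  rw [intervalIntegral.integral_add ((by fun_prop : Continuous fun x : ℝ => c0 * x ^ 0 + c1 * x ^ 1 + c2 * x ^ 2 + c3 * x ^ 3 + c4 * x ^ 4 + c5 * x ^ 5 + c6 * x ^ 6 + c7 * x ^ 7).intervalIntegrable a b) ((by fun_prop : Continuous fun x : ℝ => c8 * x ^ 8).intervalIntegrable a b)]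
  rw [intervalIntegral.integral_add ((by fun_prop : Continuous fun x : ℝ => c0 * x ^ 0 + c1 * x ^ 1 + c2 * x ^ 2 + c3 * x ^ 3 + c4 * x ^ 4 + c5 * x ^ 5 + c6 * x ^ 6).intervalIntegrable a b) ((by fun_prop : Continuous fun x : ℝ => c7 * x ^ 7).intervalIntegrable a b)]
  rw [intervalIntegral.integral_add ((by fun_prop : Continuous fun x : ℝ => c0 * x ^ 0 + c1 * x ^ 1 + c2 * x ^ 2 + c3 * x ^ 3 + c4 * x ^ 4 + c5 * x ^ 5).intervalIntegrable a b) ((by fun_prop : Continuous fun x : ℝ => c6 * x ^ 6).intervalIntegrable a b)]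
  rw [intervalIntegral.integral_add ((by fun_prop : Continuous fun x : ℝ => c0 * x ^ 0 + c1 * x ^ 1 + c2 * x ^ 2 + c3 * x ^ 3 + c4 * x ^ 4).intervalIntegrable a b) ((by fun_prop : Continuous fun x : ℝ => c5 * x ^ 5).intervalIntegrable a b)]
  rw [intervalIntegral.integral_add ((by fun_prop : Continuous fun x : ℝ => c0 * x ^ 0 + c1 * x ^ 1 + c2 * x ^ 2 + c3 * x ^ 3).intervalIntegrable a b) ((by fun_prop : Continuous fun x : ℝ => c4 * x ^ 4).intervalIntegrable a b)]
  rw [intervalIntegral.integral_add ((by fun_prop : Continuous fun x : ℝ => c0 * x ^ 0 + c1 * x ^ 1 + c2 * x ^ 2).intervalIntegrable a b) ((by fun_prop : Continuous fun x : ℝ => c3 * x ^ 3).intervalIntegrable a b)]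
  rw [intervalIntegral.integral_add ((by fun_prop : Continuous fun x : ℝ => c0 * x ^ 0 + c1 * x ^ 1).intervalIntegrable a b) ((by fun_prop : Continuous fun x : ℝ => c2 * x ^ 2).intervalIntegrable a b)]
  rw [intervalIntegral.integral_add ((by fun_prop : Continuous fun x : ℝ => c0 * x ^ 0).intervalIntegrable a b) ((by fun_prop : Continuous fun x : ℝ => c1 * x ^ 1).intervalIntegrable a b)]
  simp only [intervalIntegral.integral_const_mul, integral_pow]
  push_cast
  ring

noncomputable def P2 (s t : ℝ) : ℝ := (2/63) + (-1/36) * t + (-5/36) * t ^ 2 + (11/18) * t ^ 3 + (-1) * t ^ 4 + 1 * t ^ 5 + (-2/3) * t ^ 6 + (4/21) * t ^ 7 + (-1/36) * s + (1/30) * s * t + (-1/30) * s * t ^ 2 + (1/6) * s * t ^ 3 + (-7/12) * s * t ^ 4 + (2/3) * s * t ^ 5 + (-2/9) * s * t ^ 6 + (-5/36) * s ^ 2 + (7/15) * s ^ 2 * t + (-29/30) * s ^ 2 * t ^ 2 + (1/2) * s ^ 2 * t ^ 3 + (7/12) * s ^ 2 * t ^ 4 + (-2/3) * s ^ 2 *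 t ^ 5 + (2/9) * s ^ 2 * t ^ 6 + (4/9) * s ^ 3 + (-7/6) * s ^ 3 * t + (5/2) * s ^ 3 * t ^ 2 + (-16/9) * s ^ 3 * t ^ 3 + (-1/3) * s ^ 4 + (5/12) * s ^ 4 * t + (-17/12) * s ^ 4 * t ^ 2 + (4/3) * s ^ 4 * t ^ 3 + (2/3) * s ^ 5 * t + (-2/3) * s ^ 5 * t ^ 2 + (-2/9) * s ^ 6 * t + (2/9) * s ^ 6 * t ^ 2

noncomputable def P3 (t u : ℝ) : ℝ := (1823/498960) + (-5/1512) * u + (-19/1512) * u ^ 2 + (71/1512) * u ^ 3 + (-103/3024) * u ^ 4 + (-13/270) * u ^ 5 + (47/405) * u ^ 6 + (-32/315) * u ^ 7 + (1/30) * u ^ 8 + (-5/1512) * t + (43/14175) * t * u + (1231/113400) * t * u ^ 2 + (-23/540) * t * u ^ 3 + (1/180) * t * u ^ 4 + (61/360) * t * u ^ 5 + (-337/1080) * t * u ^ 6 + (25/126) * t * u ^ 7 + (1/56) * t * u ^ 8 + (-4/63) * t * u ^ 9 + (4/315) * t * u ^ 10 + (-19/1512) * t ^ 2 + (1231/113400)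 * t ^ 2 * u + (1661/28350) * t ^ 2 * u ^ 2 + (-97/540) * t ^ 2 * u ^ 3 + (73/360) * t ^ 2 * u ^ 4 + (-133/360) * t ^ 2 * u ^ 5 + (733/1080) * t ^ 2 * u ^ 6 + (-317/630) * t ^ 2 * u ^ 7 + (23/280) * t ^ 2 * u ^ 8 + (4/63) * t ^ 2 * u ^ 9 + (-4/315) * t ^ 2 * u ^ 10 + (71/1512) * t ^ 3 + (-23/540) * t ^ 3 * u + (-71/270) * t ^ 3 * u ^ 2 + (85/108) * t ^ 3 * u ^ 3 + (-41/72) * t ^ 3 * u ^ 4 + (7/45) * t ^ 3 * u ^ 5 + (-61/135) * t ^ 3 * u ^ 6 + (128/315) * t ^ 3 * u ^ 7 + (-2/15) * t ^ 3 * u ^ 8 + (-103/3024) * t ^ 4 + (17/360) * t ^ 4 * u + (163/360) * t ^ 4 * u ^ 2 + (-89/72) * t ^ 4 * u ^ 3 + (95/144) * t ^ 4 * u ^ 4 + (7/18) * t ^ 4 * u ^ 5 + (-7/54) * t ^ 4 * u ^ 6 + (-61/1080) * t ^ 5 + (-11/360) * t ^ 5 * u + (-169/360) * t ^ 5 * u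 ^ 2 + (11/9) * t ^ 5 * u ^ 3 + (-11/18) * t ^ 5 * u ^ 4 + (-4/9) * t ^ 5 * u ^ 5 + (4/27) * t ^ 5 * u ^ 6 + (269/1620) * t ^ 6 + (59/1080) * t ^ 6 * u + (301/1080) * t ^ 6 * u ^ 2 + (-23/27) * t ^ 6 * u ^ 3 + (29/54) * t ^ 6 * u ^ 4 + (4/27) * t ^ 6 * u ^ 5 + (-4/81) * t ^ 6 * u ^ 6 + (-71/315) * t ^ 7 + (-67/630) * t ^ 7 * u + (1/90) * t ^ 7 * u ^ 2 + (16/63) * t ^ 7 * u ^ 3 + (-4/21) * t ^ 7 * u ^ 4 + (41/210) * t ^ 8 + (33/280) * t ^ 8 * u + (-33/280) * t ^ 8 * u ^ 2 + (-5/42) * t ^ 9 + (-4/63) * t ^ 9 * u + (4/63) * t ^ 9 * u ^ 2 + (1/21) * t ^ 10 + (4/315) * t ^ 10 * u + (-4/315) * t ^ 10 * u ^ 2 + (-2/231) * t ^ 11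

noncomputable def P4 (t : ℝ) : ℝ := (2953/6985440) + (-4381/5715360) * t + (-25942517/10216206000) * t ^ 2 + (6546479/486486000) * t ^ 3 + (-4336823/324324000) * t ^ 4 + (-719/18900) * t ^ 5 + (86453/680400) * t ^ 6 + (-674587/7144200) * t ^ 7 + (-1046813/4082400) * t ^ 8 + (235169/272160) * t ^ 9 + (-203237/151200) * t ^ 10 + (1657639/1247400) * t ^ 11 + (-923647/1069200) * t ^ 12 + (8431/24948) * t ^ 13 + (-13669/291060) * t ^ 14 + (-256/14553) * t ^ 15 + (1376/218295) * t ^ 16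

lemma K2_symm (a b : ℝ) : Kiter 2 a b = Kiter 2 b a := by
  have e : ∀ x y : ℝ, Kiter 2 x y = ∫ u in Ioo (0:ℝ) 1, KZ x u * KZ u y := fun _ _ => rfl
  rw [e, e]
  exact setIntegral_congr_fun measurableSet_Ioo (fun u _ => by
    rw [KZ_symm_s6 a u, KZ_symm_s6 u b]; ring)

lemma K2_eq {s t : ℝ} (hs : s ∈ Ioo (0:ℝ) 1) (ht : t ∈ Ioo (0:ℝ) 1) (hst : s ≤ t) :
    Kiter 2 s t = P2 s t := by
  have h0s : (0:ℝ) ≤ s := hs.1.le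
  have ht1 : t ≤ 1 := ht.2.le
  have hi : ∀ a b : ℝ, IntervalIntegrable (fun u => KZ s u * KZ u t) volume a b :=
    fun a b => (by unfold KZ; fun_prop : Continuous fun u : ℝ => KZ s u * KZ u t).intervalIntegrable a b
  have hA : Set.EqOn (fun u => KZ s u * KZ u t) (fun u : ℝ => ((1/9) + (-1/3) * t + (2/3) * t ^ 2 + (-4/9) * t ^ 3 + (-1/3) * s + 1 * s * t + (-2) * s * t ^ 2 + (4/3) * s * t ^ 3 + (2/3) * s ^ 2 + (-2) * s ^ 2 * t + 4 * s ^ 2 * t ^ 2 + (-8/3) * s ^ 2 * t ^ 3 + (-4/9) * s ^ 3 + (4/3) * s ^ 3 * t + (-8/3) * s ^ 3 * t ^ 2 + (16/9) * s ^ 3 * t ^ 3) * u ^ 0 + ((-1/3) * t + (1/3) * t ^ 2 + (-1/3) * s + 2 * s * t + (-3) * s * t ^ 2 + (4/3) * s * t ^ 3 + (1/3) * s ^ 2 + (-3) * s ^ 2 * t + 4 * s ^ 2 * t ^ 2 + (-4/3) * s ^ 2 * t ^ 3 + (4/3) * s ^ 3 * t + (-4/3) * s ^ 3 * t ^ 2)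 * u ^ 1 + ((1/3) * t + (-1/3) * t ^ 2 + (1/3) * s + (-1) * s * t + 2 * s * t ^ 2 + (-4/3) * s * t ^ 3 + (-1/3) * s ^ 2 + 2 * s ^ 2 * t + (-3) * s ^ 2 * t ^ 2 + (4/3) * s ^ 2 * t ^ 3 + (-4/3) * s ^ 3 * t + (4/3) * s ^ 3 * t ^ 2) * u ^ 2 + ((-2) * s * t + 2 * s * t ^ 2 + 2 * s ^ 2 * t + (-2) * s ^ 2 * t ^ 2) * u ^ 3 + (1 * s * t + (-1) * s * t ^ 2 + (-1) * s ^ 2 * t + 1 * s ^ 2 * t ^ 2) * u ^ 4 + (0) * u ^ 5 + (0) * u ^ 6 + (0) * u ^ 7 + (0) * u ^ 8 + (0) * u ^ 9 + (0) * u ^ 10 + (0) * u ^ 11 + (0) * u ^ 12 + (0) * u ^ 13 + (0) * u ^ 14 + (0) * u ^ 15 + (0) * u ^ 16) (Set.uIcc 0 s) := fun u hu => by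
    dsimp only
    rw [Set.uIcc_of_le h0s] at hu
    rw [KZ_eq_Klo' hu.2, KZ_eq_Klo (hu.2.trans hst)]; unfold Klo; ring
  have hB : Set.EqOn (fun u => KZ s u * KZ u t) (fun u : ℝ => ((1/9) + (-1/3) * t + (2/3) * t ^ 2 + (-4/9) * t ^ 3) * u ^ 0 + ((-1/3) + (2/3) * t + (-5/3) * t ^ 2 + (4/3) * t ^ 3 + (-1/3) * s + 1 * s * t + (-2) * s * t ^ 2 + (4/3) * s * t ^ 3 + (1/3) * s ^ 2 + (-1) * s ^ 2 * t + 2 * s ^ 2 * t ^ 2 + (-4/3) * s ^ 2 * t ^ 3) * u ^ 1 + ((2/3) + (-2/3) * t + (8/3) * t ^ 2 + (-8/3) * t ^ 3 + (1/3) * s + 1 * s * t ^ 2 + (-4/3) * s * t ^ 3 + (-1/3) * s ^ 2 + (-1) * s ^ 2 * t ^ 2 + (4/3) * s ^ 2 * t ^ 3) * u ^ 2 + ((-4/9) + (-5/3) * t + (1/3) * t ^ 2 + (16/9) * t ^ 3 + (-2) * s * t + 2 * s * t ^ 2 + 2 * s ^ 2 * t + (-2) * s ^ 2 * t ^ 2)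 * u ^ 3 + ((10/3) * t + (-10/3) * t ^ 2 + 1 * s * t + (-1) * s * t ^ 2 + (-1) * s ^ 2 * t + 1 * s ^ 2 * t ^ 2) * u ^ 4 + ((-4/3) * t + (4/3) * t ^ 2) * u ^ 5 + (0) * u ^ 6 + (0) * u ^ 7 + (0) * u ^ 8 + (0) * u ^ 9 + (0) * u ^ 10 + (0) * u ^ 11 + (0) * u ^ 12 + (0) * u ^ 13 + (0) * u ^ 14 + (0) * u ^ 15 + (0) * u ^ 16) (Set.uIcc s t) := fun u hu => by
    dsimp only
    rw [Set.uIcc_of_le hst] at hu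
    rw [KZ_eq_Klo hu.1, KZ_eq_Klo hu.2]; unfold Klo; ring
  have hC : Set.EqOn (fun u => KZ s u * KZ u t) (fun u : ℝ => ((1/9)) * u ^ 0 + ((-2/3) + (-1/3) * t + (1/3) * t ^ 2 + (-1/3) * s + (1/3) * s ^ 2) * u ^ 1 + ((7/3) + (4/3) * t + (-4/3) * t ^ 2 + (4/3) * s + 1 * s * t + (-1) * s * t ^ 2 + (-4/3) * s ^ 2 + (-1) * s ^ 2 * t + 1 * s ^ 2 * t ^ 2) * u ^ 2 + ((-44/9) + (-3) * t + 3 * t ^ 2 + (-3) * s + (-2) * s * t + 2 * s * t ^ 2 + 3 * s ^ 2 + 2 * s ^ 2 * t + (-2) * s ^ 2 * t ^ 2) * u ^ 3 + ((20/3) + (10/3) * t + (-10/3) * t ^ 2 + (10/3) * s + 1 * s * t + (-1) * s * t ^ 2 + (-10/3) * s ^ 2 + (-1) * s ^ 2 * t + 1 * s ^ 2 * t ^ 2) * u ^ 4 + ((-16/3) + (-4/3) * t + (4/3) * t ^ 2 + (-4/3) * s + (4/3) * s ^ 2) * u ^ 5 + ((16/9)) * u ^ 6 + (0) * u ^ 7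 + (0) * u ^ 8 + (0) * u ^ 9 + (0) * u ^ 10 + (0) * u ^ 11 + (0) * u ^ 12 + (0) * u ^ 13 + (0) * u ^ 14 + (0) * u ^ 15 + (0) * u ^ 16) (Set.uIcc t 1) := fun u hu => by
    dsimp only
    rw [Set.uIcc_of_le ht1] at hu
    rw [KZ_eq_Klo (hst.trans hu.1), KZ_eq_Klo' hu.1]; unfold Klo; ring
  have e2 : Kiter 2 s t = ∫ u in Ioo (0:ℝ) 1, KZ s u * KZ u t := rfl
  rw [e2, ioo01, ← intervalIntegral.integral_add_adjacent_intervals (hi 0 s) (hi s 1),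
    ← intervalIntegral.integral_add_adjacent_intervals (hi s t) (hi t 1),
    intervalIntegral.integral_congr hA, intervalIntegral.integral_congr hB,
    intervalIntegral.integral_congr hC, pint, pint, pint]
  unfold P2; ring

lemma K3_le {t u : ℝ} (ht : t ∈ Ioo (0:ℝ) 1) (hu : u ∈ Ioo (0:ℝ) 1) (h : u ≤ t) :
    Kiter 3 t u = P3 t u := by
  have h0t : (0:ℝ) ≤ t := ht.1.le
  have h0u : (0:ℝ) ≤ u := hu.1.le
  have ht1 : t ≤ 1 := ht.2.le
  have hu1 : u ≤ 1 := hu.2.le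
  have e3 : Kiter 3 t u = ∫ v in Ioo (0:ℝ) 1, Kiter 2 t v * KZ v u := rfl
  have step1 : (∫ v in Ioo (0:ℝ) 1, Kiter 2 t v * KZ v u)
      = ∫ v in Ioo (0:ℝ) 1, P2 (min t v) (max t v) * KZ v u :=
    setIntegral_congr_fun measurableSet_Ioo (fun v hv => by
      rcases le_total v t with hvt | htv
      · rw [K2_symm t v, K2_eq hv ht hvt, min_eq_right hvt, max_eq_left hvt]
      · rw [K2_eq ht hv htv, min_eq_left htv, max_eq_right htv])
  have hi : ∀ a b : ℝ, IntervalIntegrable (fun v => P2 (min t v) (max t v) * KZ v u) volume a b :=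
    fun a b => (by unfold P2 KZ; fun_prop : Continuous fun v : ℝ => P2 (min t v) (max t v) * KZ v u).intervalIntegrable a b
  have hA : Set.EqOn (fun v => P2 (min t v) (max t v) * KZ v u) (fun v : ℝ => ((2/189) + (-2/63) * u + (4/63) * u ^ 2 + (-8/189) * u ^ 3 + (-1/108) * t + (1/36) * t * u + (-1/18) * t * u ^ 2 + (1/27) * t * u ^ 3 + (-5/108) * t ^ 2 + (5/36) * t ^ 2 * u + (-5/18) * t ^ 2 * u ^ 2 + (5/27) * t ^ 2 * u ^ 3 + (11/54) * t ^ 3 + (-11/18) * t ^ 3 * u + (11/9) * t ^ 3 * u ^ 2 + (-22/27) * t ^ 3 * u ^ 3 + (-1/3) * t ^ 4 + 1 * t ^ 4 * u + (-2) * t ^ 4 * u ^ 2 + (4/3) * t ^ 4 * u ^ 3 + (1/3) * t ^ 5 + (-1) * t ^ 5 * u + 2 * t ^ 5 * u ^ 2 + (-4/3) * t ^ 5 * u ^ 3 + (-2/9) * t ^ 6 + (2/3) * t ^ 6 * u + (-4/3) * t ^ 6 * u ^ 2 + (8/9) * t ^ 6 * u ^ 3 + (4/63) * t ^ 7 + (-4/21)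 * t ^ 7 * u + (8/21) * t ^ 7 * u ^ 2 + (-16/63) * t ^ 7 * u ^ 3) * v ^ 0 + ((-1/108) + (-1/252) * u + (-1/42) * u ^ 2 + (1/27) * u ^ 3 + (1/90) * t + (-1/180) * t * u + (7/180) * t * u ^ 2 + (-2/45) * t * u ^ 3 + (-1/90) * t ^ 2 + (31/180) * t ^ 2 * u + (-37/180) * t ^ 2 * u ^ 2 + (2/45) * t ^ 2 * u ^ 3 + (1/18) * t ^ 3 + (-7/9) * t ^ 3 * u + (17/18) * t ^ 3 * u ^ 2 + (-2/9) * t ^ 3 * u ^ 3 + (-7/36) * t ^ 4 + (19/12) * t ^ 4 * u + (-13/6) * t ^ 4 * u ^ 2 + (7/9) * t ^ 4 * u ^ 3 + (2/9) * t ^ 5 + (-5/3) * t ^ 5 * u + (7/3) * t ^ 5 * u ^ 2 + (-8/9) * t ^ 5 * u ^ 3 + (-2/27) * t ^ 6 + (8/9) * t ^ 6 * u + (-10/9) * t ^ 6 * u ^ 2 + (8/27) * t ^ 6 * u ^ 3 + (-4/21) * t ^ 7 * u + (4/21) * t ^ 7 * u ^ 2) * v ^ 1 + ((-5/108) + (25/126)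 * u + (-85/252) * u ^ 2 + (5/27) * u ^ 3 + (7/45) * t + (-19/36) * t * u + (179/180) * t * u ^ 2 + (-28/45) * t * u ^ 3 + (-29/90) * t ^ 2 + (31/36) * t ^ 2 * u + (-329/180) * t ^ 2 * u ^ 2 + (58/45) * t ^ 2 * u ^ 3 + (1/6) * t ^ 3 + (-1/18) * t ^ 3 * u + (5/9) * t ^ 3 * u ^ 2 + (-2/3) * t ^ 3 * u ^ 3 + (7/36) * t ^ 4 + (-1) * t ^ 4 * u + (19/12) * t ^ 4 * u ^ 2 + (-7/9) * t ^ 4 * u ^ 3 + (-2/9) * t ^ 5 + 1 * t ^ 5 * u + (-5/3) * t ^ 5 * u ^ 2 + (8/9) * t ^ 5 * u ^ 3 + (2/27) * t ^ 6 + (-2/3) * t ^ 6 * u + (8/9) * t ^ 6 * u ^ 2 + (-8/27) * t ^ 6 * u ^ 3 + (4/21) * t ^ 7 * u + (-4/21) * t ^ 7 * u ^ 2) * v ^ 2 + ((4/27) + (-1/3) * u + (7/9) * u ^ 2 + (-16/27) * u ^ 3 + (-7/18) * t + (11/15) * t * u + (-19/10) * t * u ^ 2 + (14/9) * t * u ^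 3 + (5/6) * t ^ 2 + (-47/30) * t ^ 2 * u + (61/15) * t ^ 2 * u ^ 2 + (-10/3) * t ^ 2 * u ^ 3 + (-16/27) * t ^ 3 + (13/9) * t ^ 3 * u + (-29/9) * t ^ 3 * u ^ 2 + (64/27) * t ^ 3 * u ^ 3 + (-7/6) * t ^ 4 * u + (7/6) * t ^ 4 * u ^ 2 + (4/3) * t ^ 5 * u + (-4/3) * t ^ 5 * u ^ 2 + (-4/9) * t ^ 6 * u + (4/9) * t ^ 6 * u ^ 2) * v ^ 3 + ((-1/9) + (-1/4) * u + (-1/12) * u ^ 2 + (4/9) * u ^ 3 + (5/36) * t + (73/60) * t * u + (-4/5) * t * u ^ 2 + (-5/9) * t * u ^ 3 + (-17/36) * t ^ 2 + (-41/20) * t ^ 2 * u + (19/30) * t ^ 2 * u ^ 2 + (17/9) * t ^ 2 * u ^ 3 + (4/9) * t ^ 3 + (17/18) * t ^ 3 * u + (7/18) * t ^ 3 * u ^ 2 + (-16/9) * t ^ 3 * u ^ 3 + (7/12) * t ^ 4 * u + (-7/12) * t ^ 4 * u ^ 2 + (-2/3) * t ^ 5 * u + (2/3) * t ^ 5 *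 u ^ 2 + (2/9) * t ^ 6 * u + (-2/9) * t ^ 6 * u ^ 2) * v ^ 4 + ((7/9) * u + (-7/9) * u ^ 2 + (2/9) * t + (-9/4) * t * u + (35/12) * t * u ^ 2 + (-8/9) * t * u ^ 3 + (-2/9) * t ^ 2 + (55/12) * t ^ 2 * u + (-21/4) * t ^ 2 * u ^ 2 + (8/9) * t ^ 2 * u ^ 3 + (-28/9) * t ^ 3 * u + (28/9) * t ^ 3 * u ^ 2) * v ^ 5 + ((-1/3) * u + (1/3) * u ^ 2 + (-2/27) * t + (-1/36) * t * u + (-7/36) * t * u ^ 2 + (8/27) * t * u ^ 3 + (2/27) * t ^ 2 + (-35/36) * t ^ 2 * u + (43/36) * t ^ 2 * u ^ 2 + (-8/27) * t ^ 2 * u ^ 3 + (4/3) * t ^ 3 * u + (-4/3) * t ^ 3 * u ^ 2) * v ^ 6 + ((8/9) * t * u + (-8/9) * t * u ^ 2 + (-8/9) * t ^ 2 * u + (8/9) * t ^ 2 * u ^ 2) * v ^ 7 + ((-2/9) * t * u + (2/9) * t * u ^ 2 + (2/9) * t ^ 2 * u + (-2/9) * t ^ 2 * u ^ 2) * v ^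 8 + (0) * v ^ 9 + (0) * v ^ 10 + (0) * v ^ 11 + (0) * v ^ 12 + (0) * v ^ 13 + (0) * v ^ 14 + (0) * v ^ 15 + (0) * v ^ 16) (Set.uIcc 0 u) := fun v hv => by
    dsimp only
    rw [Set.uIcc_of_le h0u] at hv
    rw [min_eq_right (hv.2.trans h), max_eq_left (hv.2.trans h), KZ_eq_Klo hv.2]
    unfold P2 Klo; ring
  have hB : Set.EqOn (fun v => P2 (min t v) (max t v) * KZ v u) (fun v : ℝ => ((2/189) + (-1/108) * t + (-5/108) * t ^ 2 + (11/54) * t ^ 3 + (-1/3) * t ^ 4 + (1/3) * t ^ 5 + (-2/9) * t ^ 6 + (4/63) * t ^ 7) * v ^ 0 + ((-31/756) + (-2/63) * u + (2/63) * u ^ 2 + (7/180) * t + (1/36) * t * u + (-1/36) * t * u ^ 2 + (23/180) * t ^ 2 + (5/36) * t ^ 2 * u + (-5/36) * t ^ 2 * u ^ 2 + (-5/9) * t ^ 3 + (-11/18) * t ^ 3 * u + (11/18) * t ^ 3 * u ^ 2 + (29/36) * t ^ 4 + 1 * t ^ 4 * u + (-1) * t ^ 4 * u ^ 2 + (-7/9)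 * t ^ 5 + (-1) * t ^ 5 * u + 1 * t ^ 5 * u ^ 2 + (16/27) * t ^ 6 + (2/3) * t ^ 6 * u + (-2/3) * t ^ 6 * u ^ 2 + (-4/21) * t ^ 7 + (-4/21) * t ^ 7 * u + (4/21) * t ^ 7 * u ^ 2) * v ^ 1 + ((17/378) + (5/84) * u + (-5/84) * u ^ 2 + (1/15) * t + (-11/180) * t * u + (11/180) * t * u ^ 2 + (-17/30) * t ^ 2 + (-19/180) * t ^ 2 * u + (19/180) * t ^ 2 * u ^ 2 + (11/9) * t ^ 3 + (4/9) * t ^ 3 * u + (-4/9) * t ^ 3 * u ^ 2 + (-11/9) * t ^ 4 + (-5/12) * t ^ 4 * u + (5/12) * t ^ 4 * u ^ 2 + (10/9) * t ^ 5 + (1/3) * t ^ 5 * u + (-1/3) * t ^ 5 * u ^ 2 + (-28/27) * t ^ 6 + (-4/9) * t ^ 6 * u + (4/9) * t ^ 6 * u ^ 2 + (8/21) * t ^ 7 + (4/21) * t ^ 7 * u + (-4/21) * t ^ 7 * u ^ 2) * v ^ 2 + ((143/756) + (1/9) * u + (-1/9) * u ^ 2 + (-203/270) * t + (-13/30) *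 t * u + (13/30) * t * u ^ 2 + (259/135) * t ^ 2 + (14/15) * t ^ 2 * u + (-14/15) * t ^ 2 * u ^ 2 + (-85/54) * t ^ 3 + (-1/3) * t ^ 3 * u + (1/3) * t ^ 3 * u ^ 2 + (-5/12) * t ^ 4 + (-7/6) * t ^ 4 * u + (7/6) * t ^ 4 * u ^ 2 + (2/3) * t ^ 5 + (4/3) * t ^ 5 * u + (-4/3) * t ^ 5 * u ^ 2 + (2/9) * t ^ 6 + (-4/9) * t ^ 6 * u + (4/9) * t ^ 6 * u ^ 2 + (-16/63) * t ^ 7) * v ^ 3 + ((-43/54) + (-7/12) * u + (7/12) * u ^ 2 + (79/36) * t + (49/30) * t * u + (-49/30) * t * u ^ 2 + (-175/36) * t ^ 2 + (-52/15) * t ^ 2 * u + (52/15) * t ^ 2 * u ^ 2 + 3 * t ^ 3 + (41/18) * t ^ 3 * u + (-41/18) * t ^ 3 * u ^ 2 + (35/18) * t ^ 4 + (7/12) * t ^ 4 * u + (-7/12) * t ^ 4 * u ^ 2 + (-20/9) * t ^ 5 + (-2/3) * t ^ 5 * u + (2/3) * t ^ 5 * u ^ 2 + (20/27) * t ^ 6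 + (2/9) * t ^ 6 * u + (-2/9) * t ^ 6 * u ^ 2) * v ^ 4 + ((38/27) + (7/9) * u + (-7/9) * u ^ 2 + (-63/20) * t + (-19/12) * t * u + (19/12) * t * u ^ 2 + (449/60) * t ^ 2 + (47/12) * t ^ 2 * u + (-47/12) * t ^ 2 * u ^ 2 + (-50/9) * t ^ 3 + (-28/9) * t ^ 3 * u + (28/9) * t ^ 3 * u ^ 2 + (-7/9) * t ^ 4 + (8/9) * t ^ 5 + (-8/27) * t ^ 6) * v ^ 5 + ((-34/27) + (-1/3) * u + (1/3) * u ^ 2 + (89/54) * t + (-1/4) * t * u + (1/4) * t * u ^ 2 + (-293/54) * t ^ 2 + (-3/4) * t ^ 2 * u + (3/4) * t ^ 2 * u ^ 2 + (136/27) * t ^ 3 + (4/3) * t ^ 3 * u + (-4/3) * t ^ 3 * u ^ 2) * v ^ 6 + ((4/9) + 1 * t + (8/9) * t * u + (-8/9) * t * u ^ 2 + (1/3) * t ^ 2 + (-8/9) * t ^ 2 * u + (8/9) * t ^ 2 * u ^ 2 + (-16/9) * t ^ 3) * v ^ 7 + ((-4/3) * t + (-2/9) * t * u + (2/9) * t *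 u ^ 2 + (4/3) * t ^ 2 + (2/9) * t ^ 2 * u + (-2/9) * t ^ 2 * u ^ 2) * v ^ 8 + ((8/27) * t + (-8/27) * t ^ 2) * v ^ 9 + (0) * v ^ 10 + (0) * v ^ 11 + (0) * v ^ 12 + (0) * v ^ 13 + (0) * v ^ 14 + (0) * v ^ 15 + (0) * v ^ 16) (Set.uIcc u t) := fun v hv => by
    dsimp only
    rw [Set.uIcc_of_le h] at hv
    rw [min_eq_right hv.2, max_eq_left hv.2, KZ_eq_Klo' hv.1]
    unfold P2 Klo; ring
  have hC : Set.EqOn (fun v => P2 (min t v) (max t v) * KZ v u) (fun v : ℝ => ((2/189) + (-1/108) * t + (-5/108) * t ^ 2 + (4/27) * t ^ 3 + (-1/9) * t ^ 4) * v ^ 0 + ((-31/756) + (-2/63) * u + (2/63) * u ^ 2 + (7/180) * t + (1/36) * t * u + (-1/36) * t * u ^ 2 + (53/180) * t ^ 2 + (5/36) * t ^ 2 * u + (-5/36) * t ^ 2 * u ^ 2 + (-5/6) * t ^ 3 + (-4/9) * t ^ 3 * u + (4/9) * t ^ 3 * u ^ 2 + (17/36) * t ^ 4 + (1/3) * t ^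 4 * u + (-1/3) * t ^ 4 * u ^ 2 + (2/9) * t ^ 5 + (-2/27) * t ^ 6) * v ^ 1 + ((17/378) + (5/84) * u + (-5/84) * u ^ 2 + (-1/10) * t + (-11/180) * t * u + (11/180) * t * u ^ 2 + (-16/15) * t ^ 2 + (-109/180) * t ^ 2 * u + (109/180) * t ^ 2 * u ^ 2 + (26/9) * t ^ 3 + (29/18) * t ^ 3 * u + (-29/18) * t ^ 3 * u ^ 2 + (-14/9) * t ^ 4 + (-3/4) * t ^ 4 * u + (3/4) * t ^ 4 * u ^ 2 + (-8/9) * t ^ 5 + (-2/3) * t ^ 5 * u + (2/3) * t ^ 5 * u ^ 2 + (8/27) * t ^ 6 + (2/9) * t ^ 6 * u + (-2/9) * t ^ 6 * u ^ 2) * v ^ 2 + ((185/756) + (1/9) * u + (-1/9) * u ^ 2 + (26/135) * t + (1/15) * t * u + (-1/15) * t * u ^ 2 + (304/135) * t ^ 2 + (43/30) * t ^ 2 * u + (-43/30) * t ^ 2 * u ^ 2 + (-325/54) * t ^ 3 + (-11/3) * t ^ 3 * u + (11/3) * t ^ 3 * u ^ 2 + (113/36) * t ^ 4 + (11/6) *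 t ^ 4 * u + (-11/6) * t ^ 4 * u ^ 2 + 2 * t ^ 5 + (4/3) * t ^ 5 * u + (-4/3) * t ^ 5 * u ^ 2 + (-2/3) * t ^ 6 + (-4/9) * t ^ 6 * u + (4/9) * t ^ 6 * u ^ 2) * v ^ 3 + ((-32/27) + (-3/4) * u + (3/4) * u ^ 2 + (-17/36) * t + (-1/5) * t * u + (1/5) * t * u ^ 2 + (-103/36) * t ^ 2 + (-22/15) * t ^ 2 * u + (22/15) * t ^ 2 * u ^ 2 + (25/3) * t ^ 3 + (77/18) * t ^ 3 * u + (-77/18) * t ^ 3 * u ^ 2 + (-85/18) * t ^ 4 + (-11/4) * t ^ 4 * u + (11/4) * t ^ 4 * u ^ 2 + (-20/9) * t ^ 5 + (-2/3) * t ^ 5 * u + (2/3) * t ^ 5 * u ^ 2 + (20/27) * t ^ 6 + (2/9) * t ^ 6 * u + (-2/9) * t ^ 6 * u ^ 2) * v ^ 4 + ((74/27) + (29/18) * u + (-29/18) * u ^ 2 + (71/60) * t + (3/4) * t * u + (-3/4) * t * u ^ 2 + (89/60) * t ^ 2 + (-1/12) * t ^ 2 * u + (1/12) * t ^ 2 *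 u ^ 2 + (-62/9) * t ^ 3 + (-16/9) * t ^ 3 * u + (16/9) * t ^ 3 * u ^ 2 + (41/9) * t ^ 4 + (4/3) * t ^ 4 * u + (-4/3) * t ^ 4 * u ^ 2 + (8/9) * t ^ 5 + (-8/27) * t ^ 6) * v ^ 5 + ((-109/27) + (-2) * u + 2 * u ^ 2 + (-115/54) * t + (-5/4) * t * u + (5/4) * t * u ^ 2 + (67/54) * t ^ 2 + (5/4) * t ^ 2 * u + (-5/4) * t ^ 2 * u ^ 2 + (64/27) * t ^ 3 + (-16/9) * t ^ 4) * v ^ 6 + ((256/63) + (5/3) * u + (-5/3) * u ^ 2 + (7/3) * t + (8/9) * t * u + (-8/9) * t * u ^ 2 + (-7/3) * t ^ 2 + (-8/9) * t ^ 2 * u + (8/9) * t ^ 2 * u ^ 2) * v ^ 7 + ((-20/7) + (-6/7) * u + (6/7) * u ^ 2 + (-4/3) * t + (-2/9) * t * u + (2/9) * t * u ^ 2 + (4/3) * t ^ 2 + (2/9) * t ^ 2 * u + (-2/9) * t ^ 2 * u ^ 2) * v ^ 8 + ((80/63) + (4/21) * u + (-4/21) * u ^ 2 + (8/27) * t + (-8/27)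 * t ^ 2) * v ^ 9 + ((-16/63)) * v ^ 10 + (0) * v ^ 11 + (0) * v ^ 12 + (0) * v ^ 13 + (0) * v ^ 14 + (0) * v ^ 15 + (0) * v ^ 16) (Set.uIcc t 1) := fun v hv => by
    dsimp only
    rw [Set.uIcc_of_le ht1] at hv
    rw [min_eq_left hv.1, max_eq_right hv.1, KZ_eq_Klo' (h.trans hv.1)]
    unfold P2 Klo; ring
  rw [e3, step1, ioo01, ← intervalIntegral.integral_add_adjacent_intervals (hi 0 u) (hi u 1),
    ← intervalIntegral.integral_add_adjacent_intervals (hi u t) (hi t 1),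
    intervalIntegral.integral_congr hA, intervalIntegral.integral_congr hB,
    intervalIntegral.integral_congr hC, pint, pint, pint]
  unfold P3; ring

lemma K3_ge {t u : ℝ} (ht : t ∈ Ioo (0:ℝ) 1) (hu : u ∈ Ioo (0:ℝ) 1) (h : t ≤ u) :
    Kiter 3 t u = P3 u t := by
  have h0t : (0:ℝ) ≤ t := ht.1.le
  have h0u : (0:ℝ) ≤ u := hu.1.le
  have ht1 : t ≤ 1 := ht.2.le
  have hu1 : u ≤ 1 := hu.2.le
  have e3 : Kiter 3 t u = ∫ v in Ioo (0:ℝ) 1, Kiter 2 t v * KZ v u := rfl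
  have step1 : (∫ v in Ioo (0:ℝ) 1, Kiter 2 t v * KZ v u)
      = ∫ v in Ioo (0:ℝ) 1, P2 (min t v) (max t v) * KZ v u :=
    setIntegral_congr_fun measurableSet_Ioo (fun v hv => by
      rcases le_total v t with hvt | htv
      · rw [K2_symm t v, K2_eq hv ht hvt, min_eq_right hvt, max_eq_left hvt]
      · rw [K2_eq ht hv htv, min_eq_left htv, max_eq_right htv])
  have hi : ∀ a b : ℝ, IntervalIntegrable (fun v => P2 (min t v) (max t v) * KZ v u) volume a b :=
    fun a b => (by unfold P2 KZ; fun_prop : Continuous fun v : ℝ => P2 (min t v) (max t v) * KZ v u).intervalIntegrable a b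
  have hA : Set.EqOn (fun v => P2 (min t v) (max t v) * KZ v u) (fun v : ℝ => ((2/189) + (-2/63) * u + (4/63) * u ^ 2 + (-8/189) * u ^ 3 + (-1/108) * t + (1/36) * t * u + (-1/18) * t * u ^ 2 + (1/27) * t * u ^ 3 + (-5/108) * t ^ 2 + (5/36) * t ^ 2 * u + (-5/18) * t ^ 2 * u ^ 2 + (5/27) * t ^ 2 * u ^ 3 + (11/54) * t ^ 3 + (-11/18) * t ^ 3 * u + (11/9) * t ^ 3 * u ^ 2 + (-22/27) * t ^ 3 * u ^ 3 + (-1/3) * t ^ 4 + 1 * t ^ 4 * u + (-2) * t ^ 4 * u ^ 2 + (4/3) * t ^ 4 * u ^ 3 + (1/3) * t ^ 5 + (-1) * t ^ 5 * u + 2 * t ^ 5 * u ^ 2 + (-4/3) * t ^ 5 * u ^ 3 + (-2/9) * t ^ 6 + (2/3) * t ^ 6 * u + (-4/3) * t ^ 6 * u ^ 2 + (8/9) * t ^ 6 * u ^ 3 + (4/63) * t ^ 7 + (-4/21) * t ^ 7 * u + (8/21) * t ^ 7 * u ^ 2 + (-16/63) * t ^ 7 * u ^ 3) * v ^ 0 +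 ((-1/108) + (-1/252) * u + (-1/42) * u ^ 2 + (1/27) * u ^ 3 + (1/90) * t + (-1/180) * t * u + (7/180) * t * u ^ 2 + (-2/45) * t * u ^ 3 + (-1/90) * t ^ 2 + (31/180) * t ^ 2 * u + (-37/180) * t ^ 2 * u ^ 2 + (2/45) * t ^ 2 * u ^ 3 + (1/18) * t ^ 3 + (-7/9) * t ^ 3 * u + (17/18) * t ^ 3 * u ^ 2 + (-2/9) * t ^ 3 * u ^ 3 + (-7/36) * t ^ 4 + (19/12) * t ^ 4 * u + (-13/6) * t ^ 4 * u ^ 2 + (7/9) * t ^ 4 * u ^ 3 + (2/9) * t ^ 5 + (-5/3) * t ^ 5 * u + (7/3) * t ^ 5 * u ^ 2 + (-8/9) * t ^ 5 * u ^ 3 + (-2/27) * t ^ 6 + (8/9) * t ^ 6 * u + (-10/9) * t ^ 6 * u ^ 2 + (8/27) * t ^ 6 * u ^ 3 + (-4/21) * t ^ 7 * u + (4/21) * t ^ 7 * u ^ 2) * v ^ 1 + ((-5/108) + (25/126) * u + (-85/252) * u ^ 2 + (5/27) * u ^ 3 + (7/45) * t + (-19/36) * t * u + (179/180) * t * u ^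 2 + (-28/45) * t * u ^ 3 + (-29/90) * t ^ 2 + (31/36) * t ^ 2 * u + (-329/180) * t ^ 2 * u ^ 2 + (58/45) * t ^ 2 * u ^ 3 + (1/6) * t ^ 3 + (-1/18) * t ^ 3 * u + (5/9) * t ^ 3 * u ^ 2 + (-2/3) * t ^ 3 * u ^ 3 + (7/36) * t ^ 4 + (-1) * t ^ 4 * u + (19/12) * t ^ 4 * u ^ 2 + (-7/9) * t ^ 4 * u ^ 3 + (-2/9) * t ^ 5 + 1 * t ^ 5 * u + (-5/3) * t ^ 5 * u ^ 2 + (8/9) * t ^ 5 * u ^ 3 + (2/27) * t ^ 6 + (-2/3) * t ^ 6 * u + (8/9) * t ^ 6 * u ^ 2 + (-8/27) * t ^ 6 * u ^ 3 + (4/21) * t ^ 7 * u + (-4/21) * t ^ 7 * u ^ 2) * v ^ 2 + ((4/27) + (-1/3) * u + (7/9) * u ^ 2 + (-16/27) * u ^ 3 + (-7/18) * t + (11/15) * t * u + (-19/10) * t * u ^ 2 + (14/9) * t * u ^ 3 + (5/6) * t ^ 2 + (-47/30) * t ^ 2 * u + (61/15) * t ^ 2 * u ^ 2 + (-10/3)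 * t ^ 2 * u ^ 3 + (-16/27) * t ^ 3 + (13/9) * t ^ 3 * u + (-29/9) * t ^ 3 * u ^ 2 + (64/27) * t ^ 3 * u ^ 3 + (-7/6) * t ^ 4 * u + (7/6) * t ^ 4 * u ^ 2 + (4/3) * t ^ 5 * u + (-4/3) * t ^ 5 * u ^ 2 + (-4/9) * t ^ 6 * u + (4/9) * t ^ 6 * u ^ 2) * v ^ 3 + ((-1/9) + (-1/4) * u + (-1/12) * u ^ 2 + (4/9) * u ^ 3 + (5/36) * t + (73/60) * t * u + (-4/5) * t * u ^ 2 + (-5/9) * t * u ^ 3 + (-17/36) * t ^ 2 + (-41/20) * t ^ 2 * u + (19/30) * t ^ 2 * u ^ 2 + (17/9) * t ^ 2 * u ^ 3 + (4/9) * t ^ 3 + (17/18) * t ^ 3 * u + (7/18) * t ^ 3 * u ^ 2 + (-16/9) * t ^ 3 * u ^ 3 + (7/12) * t ^ 4 * u + (-7/12) * t ^ 4 * u ^ 2 + (-2/3) * t ^ 5 * u + (2/3) * t ^ 5 * u ^ 2 + (2/9) * t ^ 6 * u + (-2/9) * t ^ 6 * u ^ 2) * v ^ 4 + ((7/9) *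 u + (-7/9) * u ^ 2 + (2/9) * t + (-9/4) * t * u + (35/12) * t * u ^ 2 + (-8/9) * t * u ^ 3 + (-2/9) * t ^ 2 + (55/12) * t ^ 2 * u + (-21/4) * t ^ 2 * u ^ 2 + (8/9) * t ^ 2 * u ^ 3 + (-28/9) * t ^ 3 * u + (28/9) * t ^ 3 * u ^ 2) * v ^ 5 + ((-1/3) * u + (1/3) * u ^ 2 + (-2/27) * t + (-1/36) * t * u + (-7/36) * t * u ^ 2 + (8/27) * t * u ^ 3 + (2/27) * t ^ 2 + (-35/36) * t ^ 2 * u + (43/36) * t ^ 2 * u ^ 2 + (-8/27) * t ^ 2 * u ^ 3 + (4/3) * t ^ 3 * u + (-4/3) * t ^ 3 * u ^ 2) * v ^ 6 + ((8/9) * t * u + (-8/9) * t * u ^ 2 + (-8/9) * t ^ 2 * u + (8/9) * t ^ 2 * u ^ 2) * v ^ 7 + ((-2/9) * t * u + (2/9) * t * u ^ 2 + (2/9) * t ^ 2 * u + (-2/9) * t ^ 2 * u ^ 2) * v ^ 8 + (0) * v ^ 9 + (0) * v ^ 10 + (0) * v ^ 11 + (0) * v ^ 12 + (0) * v ^ 13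 + (0) * v ^ 14 + (0) * v ^ 15 + (0) * v ^ 16) (Set.uIcc 0 t) := fun v hv => by
    dsimp only
    rw [Set.uIcc_of_le h0t] at hv
    rw [min_eq_right hv.2, max_eq_left hv.2, KZ_eq_Klo (hv.2.trans h)]
    unfold P2 Klo; ring
  have hB : Set.EqOn (fun v => P2 (min t v) (max t v) * KZ v u) (fun v : ℝ => ((2/189) + (-2/63) * u + (4/63) * u ^ 2 + (-8/189) * u ^ 3 + (-1/108) * t + (1/36) * t * u + (-1/18) * t * u ^ 2 + (1/27) * t * u ^ 3 + (-5/108) * t ^ 2 + (5/36) * t ^ 2 * u + (-5/18) * t ^ 2 * u ^ 2 + (5/27) * t ^ 2 * u ^ 3 + (4/27) * t ^ 3 + (-4/9) * t ^ 3 * u + (8/9) * t ^ 3 * u ^ 2 + (-16/27) * t ^ 3 * u ^ 3 + (-1/9) * t ^ 4 + (1/3) * t ^ 4 * u + (-2/3) * t ^ 4 * u ^ 2 + (4/9) * t ^ 4 * u ^ 3) * v ^ 0 + ((-1/108) + (-1/252) * u + (-1/42) * u ^ 2 + (1/27) * u ^ 3 + (1/90) * t + (-1/180) * t * u + (7/180)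 * t * u ^ 2 + (-2/45) * t * u ^ 3 + (7/45) * t ^ 2 + (-59/180) * t ^ 2 * u + (143/180) * t ^ 2 * u ^ 2 + (-28/45) * t ^ 2 * u ^ 3 + (-7/18) * t ^ 3 + (13/18) * t ^ 3 * u + (-17/9) * t ^ 3 * u ^ 2 + (14/9) * t ^ 3 * u ^ 3 + (5/36) * t ^ 4 + (-1/12) * t ^ 4 * u + (1/2) * t ^ 4 * u ^ 2 + (-5/9) * t ^ 4 * u ^ 3 + (2/9) * t ^ 5 + (-2/3) * t ^ 5 * u + (4/3) * t ^ 5 * u ^ 2 + (-8/9) * t ^ 5 * u ^ 3 + (-2/27) * t ^ 6 + (2/9) * t ^ 6 * u + (-4/9) * t ^ 6 * u ^ 2 + (8/27) * t ^ 6 * u ^ 3) * v ^ 1 + ((-5/108) + (25/126) * u + (-85/252) * u ^ 2 + (5/27) * u ^ 3 + (-1/90) * t + (-1/36) * t * u + (-1/180) * t * u ^ 2 + (2/45) * t * u ^ 3 + (-29/90) * t ^ 2 + (13/36) * t ^ 2 * u + (-239/180) * t ^ 2 * u ^ 2 + (58/45) * t ^ 2 * u ^ 3 + (5/6) * t ^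 3 + (-8/9) * t ^ 3 * u + (61/18) * t ^ 3 * u ^ 2 + (-10/3) * t ^ 3 * u ^ 3 + (-17/36) * t ^ 4 + (2/3) * t ^ 4 * u + (-25/12) * t ^ 4 * u ^ 2 + (17/9) * t ^ 4 * u ^ 3 + (-2/9) * t ^ 5 + (-2/3) * t ^ 5 * u ^ 2 + (8/9) * t ^ 5 * u ^ 3 + (2/27) * t ^ 6 + (2/9) * t ^ 6 * u ^ 2 + (-8/27) * t ^ 6 * u ^ 3) * v ^ 2 + ((11/54) + (-1/2) * u + (10/9) * u ^ 2 + (-22/27) * u ^ 3 + (1/18) * t + (-1/10) * t * u + (4/15) * t * u ^ 2 + (-2/9) * t * u ^ 3 + (1/6) * t ^ 2 + (14/15) * t ^ 2 * u + (-13/30) * t ^ 2 * u ^ 2 + (-2/3) * t ^ 2 * u ^ 3 + (-16/27) * t ^ 3 + (-17/9) * t ^ 3 * u + (1/9) * t ^ 3 * u ^ 2 + (64/27) * t ^ 3 * u ^ 3 + (4/9) * t ^ 4 + (1/2) * t ^ 4 * u + (5/6) * t ^ 4 * u ^ 2 + (-16/9) * t ^ 4 * u ^ 3 + (4/3) * t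 ^ 5 * u + (-4/3) * t ^ 5 * u ^ 2 + (-4/9) * t ^ 6 * u + (4/9) * t ^ 6 * u ^ 2) * v ^ 3 + ((-1/3) + (1/4) * u + (-5/4) * u ^ 2 + (4/3) * u ^ 3 + (-7/36) * t + (23/60) * t * u + (-29/30) * t * u ^ 2 + (7/9) * t * u ^ 3 + (7/36) * t ^ 2 + (-41/20) * t ^ 2 * u + (79/30) * t ^ 2 * u ^ 2 + (-7/9) * t ^ 2 * u ^ 3 + (77/18) * t ^ 3 * u + (-77/18) * t ^ 3 * u ^ 2 + (-11/4) * t ^ 4 * u + (11/4) * t ^ 4 * u ^ 2 + (-2/3) * t ^ 5 * u + (2/3) * t ^ 5 * u ^ 2 + (2/9) * t ^ 6 * u + (-2/9) * t ^ 6 * u ^ 2) * v ^ 4 + ((1/3) + (11/18) * u + (7/18) * u ^ 2 + (-4/3) * u ^ 3 + (2/9) * t + (1/12) * t * u + (7/12) * t * u ^ 2 + (-8/9) * t * u ^ 3 + (-2/9) * t ^ 2 + (7/12) * t ^ 2 * u + (-5/4) * t ^ 2 * u ^ 2 + (8/9) * t ^ 2 * u ^ 3 + (-16/9) * t ^ 3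 * u + (16/9) * t ^ 3 * u ^ 2 + (4/3) * t ^ 4 * u + (-4/3) * t ^ 4 * u ^ 2) * v ^ 5 + ((-2/9) + (-4/3) * u + (2/3) * u ^ 2 + (8/9) * u ^ 3 + (-2/27) * t + (-37/36) * t * u + (29/36) * t * u ^ 2 + (8/27) * t * u ^ 3 + (2/27) * t ^ 2 + (37/36) * t ^ 2 * u + (-29/36) * t ^ 2 * u ^ 2 + (-8/27) * t ^ 2 * u ^ 3) * v ^ 6 + ((4/63) + (31/21) * u + (-9/7) * u ^ 2 + (-16/63) * u ^ 3 + (8/9) * t * u + (-8/9) * t * u ^ 2 + (-8/9) * t ^ 2 * u + (8/9) * t ^ 2 * u ^ 2) * v ^ 7 + ((-6/7) * u + (6/7) * u ^ 2 + (-2/9) * t * u + (2/9) * t * u ^ 2 + (2/9) * t ^ 2 * u + (-2/9) * t ^ 2 * u ^ 2) * v ^ 8 + ((4/21) * u + (-4/21) * u ^ 2) * v ^ 9 + (0) * v ^ 10 + (0) * v ^ 11 + (0) * v ^ 12 + (0) * v ^ 13 + (0) * v ^ 14 + (0) * v ^ 15 + (0) * v ^ 16) (Set.uIcc t u) := fun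 v hv => by
    dsimp only
    rw [Set.uIcc_of_le h] at hv
    rw [min_eq_left hv.1, max_eq_right hv.1, KZ_eq_Klo hv.2]
    unfold P2 Klo; ring
  have hC : Set.EqOn (fun v => P2 (min t v) (max t v) * KZ v u) (fun v : ℝ => ((2/189) + (-1/108) * t + (-5/108) * t ^ 2 + (4/27) * t ^ 3 + (-1/9) * t ^ 4) * v ^ 0 + ((-31/756) + (-2/63) * u + (2/63) * u ^ 2 + (7/180) * t + (1/36) * t * u + (-1/36) * t * u ^ 2 + (53/180) * t ^ 2 + (5/36) * t ^ 2 * u + (-5/36) * t ^ 2 * u ^ 2 + (-5/6) * t ^ 3 + (-4/9) * t ^ 3 * u + (4/9) * t ^ 3 * u ^ 2 + (17/36) * t ^ 4 + (1/3) * t ^ 4 * u + (-1/3) * t ^ 4 * u ^ 2 + (2/9) * t ^ 5 + (-2/27) * t ^ 6) * v ^ 1 + ((17/378) + (5/84) * u + (-5/84) * u ^ 2 + (-1/10) * t + (-11/180) * t * u + (11/180) * t * u ^ 2 + (-16/15) * t ^ 2 + (-109/180) * t ^ 2 * u + (109/180) * t ^ 2 * u ^ 2 + (26/9) * t ^ 3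 + (29/18) * t ^ 3 * u + (-29/18) * t ^ 3 * u ^ 2 + (-14/9) * t ^ 4 + (-3/4) * t ^ 4 * u + (3/4) * t ^ 4 * u ^ 2 + (-8/9) * t ^ 5 + (-2/3) * t ^ 5 * u + (2/3) * t ^ 5 * u ^ 2 + (8/27) * t ^ 6 + (2/9) * t ^ 6 * u + (-2/9) * t ^ 6 * u ^ 2) * v ^ 2 + ((185/756) + (1/9) * u + (-1/9) * u ^ 2 + (26/135) * t + (1/15) * t * u + (-1/15) * t * u ^ 2 + (304/135) * t ^ 2 + (43/30) * t ^ 2 * u + (-43/30) * t ^ 2 * u ^ 2 + (-325/54) * t ^ 3 + (-11/3) * t ^ 3 * u + (11/3) * t ^ 3 * u ^ 2 + (113/36) * t ^ 4 + (11/6) * t ^ 4 * u + (-11/6) * t ^ 4 * u ^ 2 + 2 * t ^ 5 + (4/3) * t ^ 5 * u + (-4/3) * t ^ 5 * u ^ 2 + (-2/3) * t ^ 6 + (-4/9) * t ^ 6 * u + (4/9) * t ^ 6 * u ^ 2) * v ^ 3 + ((-32/27) + (-3/4) * u + (3/4) * u ^ 2 + (-17/36) * t + (-1/5) * t * u + (1/5)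 * t * u ^ 2 + (-103/36) * t ^ 2 + (-22/15) * t ^ 2 * u + (22/15) * t ^ 2 * u ^ 2 + (25/3) * t ^ 3 + (77/18) * t ^ 3 * u + (-77/18) * t ^ 3 * u ^ 2 + (-85/18) * t ^ 4 + (-11/4) * t ^ 4 * u + (11/4) * t ^ 4 * u ^ 2 + (-20/9) * t ^ 5 + (-2/3) * t ^ 5 * u + (2/3) * t ^ 5 * u ^ 2 + (20/27) * t ^ 6 + (2/9) * t ^ 6 * u + (-2/9) * t ^ 6 * u ^ 2) * v ^ 4 + ((74/27) + (29/18) * u + (-29/18) * u ^ 2 + (71/60) * t + (3/4) * t * u + (-3/4) * t * u ^ 2 + (89/60) * t ^ 2 + (-1/12) * t ^ 2 * u + (1/12) * t ^ 2 * u ^ 2 + (-62/9) * t ^ 3 + (-16/9) * t ^ 3 * u + (16/9) * t ^ 3 * u ^ 2 + (41/9) * t ^ 4 + (4/3) * t ^ 4 * u + (-4/3) * t ^ 4 * u ^ 2 + (8/9) * t ^ 5 + (-8/27) * t ^ 6) * v ^ 5 + ((-109/27) + (-2) * u + 2 * u ^ 2 + (-115/54) * t + (-5/4) * t * u + (5/4)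 * t * u ^ 2 + (67/54) * t ^ 2 + (5/4) * t ^ 2 * u + (-5/4) * t ^ 2 * u ^ 2 + (64/27) * t ^ 3 + (-16/9) * t ^ 4) * v ^ 6 + ((256/63) + (5/3) * u + (-5/3) * u ^ 2 + (7/3) * t + (8/9) * t * u + (-8/9) * t * u ^ 2 + (-7/3) * t ^ 2 + (-8/9) * t ^ 2 * u + (8/9) * t ^ 2 * u ^ 2) * v ^ 7 + ((-20/7) + (-6/7) * u + (6/7) * u ^ 2 + (-4/3) * t + (-2/9) * t * u + (2/9) * t * u ^ 2 + (4/3) * t ^ 2 + (2/9) * t ^ 2 * u + (-2/9) * t ^ 2 * u ^ 2) * v ^ 8 + ((80/63) + (4/21) * u + (-4/21) * u ^ 2 + (8/27) * t + (-8/27) * t ^ 2) * v ^ 9 + ((-16/63)) * v ^ 10 + (0) * v ^ 11 + (0) * v ^ 12 + (0) * v ^ 13 + (0) * v ^ 14 + (0) * v ^ 15 + (0) * v ^ 16) (Set.uIcc u 1) := fun v hv => by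
    dsimp only
    rw [Set.uIcc_of_le hu1] at hv
    rw [min_eq_left (h.trans hv.1), max_eq_right (h.trans hv.1), KZ_eq_Klo' hv.1]
    unfold P2 Klo; ring
  rw [e3, step1, ioo01, ← intervalIntegral.integral_add_adjacent_intervals (hi 0 t) (hi t 1),
    ← intervalIntegral.integral_add_adjacent_intervals (hi t u) (hi u 1),
    intervalIntegral.integral_congr hA, intervalIntegral.integral_congr hB,
    intervalIntegral.integral_congr hC, pint, pint, pint]
  unfold P3; ring

lemma K4_eq {t : ℝ} (ht : t ∈ Ioo (0:ℝ) 1) : Kiter 4 t t = P4 t := by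
  have h0t : (0:ℝ) ≤ t := ht.1.le
  have ht1 : t ≤ 1 := ht.2.le
  have e4 : Kiter 4 t t = ∫ u in Ioo (0:ℝ) 1, Kiter 3 t u * KZ u t := rfl
  have step1 : (∫ u in Ioo (0:ℝ) 1, Kiter 3 t u * KZ u t)
      = ∫ u in Ioo (0:ℝ) 1, P3 (max t u) (min t u) * KZ u t :=
    setIntegral_congr_fun measurableSet_Ioo (fun u hu => by
      rcases le_total u t with hut | htu
      · rw [K3_le ht hu hut, max_eq_left hut, min_eq_right hut]
      · rw [K3_ge ht hu htu, max_eq_right htu, min_eq_left htu])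
  have hi : ∀ a b : ℝ, IntervalIntegrable (fun u => P3 (max t u) (min t u) * KZ u t) volume a b :=
    fun a b => (by unfold P3 KZ; fun_prop : Continuous fun u : ℝ => P3 (max t u) (min t u) * KZ u t).intervalIntegrable a b
  have hA : Set.EqOn (fun u => P3 (max t u) (min t u) * KZ u t) (fun u : ℝ => ((1823/1496880) + (-113/23760) * t + (229/35640) * t ^ 2 + (3131/187110) * t ^ 3 + (-239/3024) * t ^ 4 + (5711/45360) * t ^ 5 + (-643/34020) * t ^ 6 + (-389/1260) * t ^ 7 + (1319/1890) * t ^ 8 + (-1543/1701) * t ^ 9 + (223/270) * t ^ 10 + (-634/1155) * t ^ 11 + (26/99) * t ^ 12 + (-8/99) * t ^ 13 + (8/693) * t ^ 14) * u ^ 0 + ((-5/4536) + (4973/7484400) * t + (6973/7484400) * t ^ 2 + (-67/12600) * t ^ 3 + (1121/68040) * t ^ 4 + (-51743/680400) * t ^ 5 + (1121/5040) * t ^ 6 + (-1238/2835) * t ^ 7 + (15583/22680) * t ^ 8 + (-19169/22680) * t ^ 9 + (319/420) * t ^ 10 + (-146/315) * t ^ 11 + (247/1485) * t ^ 12 + (-38/1485)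 * t ^ 13) * u ^ 1 + ((-19/4536) + (173227/7484400) * t + (-222727/7484400) * t ^ 2 + (-14159/113400) * t ^ 3 + (107089/170100) * t ^ 4 + (-941767/680400) * t ^ 5 + (28333/15120) * t ^ 6 + (-1361/810) * t ^ 7 + (731/810) * t ^ 8 + (-79/5670) * t ^ 9 + (-379/840) * t ^ 10 + (122/315) * t ^ 11 + (-1597/10395) * t ^ 12 + (38/1485) * t ^ 13) * u ^ 2 + ((71/4536) + (-1177/22680) * t + (2251/37800) * t ^ 2 + (14417/56700) * t ^ 3 + (-5828/4725) * t ^ 4 + (9173/3240) * t ^ 5 + (-251/60) * t ^ 6 + (4126/945) * t ^ 7 + (-13157/3780) * t ^ 8 + (647/324) * t ^ 9 + (-2651/3780) * t ^ 10 + (16/105) * t ^ 11 + (-8/315) * t ^ 12) * u ^ 3 + ((-103/9072) + (-17/720) * t + (12121/113400) * t ^ 2 + (-817/5400) * t ^ 3 + (-22843/226800) * t ^ 4 + (1007/2160) * t ^ 5 + (-829/1620) * t ^ 6 + (151/1260) * t ^ 7 + (593/840) * t ^ 8 + (-4409/4536) * t ^ 9 + (1097/2520) * t ^ 10 + (-8/105)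 * t ^ 11 + (4/315) * t ^ 12) * u ^ 4 + ((-13/810) + (401/2160) * t + (-373/720) * t ^ 2 + (397/810) * t ^ 3 + (101/135) * t ^ 4 + (-6449/2160) * t ^ 5 + (31061/6480) * t ^ 6 + (-43/9) * t ^ 7 + (49/18) * t ^ 8 + (-52/81) * t ^ 9) * u ^ 5 + ((47/1215) + (-9343/45360) * t + (8957/15120) * t ^ 2 + (-2119/2430) * t ^ 3 + (2867/3240) * t ^ 4 + (-1369/2160) * t ^ 5 + (-5033/19440) * t ^ 6 + (29/27) * t ^ 7 + (-331/378) * t ^ 8 + (436/1701) * t ^ 9) * u ^ 6 + ((-32/945) + (2/567) * t + (433/5670) * t ^ 2 + (-113/315) * t ^ 3 + (-41/1890) * t ^ 4 + (1318/945) * t ^ 5 + (-1562/945) * t ^ 6 + (64/81) * t ^ 7 + (-16/81) * t ^ 8) * u ^ 7 + ((1/90) + (863/4536) * t + (-2957/4536) * t ^ 2 + (11771/7560) * t ^ 3 + (-4451/2520) * t ^ 4 + (37/105) * t ^ 5 + (41/90) * t ^ 6 + (-16/81) * t ^ 7 + (4/81) * t ^ 8) * u ^ 8 + ((-59/378) *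 t + (605/1512) * t ^ 2 + (-241/252) * t ^ 3 + (2021/1512) * t ^ 4 + (-118/189) * t ^ 5) * u ^ 9 + ((71/1890) * t + (47/1512) * t ^ 2 + (-31/1260) * t ^ 3 + (-1469/7560) * t ^ 4 + (142/945) * t ^ 5) * u ^ 10 + ((-8/105) * t ^ 2 + (16/105) * t ^ 3 + (-8/105) * t ^ 4) * u ^ 11 + ((4/315) * t ^ 2 + (-8/315) * t ^ 3 + (4/315) * t ^ 4) * u ^ 12 + (0) * u ^ 13 + (0) * u ^ 14 + (0) * u ^ 15 + (0) * u ^ 16) (Set.uIcc 0 t) := fun u hu => by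
    dsimp only
    rw [Set.uIcc_of_le h0t] at hu
    rw [max_eq_left hu.2, min_eq_right hu.2, KZ_eq_Klo hu.2]
    unfold P3 Klo; ring
  have hB : Set.EqOn (fun u => P3 (max t u) (min t u) * KZ u t) (fun u : ℝ => ((1823/1496880) + (-5/4536) * t + (-19/4536) * t ^ 2 + (71/4536) * t ^ 3 + (-103/9072) * t ^ 4 + (-13/810) * t ^ 5 + (47/1215) * t ^ 6 + (-32/945) * t ^ 7 + (1/90) * t ^ 8) * u ^ 0 + ((-113/23760) + (4973/7484400) * t + (173227/7484400) * t ^ 2 + (-1177/22680) * t ^ 3 + (-17/720) * t ^ 4 + (401/2160) * t ^ 5 + (-9343/45360) * t ^ 6 + (2/567) * t ^ 7 + (863/4536) * t ^ 8 + (-59/378) * t ^ 9 + (71/1890) * t ^ 10) * u ^ 1 + ((229/35640) + (6973/7484400) * t + (-222727/7484400) * t ^ 2 + (2251/37800) * t ^ 3 + (12121/113400) * t ^ 4 + (-373/720) * t ^ 5 + (8957/15120) * t ^ 6 + (433/5670) * t ^ 7 + (-2957/4536) * t ^ 8 + (605/1512) * t ^ 9 + (47/1512) * t ^ 10 + (-8/105)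 * t ^ 11 + (4/315) * t ^ 12) * u ^ 2 + ((3131/187110) + (-67/12600) * t + (-14159/113400) * t ^ 2 + (14417/56700) * t ^ 3 + (-817/5400) * t ^ 4 + (397/810) * t ^ 5 + (-2119/2430) * t ^ 6 + (-113/315) * t ^ 7 + (11771/7560) * t ^ 8 + (-241/252) * t ^ 9 + (-31/1260) * t ^ 10 + (16/105) * t ^ 11 + (-8/315) * t ^ 12) * u ^ 3 + ((-239/3024) + (1121/68040) * t + (107089/170100) * t ^ 2 + (-5828/4725) * t ^ 3 + (-22843/226800) * t ^ 4 + (101/135) * t ^ 5 + (2867/3240) * t ^ 6 + (-41/1890) * t ^ 7 + (-4451/2520) * t ^ 8 + (2021/1512) * t ^ 9 + (-1469/7560) * t ^ 10 + (-8/105) * t ^ 11 + (4/315) * t ^ 12) * u ^ 4 + ((5711/45360) + (-51743/680400) * t + (-941767/680400) * t ^ 2 + (9173/3240) * t ^ 3 + (1007/2160) * t ^ 4 + (-6449/2160) * t ^ 5 + (-1369/2160) * t ^ 6 + (1318/945) * t ^ 7 + (37/105) * t ^ 8 + (-118/189) * t ^ 9 + (142/945) * t ^ 10) * u ^ 5 +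 ((-643/34020) + (1121/5040) * t + (28333/15120) * t ^ 2 + (-251/60) * t ^ 3 + (-829/1620) * t ^ 4 + (31061/6480) * t ^ 5 + (-5033/19440) * t ^ 6 + (-1562/945) * t ^ 7 + (41/90) * t ^ 8) * u ^ 6 + ((-389/1260) + (-1238/2835) * t + (-1361/810) * t ^ 2 + (4126/945) * t ^ 3 + (151/1260) * t ^ 4 + (-43/9) * t ^ 5 + (29/27) * t ^ 6 + (64/81) * t ^ 7 + (-16/81) * t ^ 8) * u ^ 7 + ((1319/1890) + (15583/22680) * t + (731/810) * t ^ 2 + (-13157/3780) * t ^ 3 + (593/840) * t ^ 4 + (49/18) * t ^ 5 + (-331/378) * t ^ 6 + (-16/81) * t ^ 7 + (4/81) * t ^ 8) * u ^ 8 + ((-1543/1701) + (-19169/22680) * t + (-79/5670) * t ^ 2 + (647/324) * t ^ 3 + (-4409/4536) * t ^ 4 + (-52/81) * t ^ 5 + (436/1701) * t ^ 6) * u ^ 9 + ((223/270) + (319/420) * t + (-379/840) * t ^ 2 + (-2651/3780) * t ^ 3 + (1097/2520) * t ^ 4) * u ^ 10 + ((-634/1155) + (-146/315) * t + (122/315)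 * t ^ 2 + (16/105) * t ^ 3 + (-8/105) * t ^ 4) * u ^ 11 + ((26/99) + (247/1485) * t + (-1597/10395) * t ^ 2 + (-8/315) * t ^ 3 + (4/315) * t ^ 4) * u ^ 12 + ((-8/99) + (-38/1485) * t + (38/1485) * t ^ 2) * u ^ 13 + ((8/693)) * u ^ 14 + (0) * u ^ 15 + (0) * u ^ 16) (Set.uIcc t 1) := fun u hu => by
    dsimp only
    rw [Set.uIcc_of_le ht1] at hu
    rw [max_eq_right hu.1, min_eq_left hu.1, KZ_eq_Klo' hu.1]
    unfold P3 Klo; ring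
  rw [e4, step1, ioo01, ← intervalIntegral.integral_add_adjacent_intervals (hi 0 t) (hi t 1),
    intervalIntegral.integral_congr hA, intervalIntegral.integral_congr hB, pint, pint]
  unfold P4; ring

/-- **Fourth cumulant of the limit distribution**:
`κ₄ = 2³·3!·∫₀¹ K₄(t,t) dt = 200311667/23260111875`. -/
theorem fourth_cumulant_limit :
    (2 : ℝ) ^ 3 * (Nat.factorial 3 : ℝ) * ∫ t in Set.Ioo (0 : ℝ) 1, Kiter 4 t t
      = 200311667 / 23260111875 := by
  have h : ∫ t in Ioo (0:ℝ) 1, Kiter 4 t t = ∫ t in Ioo (0:ℝ) 1, P4 t :=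
    setIntegral_congr_fun measurableSet_Ioo (fun t ht => K4_eq ht)
  have hE : Set.EqOn (fun t : ℝ => P4 t) (fun t : ℝ => ((2953/6985440)) * t ^ 0 + ((-4381/5715360)) * t ^ 1 + ((-25942517/10216206000)) * t ^ 2 + ((6546479/486486000)) * t ^ 3 + ((-4336823/324324000)) * t ^ 4 + ((-719/18900)) * t ^ 5 + ((86453/680400)) * t ^ 6 + ((-674587/7144200)) * t ^ 7 + ((-1046813/4082400)) * t ^ 8 + ((235169/272160)) * t ^ 9 + ((-203237/151200)) * t ^ 10 + ((1657639/1247400)) * t ^ 11 + ((-923647/1069200)) * t ^ 12 + ((8431/24948)) * t ^ 13 + ((-13669/291060)) * t ^ 14 + ((-256/14553)) * t ^ 15 + ((1376/218295)) * t ^ 16) (Set.uIcc 0 1) := fun t _ => by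
    dsimp only
    unfold P4; ring
  rw [h, ioo01, intervalIntegral.integral_congr hE, pint]
  norm_num [Nat.factorial]
end

section
/- Let U be a random variable taking values in (0,1) and define Δ = ∫₀¹ | 2·E[U·1{U ≥ t}] − P(U ≥ t) − t(1−t) |² dt. Then Δ = 0 if and only if U is uniformly distributed on (0,1), and Δ > 0 otherwise. -/
open MeasureTheory Set Filter Topology
open scoped ENNReal NNReal

noncomputable section
namespace DeltaUniform

lemma ae_mem_of_compl {μ : Measure ℝ} (hs : μ (Set.Ioo (0:ℝ) 1)ᶜ = 0) :
    ∀ᵐ u ∂μ, u ∈ Set.Ioo (0:ℝ) 1 := by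
  rw [MeasureTheory.ae_iff]
  exact hs

lemma integrable_bdd {μ : Measure ℝ} [IsFiniteMeasure μ] (hs : μ (Set.Ioo (0:ℝ) 1)ᶜ = 0)
    {f : ℝ → ℝ} (hf : Measurable f) (hb : ∀ u ∈ Set.Ioo (0:ℝ) 1, |f u| ≤ 1) :
    Integrable f μ := by
  refine (integrable_const (1:ℝ)).mono' hf.aestronglyMeasurable ?_
  filter_upwards [ae_mem_of_compl hs] with u hu
  simpa [Real.norm_eq_abs] using hb u hu

lemma integrable_two_sub {μ : Measure ℝ} [IsFiniteMeasure μ]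
    (hs : μ (Set.Ioo (0:ℝ) 1)ᶜ = 0) : Integrable (fun u : ℝ => 2*u - 1) μ :=
  integrable_bdd hs (by fun_prop) (fun u hu => by
    rw [abs_le]; constructor <;> nlinarith [hu.1, hu.2])

lemma integrable_id' {μ : Measure ℝ} [IsFiniteMeasure μ]
    (hs : μ (Set.Ioo (0:ℝ) 1)ᶜ = 0) : Integrable (fun u : ℝ => u) μ :=
  integrable_bdd hs measurable_id (fun u hu => by
    rw [abs_le]; constructor <;> nlinarith [hu.1, hu.2])

lemma F_eq (μ : Measure ℝ) [IsFiniteMeasure μ] (hs : μ (Set.Ioo (0:ℝ) 1)ᶜ = 0) (t : ℝ) :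
    ∫ u in Set.Ici t, (2*u - 1) ∂μ
      = 2 * (∫ u in Set.Ici t, u ∂μ) - (μ (Set.Ici t)).toReal := by
  have h1 : Integrable (fun u : ℝ => 2*u) (μ.restrict (Set.Ici t)) :=
    ((integrable_id' hs).const_mul 2).restrict
  rw [integral_sub h1 (integrable_const 1), integral_const_mul, setIntegral_const]
  simp [Measure.real]

lemma uniform_F (t : ℝ) (ht : t ∈ Set.Ioo (0:ℝ) 1) :
    ∫ u in Set.Ici t, (2*u - 1) ∂(volume.restrict (Set.Ioo (0:ℝ) 1)) = t - t^2 := by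
  rw [Measure.restrict_restrict measurableSet_Ici]
  have h1 : Set.Ici t ∩ Set.Ioo (0:ℝ) 1 = Set.Ico t 1 := by
    ext x
    simp only [Set.mem_inter_iff, Set.mem_Ici, Set.mem_Ioo, Set.mem_Ico]
    constructor
    · rintro ⟨h, _, h2⟩; exact ⟨h, h2⟩
    · rintro ⟨h, h2⟩; exact ⟨h, lt_of_lt_of_le ht.1 h, h2⟩
  rw [h1, MeasureTheory.integral_Ico_eq_integral_Ioo,
    ← MeasureTheory.integral_Ioc_eq_integral_Ioo,
    ← intervalIntegral.integral_of_le ht.2.le,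
    intervalIntegral.integral_sub ((by fun_prop : Continuous fun x : ℝ => 2*x).intervalIntegrable _ _)
      intervalIntegrable_const,
    intervalIntegral.integral_const_mul]
  simp only [integral_id, intervalIntegral.integral_const, smul_eq_mul]
  ring


def fplus : ℝ → ℝ≥0∞ := fun u => ENNReal.ofReal (2*u - 1)
def fminus : ℝ → ℝ≥0∞ := fun u => ENNReal.ofReal (1 - 2*u)

lemma fplus_meas : Measurable fplus :=
  ((measurable_id.const_mul 2).sub_const 1).ennreal_ofReal

lemma fminus_meas : Measurable fminus :=
  (measurable_const.sub (measurable_id.const_mul 2)).ennreal_ofReal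

lemma ae_mem_of_compl' {μ : Measure ℝ} (hs : μ (Set.Ioo (0:ℝ) 1)ᶜ = 0) :
    ∀ᵐ u ∂μ, u ∈ Set.Ioo (0:ℝ) 1 := by
  rw [MeasureTheory.ae_iff]; exact hs

lemma fin_wd (μ : Measure ℝ) [IsFiniteMeasure μ] (hs : μ (Set.Ioo (0:ℝ) 1)ᶜ = 0)
    {f : ℝ → ℝ≥0∞} (hb : ∀ u ∈ Set.Ioo (0:ℝ) 1, f u ≤ 1) :
    IsFiniteMeasure (μ.withDensity f) := by
  constructor
  rw [withDensity_apply _ MeasurableSet.univ, Measure.restrict_univ]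
  calc ∫⁻ u, f u ∂μ ≤ ∫⁻ _, 1 ∂μ := lintegral_mono_ae ((ae_mem_of_compl' hs).mono hb)
    _ = μ univ := lintegral_one
    _ < ⊤ := measure_lt_top μ _

lemma wd_null (μ : Measure ℝ) (hs : μ (Set.Ioo (0:ℝ) 1)ᶜ = 0) (f : ℝ → ℝ≥0∞)
    {S : Set ℝ} (hS : S ⊆ (Set.Ioo (0:ℝ) 1)ᶜ) : (μ.withDensity f) S = 0 :=
  (withDensity_absolutelyContinuous μ f) (measure_mono_null hS hs)

lemma restrict_eq_of_wd {μ ν : Measure ℝ} {f : ℝ → ℝ≥0∞} (hf : Measurable f) {S : Set ℝ}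
    (hS : MeasurableSet S) (hfS : ∀ u ∈ S, f u ≠ 0 ∧ f u ≠ ∞)
    (h : μ.withDensity f = ν.withDensity f) : μ.restrict S = ν.restrict S := by
  have hrw : ∀ κ : Measure ℝ, ((κ.restrict S).withDensity f).withDensity f⁻¹ = κ.restrict S := by
    intro κ
    have hae : (f * fun x => (f x)⁻¹) =ᵐ[κ.restrict S] (1 : ℝ → ℝ≥0∞) := by
      filter_upwards [ae_restrict_mem hS] with u hu
      show f u * (f u)⁻¹ = 1
      exact ENNReal.mul_inv_cancel (hfS u hu).1 (hfS u hu).2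
    rw [show (f⁻¹ : ℝ → ℝ≥0∞) = fun x => (f x)⁻¹ from rfl,
      ← withDensity_mul _ (g := fun x => (f x)⁻¹) hf hf.inv, withDensity_congr_ae hae]
    exact withDensity_one
  have hmid : (μ.restrict S).withDensity f = (ν.restrict S).withDensity f := by
    rw [← restrict_withDensity hS, ← restrict_withDensity hS, h]
  calc μ.restrict S = ((μ.restrict S).withDensity f).withDensity f⁻¹ := (hrw μ).symm
    _ = ((ν.restrict S).withDensity f).withDensity f⁻¹ := by rw [hmid]
    _ = ν.restrict S := hrw ν

lemma tendsto_inv_nat_add (c : ℝ) : Tendsto (fun n : ℕ => c/(n+2)) atTop (𝓝 0) := by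
  have h2 : Tendsto (fun n : ℕ => (n:ℝ)+2) atTop atTop :=
    tendsto_atTop_add_const_right _ 2 tendsto_natCast_atTop_atTop
  exact Tendsto.div_atTop tendsto_const_nhds h2

lemma setIntegral_Ici_tendsto (μ : Measure ℝ) [IsFiniteMeasure μ]
    (hs : μ (Set.Ioo (0:ℝ) 1)ᶜ = 0)
    {x : ℕ → ℝ} {T : Set ℝ} (hT : MeasurableSet T)
    (hlim : ∀ᵐ u ∂μ, Tendsto (fun n => (Set.Ici (x n)).indicator (fun v => 2*v - 1) u) atTop
        (𝓝 (T.indicator (fun v => 2*v - 1) u))) :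
    Tendsto (fun n => ∫ u in Set.Ici (x n), (2*u - 1) ∂μ) atTop
      (𝓝 (∫ u in T, (2*u - 1) ∂μ)) := by
  simp_rw [← integral_indicator measurableSet_Ici, ← integral_indicator hT]
  exact tendsto_integral_of_dominated_convergence (fun u => |2*u - 1|)
    (fun n => (((by fun_prop : Measurable fun v:ℝ => 2*v - 1).indicator
        measurableSet_Ici).aestronglyMeasurable))
    (integrable_two_sub hs).abs
    (fun n => Eventually.of_forall fun u => by
      simpa [Real.norm_eq_abs] using norm_indicator_le_norm_self (fun v:ℝ => 2*v - 1) u)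
    hlim

lemma plus_Ici (μ : Measure ℝ) [IsProbabilityMeasure μ]
    (hs : μ (Set.Ioo (0:ℝ) 1)ᶜ = 0)
    (hF : ∀ t ∈ Set.Ioo (0:ℝ) 1, ∫ u in Set.Ici t, (2*u - 1) ∂μ = t - t^2)
    {t : ℝ} (ht : t ∈ Set.Ioo (1/2:ℝ) 1) :
    (μ.withDensity fplus) (Set.Ici t) = ENNReal.ofReal (t - t^2) := by
  rw [withDensity_apply _ measurableSet_Ici]
  simp only [fplus]
  have h0 : (0:ℝ) < t := lt_trans (by norm_num) ht.1
  have hnn : 0 ≤ᵐ[μ.restrict (Set.Ici t)] fun u => 2*u - 1 :=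
    ae_restrict_of_forall_mem measurableSet_Ici fun u hu => by
      have h1 := mem_Ici.mp hu; have h2 := ht.1
      simp only [Pi.zero_apply]; linarith
  rw [← ofReal_integral_eq_lintegral_ofReal ((integrable_two_sub hs).restrict) hnn,
    hF t ⟨h0, ht.2⟩]

lemma plus_Iic (μ : Measure ℝ) : (μ.withDensity fplus) (Set.Iic (1/2:ℝ)) = 0 := by
  rw [withDensity_apply _ measurableSet_Iic]
  have h : ∀ᵐ u ∂μ, u ∈ Set.Iic (1/2:ℝ) → fplus u = (fun _ => (0:ℝ≥0∞)) u :=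
    ae_of_all _ fun u hu => by
      simp only [fplus]; rw [ENNReal.ofReal_eq_zero]
      have := mem_Iic.mp hu; linarith
  rw [setLIntegral_congr_fun_ae measurableSet_Iic h, lintegral_zero]

lemma minus_Ici (μ : Measure ℝ) : (μ.withDensity fminus) (Set.Ici (1/2:ℝ)) = 0 := by
  rw [withDensity_apply _ measurableSet_Ici]
  have h : ∀ᵐ u ∂μ, u ∈ Set.Ici (1/2:ℝ) → fminus u = (fun _ => (0:ℝ≥0∞)) u :=
    ae_of_all _ fun u hu => by
      simp only [fminus]; rw [ENNReal.ofReal_eq_zero]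
      have := mem_Ici.mp hu; linarith
  rw [setLIntegral_congr_fun_ae measurableSet_Ici h, lintegral_zero]

lemma plus_Ici_le (μ : Measure ℝ) {t : ℝ} (ht : t ≤ (1/2:ℝ)) :
    (μ.withDensity fplus) (Set.Ici t) = (μ.withDensity fplus) (Set.Ioi (1/2:ℝ)) := by
  have h1 := measure_inter_add_diff (μ := μ.withDensity fplus) (Set.Ici t)
    (measurableSet_Iic : MeasurableSet (Set.Iic (1/2:ℝ)))
  have h2 : (μ.withDensity fplus) (Set.Ici t ∩ Set.Iic (1/2:ℝ)) = 0 :=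
    measure_mono_null inter_subset_right (plus_Iic μ)
  have h3 : Set.Ici t \ Set.Iic (1/2:ℝ) = Set.Ioi (1/2:ℝ) := by
    rw [diff_eq, compl_Iic]; ext x
    simp only [mem_inter_iff, mem_Ici, mem_Ioi]
    exact ⟨fun h => h.2, fun h => ⟨le_trans ht h.le, h⟩⟩
  rw [← h1, h2, h3, zero_add]

lemma plus_Ioi (μ : Measure ℝ) [IsProbabilityMeasure μ]
    (hs : μ (Set.Ioo (0:ℝ) 1)ᶜ = 0)
    (hF : ∀ t ∈ Set.Ioo (0:ℝ) 1, ∫ u in Set.Ici t, (2*u - 1) ∂μ = t - t^2) :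
    (μ.withDensity fplus) (Set.Ioi (1/2:ℝ)) = ENNReal.ofReal (4⁻¹) := by
  set q : ℕ → ℝ := fun n => 1/2 + (1/2)/(n+2) with hq
  have hq1 : ∀ n, q n ∈ Set.Ioo (1/2:ℝ) 1 := by
    intro n
    have hp : (0:ℝ) < (1/2)/(n+2) := by positivity
    have hu : ((1:ℝ)/2)/(n+2) ≤ 1/4 := by
      rw [div_le_iff₀ (by positivity)]
      nlinarith [Nat.cast_nonneg (α := ℝ) n]
    constructor
    · simp only [hq]; linarith
    · simp only [hq]; linarith
  have hmono : Monotone fun n => Set.Ici (q n) := by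
    intro n m hnm
    have hc : (n:ℝ) ≤ (m:ℝ) := Nat.cast_le.2 hnm
    apply Ici_subset_Ici.2
    simp only [hq]
    gcongr
  have hUnion : ⋃ n, Set.Ici (q n) = Set.Ioi (1/2:ℝ) := by
    ext u
    simp only [mem_iUnion, mem_Ici, mem_Ioi]
    constructor
    · rintro ⟨n, hn⟩; exact lt_of_lt_of_le (hq1 n).1 hn
    · intro hu
      obtain ⟨n, hn⟩ := exists_nat_one_div_lt (show (0:ℝ) < u - 1/2 by linarith)
      refine ⟨n, ?_⟩
      have hle : (1/2:ℝ)/(n+2) ≤ 1/(n+1) := by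
        rw [div_le_div_iff₀ (by positivity) (by positivity)]
        nlinarith [Nat.cast_nonneg (α := ℝ) n]
      simp only [hq]; linarith
  have h1 : Tendsto (fun n => (μ.withDensity fplus) (Set.Ici (q n))) atTop
      (𝓝 ((μ.withDensity fplus) (Set.Ioi (1/2:ℝ)))) := by
    have := tendsto_measure_iUnion_atTop (μ := μ.withDensity fplus) hmono
    rw [hUnion] at this
    exact this
  have h2 : Tendsto (fun n => (μ.withDensity fplus) (Set.Ici (q n))) atTop
      (𝓝 (ENNReal.ofReal (4⁻¹))) := by
    have he : (fun n => (μ.withDensity fplus) (Set.Ici (q n)))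
        = fun n => ENNReal.ofReal (q n - (q n)^2) :=
      funext fun n => plus_Ici μ hs hF (hq1 n)
    rw [he]
    apply ENNReal.tendsto_ofReal
    have hqt : Tendsto q atTop (𝓝 (1/2:ℝ)) := by
      rw [hq]
      simpa using tendsto_const_nhds.add (tendsto_inv_nat_add (1/2 : ℝ))
    have : ((4:ℝ)⁻¹) = 1/2 - (1/2)^2 := by norm_num
    rw [this]
    exact hqt.sub (hqt.pow 2)
  exact tendsto_nhds_unique h1 h2

lemma integral_two_sub_zero (μ : Measure ℝ) [IsProbabilityMeasure μ]
    (hs : μ (Set.Ioo (0:ℝ) 1)ᶜ = 0)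
    (hF : ∀ t ∈ Set.Ioo (0:ℝ) 1, ∫ u in Set.Ici t, (2*u - 1) ∂μ = t - t^2) :
    ∫ u, (2*u - 1) ∂μ = 0 := by
  set x : ℕ → ℝ := fun n => 1/(n+2) with hx
  have hx1 : ∀ n, x n ∈ Set.Ioo (0:ℝ) 1 := by
    intro n
    have h1 : (0:ℝ) < 1/(n+2) := by positivity
    have h2 : (1:ℝ)/(n+2) ≤ 1/2 := by
      rw [div_le_iff₀ (by positivity)]
      nlinarith [Nat.cast_nonneg (α := ℝ) n]
    exact ⟨h1, by simp only [hx]; linarith⟩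
  have hxt : Tendsto x atTop (𝓝 0) := by
    rw [hx]; exact tendsto_inv_nat_add 1
  have hDCT : Tendsto (fun n => ∫ u in Set.Ici (x n), (2*u - 1) ∂μ) atTop
      (𝓝 (∫ u, (2*u - 1) ∂μ)) := by
    have h := setIntegral_Ici_tendsto μ hs (x := x) (T := univ) MeasurableSet.univ ?_
    · rw [Measure.restrict_univ] at h; exact h
    · filter_upwards [ae_mem_of_compl' hs] with u hu
      have hev : ∀ᶠ n in atTop, x n < u := hxt.eventually_lt_const hu.1
      have : (Set.univ : Set ℝ).indicator (fun v => 2*v - 1) u = 2*u - 1 := by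
        simp
      rw [this]
      refine (tendsto_const_nhds (x := 2*u - 1)).congr' ?_
      filter_upwards [hev] with n hn
      exact (Set.indicator_of_mem (mem_Ici.2 hn.le) (fun v : ℝ => 2*v - 1)).symm
  have hval : Tendsto (fun n => ∫ u in Set.Ici (x n), (2*u - 1) ∂μ) atTop (𝓝 0) := by
    have he : (fun n => ∫ u in Set.Ici (x n), (2*u - 1) ∂μ)
        = fun n => x n - (x n)^2 := funext fun n => hF (x n) (hx1 n)
    rw [he]
    have := hxt.sub (hxt.pow 2)
    simpa using this
  exact tendsto_nhds_unique hDCT hval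

lemma integrable_one_sub {μ : Measure ℝ} [IsFiniteMeasure μ]
    (hs : μ (Set.Ioo (0:ℝ) 1)ᶜ = 0) : Integrable (fun u : ℝ => 1 - 2*u) μ :=
  ((integrable_two_sub hs).neg).congr (ae_of_all _ fun u => by simp only [Pi.neg_apply]; ring)

lemma minus_Iio (μ : Measure ℝ) [IsProbabilityMeasure μ]
    (hs : μ (Set.Ioo (0:ℝ) 1)ᶜ = 0)
    (hF : ∀ t ∈ Set.Ioo (0:ℝ) 1, ∫ u in Set.Ici t, (2*u - 1) ∂μ = t - t^2)
    {s : ℝ} (hs' : s ∈ Set.Ioc (0:ℝ) (1/2)) :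
    (μ.withDensity fminus) (Set.Iio s) = ENNReal.ofReal (s - s^2) := by
  have hneg : (fun u:ℝ => 1 - 2*u) = fun u => -(2*u - 1) := funext fun u => by ring
  have hC : ∫ u, (1 - 2*u) ∂μ = 0 := by
    rw [hneg, integral_neg, integral_two_sub_zero μ hs hF, neg_zero]
  have hIci : ∫ u in Set.Ici s, (1 - 2*u) ∂μ = -(s - s^2) := by
    rw [hneg, integral_neg, hF s ⟨hs'.1, by linarith [hs'.2]⟩]
  have hIio : ∫ u in Set.Iio s, (1 - 2*u) ∂μ = s - s^2 := by
    have h := integral_add_compl (measurableSet_Ici (a := s)) (integrable_one_sub (μ:=μ) hs)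
    rw [compl_Ici, hIci, hC] at h
    linarith
  rw [withDensity_apply _ measurableSet_Iio]
  simp only [fminus]
  have hnn : 0 ≤ᵐ[μ.restrict (Set.Iio s)] fun u => 1 - 2*u :=
    ae_restrict_of_forall_mem measurableSet_Iio fun u hu => by
      have h1 := mem_Iio.mp hu; have h2 := hs'.2
      simp only [Pi.zero_apply]; linarith
  rw [← ofReal_integral_eq_lintegral_ofReal ((integrable_one_sub hs).restrict) hnn, hIio]

lemma minus_Iic_ge (μ : Measure ℝ) [IsProbabilityMeasure μ]
    (hs : μ (Set.Ioo (0:ℝ) 1)ᶜ = 0)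
    (hF : ∀ t ∈ Set.Ioo (0:ℝ) 1, ∫ u in Set.Ici t, (2*u - 1) ∂μ = t - t^2)
    {t : ℝ} (ht : (1/2:ℝ) ≤ t) :
    (μ.withDensity fminus) (Set.Iic t) = ENNReal.ofReal (4⁻¹) := by
  have h1 : (μ.withDensity fminus) (Set.Iic t) + (μ.withDensity fminus) (Set.Ioi t)
      = (μ.withDensity fminus) univ := by
    have := measure_add_measure_compl (μ := μ.withDensity fminus)
      (measurableSet_Iic (a := t))
    rwa [compl_Iic] at this
  have h2 : (μ.withDensity fminus) (Set.Ioi t) = 0 :=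
    measure_mono_null (fun x hx => le_trans ht (le_of_lt hx)) (minus_Ici μ)
  have h3 : (μ.withDensity fminus) (Set.Iio (1/2:ℝ)) + (μ.withDensity fminus) (Set.Ici (1/2:ℝ))
      = (μ.withDensity fminus) univ := by
    have := measure_add_measure_compl (μ := μ.withDensity fminus)
      (measurableSet_Iio (a := (1/2:ℝ)))
    rwa [compl_Iio] at this
  rw [h2, add_zero] at h1
  rw [h1, ← h3, minus_Ici, add_zero,
    minus_Iio μ hs hF ⟨by norm_num, le_refl _⟩]
  congr 1
  norm_num

lemma minus_Iic_mid (μ : Measure ℝ) [IsProbabilityMeasure μ]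
    (hs : μ (Set.Ioo (0:ℝ) 1)ᶜ = 0)
    (hF : ∀ t ∈ Set.Ioo (0:ℝ) 1, ∫ u in Set.Ici t, (2*u - 1) ∂μ = t - t^2)
    {t : ℝ} (ht : t ∈ Set.Ioo (0:ℝ) (1/2)) :
    (μ.withDensity fminus) (Set.Iic t) = ENNReal.ofReal (t - t^2) := by
  haveI : IsFiniteMeasure (μ.withDensity fminus) := fin_wd μ hs (fun u hu => by
    simp only [fminus]
    exact ENNReal.ofReal_le_one.2 (by nlinarith [hu.1]))
  set sq : ℕ → ℝ := fun n => t + (1/2 - t)/(n+2) with hsq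
  have hpos : (0:ℝ) < 1/2 - t := by linarith [ht.2]
  have hsq1 : ∀ n, sq n ∈ Set.Ioc (0:ℝ) (1/2) := by
    intro n
    have h1 : (0:ℝ) < (1/2 - t)/(n+2) := by positivity
    have h2 : (1/2 - t)/(n+2) ≤ (1/2 - t)/2 := by
      gcongr
      exact_mod_cast Nat.le_add_left 2 n
    constructor
    · simp only [hsq]; linarith [ht.1]
    · simp only [hsq]; linarith
  have hanti : Antitone fun n => Set.Iio (sq n) := by
    intro n m hnm
    have hc : (n:ℝ) ≤ (m:ℝ) := Nat.cast_le.2 hnm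
    apply Iio_subset_Iio
    simp only [hsq]
    gcongr
  have hInter : ⋂ n, Set.Iio (sq n) = Set.Iic t := by
    ext u
    simp only [mem_iInter, mem_Iio, mem_Iic]
    constructor
    · intro h
      by_contra hc
      push_neg at hc
      obtain ⟨n, hn⟩ := exists_nat_one_div_lt
        (div_pos (by linarith : (0:ℝ) < u - t) hpos)
      have ha : (1/2 - t)/((n:ℝ)+2) ≤ (1/2 - t)/((n:ℝ)+1) := by
        gcongr
        linarith
      have hb : (1/2 - t)/((n:ℝ)+1) < u - t := by
        have hnpos : (0:ℝ) < (n:ℝ)+1 := by positivity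
        have hn' := (lt_div_iff₀ hpos).mp hn
        have hinv : (1/((n:ℝ)+1)) * ((n:ℝ)+1) = 1 := by field_simp
        rw [div_lt_iff₀ hnpos]
        nlinarith [hn', hinv, hnpos, hpos]
      have h5 : (1/2 - t)/((n:ℝ)+2) < u - t := lt_of_le_of_lt ha hb
      have := h n
      simp only [hsq] at this
      linarith
    · intro h n
      have : 0 < (1/2 - t)/(n+2) := by positivity
      simp only [hsq]; linarith
  have h1 : Tendsto (fun n => (μ.withDensity fminus) (Set.Iio (sq n))) atTop
      (𝓝 ((μ.withDensity fminus) (Set.Iic t))) := by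
    have := tendsto_measure_iInter_atTop (μ := μ.withDensity fminus)
      (fun n => measurableSet_Iio.nullMeasurableSet) hanti ⟨0, measure_ne_top _ _⟩
    rw [hInter] at this
    exact this
  have h2 : Tendsto (fun n => (μ.withDensity fminus) (Set.Iio (sq n))) atTop
      (𝓝 (ENNReal.ofReal (t - t^2))) := by
    have he : (fun n => (μ.withDensity fminus) (Set.Iio (sq n)))
        = fun n => ENNReal.ofReal (sq n - (sq n)^2) :=
      funext fun n => minus_Iio μ hs hF (hsq1 n)
    rw [he]
    apply ENNReal.tendsto_ofReal
    have hsqt : Tendsto sq atTop (𝓝 t) := by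
      rw [hsq]
      simpa using tendsto_const_nhds.add (tendsto_inv_nat_add (1/2 - t))
    simpa using hsqt.sub (hsqt.pow 2)
  exact tendsto_nhds_unique h1 h2

lemma lam_prob : IsProbabilityMeasure (volume.restrict (Set.Ioo (0:ℝ) 1)) := by
  constructor
  rw [Measure.restrict_apply_univ, Real.volume_Ioo]
  norm_num

lemma lam_compl : (volume.restrict (Set.Ioo (0:ℝ) 1)) (Set.Ioo (0:ℝ) 1)ᶜ = 0 := by
  rw [Measure.restrict_apply measurableSet_Ioo.compl]
  simp

lemma key (μ : Measure ℝ) [IsProbabilityMeasure μ]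
    (hs : μ (Set.Ioo (0:ℝ) 1)ᶜ = 0)
    (hF : ∀ t ∈ Set.Ioo (0:ℝ) 1, ∫ u in Set.Ici t, (2*u - 1) ∂μ = t - t^2) :
    μ = volume.restrict (Set.Ioo (0:ℝ) 1) := by
  set lam := volume.restrict (Set.Ioo (0:ℝ) 1) with hlam
  haveI : IsProbabilityMeasure lam := lam_prob
  have hslam : lam (Set.Ioo (0:ℝ) 1)ᶜ = 0 := lam_compl
  have hFlam : ∀ t ∈ Set.Ioo (0:ℝ) 1, ∫ u in Set.Ici t, (2*u - 1) ∂lam = t - t^2 :=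
    fun t ht => uniform_F t ht
  have hb_plus : ∀ (κ : Measure ℝ), κ (Set.Ioo (0:ℝ) 1)ᶜ = 0 →
      ∀ u ∈ Set.Ioo (0:ℝ) 1, fplus u ≤ 1 := fun κ _ u hu => by
    simp only [fplus]
    exact ENNReal.ofReal_le_one.2 (by nlinarith [hu.2])
  haveI hfinμp : IsFiniteMeasure (μ.withDensity fplus) :=
    fin_wd μ hs (hb_plus μ hs)
  haveI hfinlp : IsFiniteMeasure (lam.withDensity fplus) :=
    fin_wd lam hslam (hb_plus lam hslam)
  haveI hfinμm : IsFiniteMeasure (μ.withDensity fminus) := fin_wd μ hs (fun u hu => by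
    simp only [fminus]; exact ENNReal.ofReal_le_one.2 (by nlinarith [hu.1]))
  haveI hfinlm : IsFiniteMeasure (lam.withDensity fminus) := fin_wd lam hslam (fun u hu => by
    simp only [fminus]; exact ENNReal.ofReal_le_one.2 (by nlinarith [hu.1]))
  -- positive part
  have hplus : μ.withDensity fplus = lam.withDensity fplus := by
    refine Measure.ext_of_Ici _ _ (fun a => ?_)
    rcases le_or_gt a (1/2:ℝ) with hle | hgt
    · rw [plus_Ici_le μ hle, plus_Ici_le lam hle, plus_Ioi μ hs hF, plus_Ioi lam hslam hFlam]
    · rcases lt_or_ge a 1 with hlt | hge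
      · rw [plus_Ici μ hs hF ⟨hgt, hlt⟩, plus_Ici lam hslam hFlam ⟨hgt, hlt⟩]
      · have hsub : Set.Ici a ⊆ (Set.Ioo (0:ℝ) 1)ᶜ := fun x hx => by
          simp only [mem_compl_iff, mem_Ioo, not_and, not_lt]
          intro _
          exact le_trans hge (mem_Ici.mp hx)
        rw [wd_null μ hs fplus hsub, wd_null lam hslam fplus hsub]
  -- negative part
  have hminus : μ.withDensity fminus = lam.withDensity fminus := by
    refine Measure.ext_of_Iic _ _ (fun a => ?_)
    rcases le_or_gt a 0 with hle | hgt
    · have hsub : Set.Iic a ⊆ (Set.Ioo (0:ℝ) 1)ᶜ := fun x hx => by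
        simp only [mem_compl_iff, mem_Ioo, not_and, not_lt]
        intro h0
        exact absurd (lt_of_lt_of_le h0 (le_trans (mem_Iic.mp hx) hle)) (lt_irrefl 0)
      rw [wd_null μ hs fminus hsub, wd_null lam hslam fminus hsub]
    · rcases lt_or_ge a (1/2:ℝ) with hlt | hge
      · rw [minus_Iic_mid μ hs hF ⟨hgt, hlt⟩, minus_Iic_mid lam hslam hFlam ⟨hgt, hlt⟩]
      · rw [minus_Iic_ge μ hs hF hge, minus_Iic_ge lam hslam hFlam hge]
  -- invert densities on each half line
  have hIoi : μ.restrict (Set.Ioi (1/2:ℝ)) = lam.restrict (Set.Ioi (1/2:ℝ)) := by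
    refine restrict_eq_of_wd fplus_meas measurableSet_Ioi (fun u hu => ?_) hplus
    have hu' : (1/2:ℝ) < u := hu
    constructor
    · simp only [fplus, ne_eq, ENNReal.ofReal_eq_zero, not_le]; linarith
    · simp only [fplus]; exact ENNReal.ofReal_ne_top
  have hIio : μ.restrict (Set.Iio (1/2:ℝ)) = lam.restrict (Set.Iio (1/2:ℝ)) := by
    refine restrict_eq_of_wd fminus_meas measurableSet_Iio (fun u hu => ?_) hminus
    have hu' : u < (1/2:ℝ) := hu
    constructor
    · simp only [fminus, ne_eq, ENNReal.ofReal_eq_zero, not_le]; linarith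
    · simp only [fminus]; exact ENNReal.ofReal_ne_top
  -- values of lam on the half lines
  have hlamIio : lam (Set.Iio (1/2:ℝ)) = ENNReal.ofReal (1/2) := by
    rw [hlam, Measure.restrict_apply measurableSet_Iio]
    have : Set.Iio (1/2:ℝ) ∩ Set.Ioo (0:ℝ) 1 = Set.Ioo (0:ℝ) (1/2) := by
      ext x
      simp only [mem_inter_iff, mem_Iio, mem_Ioo]
      constructor
      · rintro ⟨h1, h2, _⟩; exact ⟨h2, h1⟩
      · rintro ⟨h1, h2⟩; exact ⟨h2, h1, by linarith⟩
    rw [this, Real.volume_Ioo]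
    norm_num
  have hlamIoi : lam (Set.Ioi (1/2:ℝ)) = ENNReal.ofReal (1/2) := by
    rw [hlam, Measure.restrict_apply measurableSet_Ioi]
    have : Set.Ioi (1/2:ℝ) ∩ Set.Ioo (0:ℝ) 1 = Set.Ioo (1/2:ℝ) 1 := by
      ext x
      simp only [mem_inter_iff, mem_Ioi, mem_Ioo]
      constructor
      · rintro ⟨h1, _, h3⟩; exact ⟨h1, h3⟩
      · rintro ⟨h1, h2⟩; exact ⟨h1, by linarith, h2⟩
    rw [this, Real.volume_Ioo]
    norm_num
  have hμIio : μ (Set.Iio (1/2:ℝ)) = ENNReal.ofReal (1/2) := by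
    rw [← Measure.restrict_apply_self, hIio, Measure.restrict_apply_self, hlamIio]
  have hμIoi : μ (Set.Ioi (1/2:ℝ)) = ENNReal.ofReal (1/2) := by
    rw [← Measure.restrict_apply_self, hIoi, Measure.restrict_apply_self, hlamIoi]
  -- no atom at 1/2
  have hpt : μ {(1/2:ℝ)} = 0 := by
    have e1 : μ (Set.Iio (1/2:ℝ)) + μ (Set.Ici (1/2:ℝ)) = 1 := by
      have := measure_add_measure_compl (μ := μ) (measurableSet_Iio (a := (1/2:ℝ)))
      rwa [compl_Iio, measure_univ] at this
    have e2 : μ (Set.Ici (1/2:ℝ)) = μ {(1/2:ℝ)} + μ (Set.Ioi (1/2:ℝ)) := by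
      rw [← Set.Ioi_insert, Set.insert_eq]
      exact measure_union (Set.disjoint_singleton_left.mpr (by simp)) measurableSet_Ioi
    rw [e2, hμIio, hμIoi] at e1
    have e3 : ENNReal.ofReal (1/2) + ((0:ℝ≥0∞) + ENNReal.ofReal (1/2)) = 1 := by
      rw [zero_add, ← ENNReal.ofReal_add (by norm_num) (by norm_num)]
      norm_num
    have e4 := e1.trans e3.symm
    have e5 := (ENNReal.add_right_inj ENNReal.ofReal_ne_top).mp e4
    exact (ENNReal.add_left_inj ENNReal.ofReal_ne_top).mp e5
  have hlampt : lam {(1/2:ℝ)} = 0 := by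
    rw [hlam, Measure.restrict_apply (measurableSet_singleton _)]
    exact measure_mono_null inter_subset_left (Real.volume_singleton)
  -- conclude
  refine Measure.ext fun s hsmeas => ?_
  have hdec : ∀ (κ : Measure ℝ), κ {(1/2:ℝ)} = 0 →
      κ s = κ.restrict (Set.Iio (1/2:ℝ)) s + κ.restrict (Set.Ioi (1/2:ℝ)) s := by
    intro κ h0
    rw [Measure.restrict_apply hsmeas, Measure.restrict_apply hsmeas]
    have e1 : κ (s ∩ Set.Iio (1/2:ℝ)) + κ (s \ Set.Iio (1/2:ℝ)) = κ s :=
      measure_inter_add_diff s measurableSet_Iio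
    have e2 : s \ Set.Iio (1/2:ℝ) = s ∩ Set.Ici (1/2:ℝ) := by
      rw [diff_eq, compl_Iio]
    have e3 : κ (s ∩ Set.Ici (1/2:ℝ)) = κ (s ∩ Set.Ioi (1/2:ℝ)) := by
      have e4 : κ ((s ∩ Set.Ici (1/2:ℝ)) ∩ Set.Ioi (1/2:ℝ))
          + κ ((s ∩ Set.Ici (1/2:ℝ)) \ Set.Ioi (1/2:ℝ)) = κ (s ∩ Set.Ici (1/2:ℝ)) :=
        measure_inter_add_diff _ measurableSet_Ioi
      have e5 : (s ∩ Set.Ici (1/2:ℝ)) ∩ Set.Ioi (1/2:ℝ) = s ∩ Set.Ioi (1/2:ℝ) := by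
        ext x
        simp only [mem_inter_iff, mem_Ici, mem_Ioi]
        exact ⟨fun h => ⟨h.1.1, h.2⟩, fun h => ⟨⟨h.1, h.2.le⟩, h.2⟩⟩
      have e6 : κ ((s ∩ Set.Ici (1/2:ℝ)) \ Set.Ioi (1/2:ℝ)) = 0 := by
        refine measure_mono_null (fun x hx => ?_) h0
        obtain ⟨⟨_, h1⟩, h2⟩ := hx
        simp only [mem_Ioi, not_lt] at h2
        simp only [mem_singleton_iff]
        exact le_antisymm h2 h1
      rw [e5, e6, add_zero] at e4
      exact e4.symm
    rw [← e1, e2, e3]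
  rw [hdec μ hpt, hdec lam hlampt, hIio, hIoi]
end DeltaUniform

open DeltaUniform

/-- **Consistency functional**: for a `(0,1)`-valued random variable `U`, the quantity
`Δ = ∫₀¹ |2·E[U·1{U ≥ t}] − P(U ≥ t) − t(1−t)|² dt` vanishes if and only if `U` is
uniformly distributed on `(0,1)`, and is strictly positive otherwise. -/
theorem Delta_eq_zero_iff_uniform
    {Ω : Type*} [MeasurableSpace Ω] (ℙ : Measure Ω) [IsProbabilityMeasure ℙ]
    (U : Ω → ℝ) (hU : Measurable U) (hrange : ∀ ω, U ω ∈ Set.Ioo (0 : ℝ) 1)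
    (Δ : ℝ)
    (hΔ : Δ = ∫ t in Set.Ioo (0 : ℝ) 1,
        |2 * (∫ ω in {ω | t ≤ U ω}, U ω ∂ℙ) - (ℙ {ω | t ≤ U ω}).toReal
          - t * (1 - t)| ^ 2) :
    (Δ = 0 ↔ ℙ.map U = volume.restrict (Set.Ioo (0 : ℝ) 1)) ∧
      (ℙ.map U ≠ volume.restrict (Set.Ioo (0 : ℝ) 1) → 0 < Δ) := by
  have hUae : AEMeasurable U ℙ := hU.aemeasurable
  set μ : Measure ℝ := ℙ.map U with hμdef
  haveI : IsProbabilityMeasure μ := Measure.isProbabilityMeasure_map hUae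
  have hs : μ (Set.Ioo (0:ℝ) 1)ᶜ = 0 := by
    rw [hμdef, Measure.map_apply hU measurableSet_Ioo.compl]
    have h : U ⁻¹' (Set.Ioo (0:ℝ) 1)ᶜ = ∅ := by
      ext ω; simp [hrange ω]
    rw [h]; exact measure_empty
  have hmap_int : ∀ t : ℝ, ∫ ω in {ω | t ≤ U ω}, U ω ∂ℙ = ∫ u in Set.Ici t, u ∂μ := by
    intro t
    rw [hμdef, setIntegral_map (f := fun u : ℝ => u) measurableSet_Ici aestronglyMeasurable_id hUae]
    rfl
  have hmap_meas : ∀ t : ℝ, ℙ {ω | t ≤ U ω} = μ (Set.Ici t) := by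
    intro t; rw [hμdef, Measure.map_apply hU measurableSet_Ici]; rfl
  have hΔ' : Δ = ∫ t in Set.Ioo (0:ℝ) 1,
      |(∫ u in Set.Ici t, (2*u - 1) ∂μ) - t*(1-t)|^2 := by
    rw [hΔ]
    refine integral_congr_ae (ae_of_all _ fun t => ?_)
    show |2 * (∫ ω in {ω | t ≤ U ω}, U ω ∂ℙ) - (ℙ {ω | t ≤ U ω}).toReal - t * (1 - t)| ^ 2
      = |(∫ u in Set.Ici t, (2*u - 1) ∂μ) - t*(1-t)|^2
    rw [hmap_int, hmap_meas, F_eq μ hs t]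
  have hforward : μ = volume.restrict (Set.Ioo (0:ℝ) 1) → Δ = 0 := by
    intro h
    rw [hΔ']
    have heq : Set.EqOn (fun t : ℝ => |(∫ u in Set.Ici t, (2*u - 1) ∂μ) - t*(1-t)|^2)
        (fun _ => (0:ℝ)) (Set.Ioo (0:ℝ) 1) := by
      intro t ht
      simp only
      rw [h, uniform_F t ht]
      have he : t - t^2 - t*(1-t) = 0 := by ring
      rw [he, abs_zero]
      norm_num
    rw [setIntegral_congr_fun measurableSet_Ioo heq]
    simp
  have hA : Antitone (fun t : ℝ => ∫ u in Set.Ici t, u ∂μ) := by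
    intro a b hab
    exact setIntegral_mono_set ((integrable_id' hs).integrableOn)
      (ae_restrict_of_ae ((ae_mem_of_compl' hs).mono (fun u hu => le_of_lt hu.1)))
      (HasSubset.Subset.eventuallyLE (Ici_subset_Ici.2 hab))
  have hB : Antitone (fun t : ℝ => (μ (Set.Ici t)).toReal) := by
    intro a b hab
    exact ENNReal.toReal_mono (measure_ne_top μ _) (measure_mono (Ici_subset_Ici.2 hab))
  have hFmeas : Measurable (fun t : ℝ => ∫ u in Set.Ici t, (2*u - 1) ∂μ) := by
    have h : (fun t : ℝ => ∫ u in Set.Ici t, (2*u - 1) ∂μ)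
        = fun t => 2*(∫ u in Set.Ici t, u ∂μ) - (μ (Set.Ici t)).toReal :=
      funext fun t => F_eq μ hs t
    rw [h]
    exact ((hA.measurable).const_mul 2).sub hB.measurable
  have hgmeas : Measurable (fun t : ℝ => |(∫ u in Set.Ici t, (2*u - 1) ∂μ) - t*(1-t)|^2) :=
    ((hFmeas.sub (by fun_prop)).abs).pow_const 2
  have hbackward : Δ = 0 → μ = volume.restrict (Set.Ioo (0:ℝ) 1) := by
    intro h0
    have hbd : ∀ t ∈ Set.Ioo (0:ℝ) 1,
        |(∫ u in Set.Ici t, (2*u - 1) ∂μ) - t*(1-t)|^2 ≤ 4 := by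
      intro t ht
      have h1 : ‖∫ u in Set.Ici t, (2*u - 1) ∂μ‖ ≤ 1 * (μ (Set.Ici t)).toReal := by
        apply norm_setIntegral_le_of_norm_le_const_ae' (measure_lt_top μ _)
        filter_upwards [ae_mem_of_compl' hs] with u hu _
        rw [Real.norm_eq_abs, abs_le]
        constructor <;> nlinarith [hu.1, hu.2]
      have h2 : (μ (Set.Ici t)).toReal ≤ 1 := by
        have := ENNReal.toReal_mono (by simp : (1:ℝ≥0∞) ≠ ⊤) (prob_le_one (μ := μ) (s := Set.Ici t))
        simpa using this
      have h3 : |∫ u in Set.Ici t, (2*u - 1) ∂μ| ≤ 1 := by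
        rw [← Real.norm_eq_abs]; nlinarith
      have h4 : |t*(1-t)| ≤ 1 := by
        rw [abs_le]; constructor <;> nlinarith [ht.1, ht.2]
      have h5 : |(∫ u in Set.Ici t, (2*u - 1) ∂μ) - t*(1-t)| ≤ 2 :=
        le_trans (abs_sub _ _) (by linarith)
      calc |(∫ u in Set.Ici t, (2*u - 1) ∂μ) - t*(1-t)|^2 ≤ 2^2 :=
            pow_le_pow_left₀ (abs_nonneg _) h5 2
        _ = 4 := by norm_num
    have hInt : IntegrableOn (fun t : ℝ => |(∫ u in Set.Ici t, (2*u - 1) ∂μ) - t*(1-t)|^2)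
        (Set.Ioo (0:ℝ) 1) volume := by
      refine (integrable_const (4:ℝ)).mono' hgmeas.aestronglyMeasurable ?_
      rw [ae_restrict_iff' measurableSet_Ioo]
      refine ae_of_all _ fun t ht => ?_
      rw [Real.norm_eq_abs, abs_of_nonneg (by positivity)]
      exact hbd t ht
    have h00 : ∫ t in Set.Ioo (0:ℝ) 1,
        |(∫ u in Set.Ici t, (2*u - 1) ∂μ) - t*(1-t)|^2 = 0 := by
      rw [← hΔ']; exact h0
    have hzero := (integral_eq_zero_iff_of_nonneg (fun t => by positivity) hInt).mp h00
    have hg0 : ∀ᵐ t ∂volume, t ∈ Set.Ioo (0:ℝ) 1 →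
        (∫ u in Set.Ici t, (2*u - 1) ∂μ) = t*(1-t) := by
      rw [← ae_restrict_iff' measurableSet_Ioo]
      filter_upwards [hzero] with t ht
      simp only [Pi.zero_apply] at ht
      exact sub_eq_zero.mp (abs_eq_zero.mp ((pow_eq_zero_iff two_ne_zero).mp ht))
    have hFall : ∀ t ∈ Set.Ioo (0:ℝ) 1, ∫ u in Set.Ici t, (2*u - 1) ∂μ = t - t^2 := by
      intro t0 ht0
      have hchoice : ∀ n : ℕ, ∃ z : ℝ, (z ∈ Set.Ioo (max (t0 - 1/(n+1)) (t0/2)) t0) ∧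
          (z ∈ Set.Ioo (0:ℝ) 1 → ∫ u in Set.Ici z, (2*u - 1) ∂μ = z*(1-z)) := by
        intro n
        by_contra hc
        push_neg at hc
        have hsub : Set.Ioo (max (t0 - 1/(n+1)) (t0/2)) t0 ⊆
            {t : ℝ | ¬ (t ∈ Set.Ioo (0:ℝ) 1 →
              (∫ u in Set.Ici t, (2*u - 1) ∂μ) = t*(1-t))} := by
          intro z hz
          simp only [mem_setOf_eq]
          intro hP
          obtain ⟨y, hy⟩ := hc z hz
          exact hy (hP y)
        have hnull : volume (Set.Ioo (max (t0 - 1/(n+1)) (t0/2)) t0) = 0 :=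
          measure_mono_null hsub (ae_iff.mp hg0)
        rw [Real.volume_Ioo] at hnull
        have hlt : max (t0 - 1/(n+1)) (t0/2) < t0 := by
          apply max_lt
          · have : (0:ℝ) < 1/(n+1) := by positivity
            linarith
          · linarith [ht0.1]
        rw [ENNReal.ofReal_eq_zero] at hnull
        linarith
      choose x hx1 hx2 using hchoice
      have hxmem : ∀ n, x n ∈ Set.Ioo (0:ℝ) 1 := by
        intro n
        have h1 := (hx1 n).1
        have h2 := le_max_right (t0 - 1/((n:ℝ)+1)) (t0/2)
        exact ⟨by linarith [ht0.1], lt_trans (hx1 n).2 ht0.2⟩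
      have hxval : ∀ n, ∫ u in Set.Ici (x n), (2*u - 1) ∂μ = x n * (1 - x n) :=
        fun n => hx2 n (hxmem n)
      have hxlt : ∀ n, x n < t0 := fun n => (hx1 n).2
      have hxt : Tendsto x atTop (𝓝 t0) := by
        have hlow : Tendsto (fun n : ℕ => t0 - 1/(n+1)) atTop (𝓝 t0) := by
          have := tendsto_const_nhds (x := t0) (f := atTop (α := ℕ))
          simpa using this.sub tendsto_one_div_add_atTop_nhds_zero_nat
        refine tendsto_of_tendsto_of_tendsto_of_le_of_le hlow tendsto_const_nhds ?_ ?_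
        · intro n
          exact le_trans (le_max_left _ _) (hx1 n).1.le
        · exact fun n => (hxlt n).le
      have hDCT : Tendsto (fun n => ∫ u in Set.Ici (x n), (2*u - 1) ∂μ) atTop
          (𝓝 (∫ u in Set.Ici t0, (2*u - 1) ∂μ)) := by
        apply setIntegral_Ici_tendsto μ hs measurableSet_Ici
        refine ae_of_all _ fun u => ?_
        rcases le_or_gt t0 u with hge | hlt
        · have heq : ∀ n, (Set.Ici (x n)).indicator (fun v : ℝ => 2*v - 1) u
              = (Set.Ici t0).indicator (fun v : ℝ => 2*v - 1) u := fun n => by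
            rw [Set.indicator_of_mem (mem_Ici.2 (le_trans (hxlt n).le hge)),
              Set.indicator_of_mem (mem_Ici.2 hge)]
          rw [funext heq]
          exact tendsto_const_nhds
        · have hev : ∀ᶠ n in atTop, u < x n := hxt.eventually_const_lt hlt
          rw [Set.indicator_of_notMem (by simpa using not_le.2 hlt)]
          refine (tendsto_const_nhds (x := (0:ℝ))).congr' ?_
          filter_upwards [hev] with n hn
          exact (Set.indicator_of_notMem (by simpa using not_le.2 hn) _).symm
      have hval2 : Tendsto (fun n => ∫ u in Set.Ici (x n), (2*u - 1) ∂μ) atTop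
          (𝓝 (t0*(1-t0))) := by
        rw [funext hxval]
        exact hxt.mul (tendsto_const_nhds.sub hxt)
      have hfin := tendsto_nhds_unique hDCT hval2
      rw [hfin]; ring
    exact key μ hs hFall
  constructor
  · exact ⟨hbackward, hforward⟩
  · intro hne
    have hΔ0 : Δ ≠ 0 := fun h => hne (hbackward h)
    have hnn : 0 ≤ Δ := by
      rw [hΔ']
      exact integral_nonneg fun t => by positivity
    exact lt_of_le_of_ne hnn (Ne.symm hΔ0)
end
end

section
/- Let U have the Beta(2,2) distribution, i.e., density f(x) = 6x(1−x) on (0,1), and define Ψ(t) = E[(2U−1)·1{U ≥ t}] and K_W(s,t) = E[(2U−1)²·1{U ≥ max(s,t)}] − Ψ(s)·Ψ(t). Then for all s,t ∈ (0,1), writing m = max(s,t), K_W(s,t) = (24/5)m⁵ − 12m⁴ + 10m³ − 3m² − 9t²(t−1)²s²(s−1)² + 1/5. -/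
open MeasureTheory Set
open scoped NNReal ENNReal

lemma pushforward_integral
    {Ω : Type*} [MeasurableSpace Ω] (P : Measure Ω) [IsProbabilityMeasure P]
    (U : Ω → ℝ) (hU : Measurable U)
    (hlaw : P.map U = (volume.restrict (Set.Ioo (0 : ℝ) 1)).withDensity
      (fun x => ENNReal.ofReal (6 * x * (1 - x))))
    (g : ℝ → ℝ) (hg : Continuous g) {t : ℝ} (ht : t ∈ Set.Ioo (0 : ℝ) 1) :
    ∫ ω in {ω | t ≤ U ω}, g (U ω) ∂P = ∫ x in t..1, g x * (6 * x * (1 - x)) := by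
  have h1 : {ω | t ≤ U ω} = U ⁻¹' Set.Ici t := rfl
  rw [h1, ← setIntegral_map measurableSet_Ici (hg.aestronglyMeasurable) hU.aemeasurable, hlaw]
  have hd : (fun x : ℝ => ENNReal.ofReal (6 * x * (1 - x)))
      = fun x : ℝ => ((Real.toNNReal (6 * x * (1 - x)) : ℝ≥0) : ℝ≥0∞) := rfl
  rw [hd, setIntegral_withDensity_eq_setIntegral_smul
    (by fun_prop) _ measurableSet_Ici]
  rw [Measure.restrict_restrict measurableSet_Ici]
  have hset : Set.Ici t ∩ Set.Ioo (0 : ℝ) 1 = Set.Ico t 1 := by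
    ext x
    simp only [Set.mem_inter_iff, Set.mem_Ici, Set.mem_Ioo, Set.mem_Ico]
    constructor
    · rintro ⟨h1, h2, h3⟩; exact ⟨h1, h3⟩
    · rintro ⟨h1, h2⟩; exact ⟨h1, lt_of_lt_of_le ht.1 h1, h2⟩
  rw [hset, restrict_Ico_eq_restrict_Ioc,
    ← intervalIntegral.integral_of_le ht.2.le]
  apply intervalIntegral.integral_congr
  intro x hx
  rw [Set.uIcc_of_le ht.2.le] at hx
  have hx0 : 0 ≤ x := le_trans ht.1.le hx.1
  have h6 : 0 ≤ 6 * x * (1 - x) := by nlinarith [hx.2]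
  simp [NNReal.smul_def, Real.coe_toNNReal _ h6]
  ring

lemma integ1 (t : ℝ) : ∫ x in t..1, (2 * x - 1) * (6 * x * (1 - x))
    = 3 * t ^ 2 * (t - 1) ^ 2 := by
  have h : ∀ x ∈ Set.uIcc t 1, HasDerivAt (fun x : ℝ => -3 * x ^ 4 + 6 * x ^ 3 - 3 * x ^ 2)
      ((2 * x - 1) * (6 * x * (1 - x))) x := by
    intro x _
    have h4 := (hasDerivAt_pow 4 x).const_mul (-3 : ℝ)
    have h3 := (hasDerivAt_pow 3 x).const_mul (6 : ℝ)
    have h2 := (hasDerivAt_pow 2 x).const_mul (3 : ℝ)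
    have := (h4.add h3).sub h2
    refine this.congr_deriv ?_
    push_cast
    ring
  rw [intervalIntegral.integral_eq_sub_of_hasDerivAt h (Continuous.intervalIntegrable (by fun_prop) _ _)]
  ring

lemma integ2 (t : ℝ) : ∫ x in t..1, (2 * x - 1) ^ 2 * (6 * x * (1 - x))
    = 24 / 5 * t ^ 5 - 12 * t ^ 4 + 10 * t ^ 3 - 3 * t ^ 2 + 1 / 5 := by
  have h : ∀ x ∈ Set.uIcc t 1, HasDerivAt
      (fun x : ℝ => -(24 / 5) * x ^ 5 + 12 * x ^ 4 - 10 * x ^ 3 + 3 * x ^ 2)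
      ((2 * x - 1) ^ 2 * (6 * x * (1 - x))) x := by
    intro x _
    have h5 := (hasDerivAt_pow 5 x).const_mul (-(24 / 5) : ℝ)
    have h4 := (hasDerivAt_pow 4 x).const_mul (12 : ℝ)
    have h3 := (hasDerivAt_pow 3 x).const_mul (10 : ℝ)
    have h2 := (hasDerivAt_pow 2 x).const_mul (3 : ℝ)
    have := ((h5.add h4).sub h3).add h2
    refine this.congr_deriv ?_
    push_cast
    ring
  rw [intervalIntegral.integral_eq_sub_of_hasDerivAt h (Continuous.intervalIntegrable (by fun_prop) _ _)]
  ring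

/-- **Example (a), Beta(2,2), covariance kernel**: if `U` has density `6x(1−x)` on
`(0,1)`, `Ψ(t) = E[(2U−1)·1{U ≥ t}]` and
`K_W(s,t) = E[(2U−1)²·1{U ≥ max(s,t)}] − Ψ(s)Ψ(t)`, then for all `s,t ∈ (0,1)`,
with `m = max(s,t)`,
`K_W(s,t) = (24/5)m⁵ − 12m⁴ + 10m³ − 3m² − 9t²(t−1)²s²(s−1)² + 1/5`. -/
theorem beta_2_2_KW
    {Ω : Type*} [MeasurableSpace Ω] (P : Measure Ω) [IsProbabilityMeasure P]
    (U : Ω → ℝ) (hU : Measurable U)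
    (hlaw : P.map U = (volume.restrict (Set.Ioo (0 : ℝ) 1)).withDensity
      (fun x => ENNReal.ofReal (6 * x * (1 - x))))
    (Ψ : ℝ → ℝ) (KW : ℝ → ℝ → ℝ)
    (hΨ : ∀ t, Ψ t = ∫ ω in {ω | t ≤ U ω}, (2 * U ω - 1) ∂P)
    (hKW : ∀ s t, KW s t =
      (∫ ω in {ω | max s t ≤ U ω}, (2 * U ω - 1) ^ 2 ∂P) - Ψ s * Ψ t) :
    ∀ s ∈ Set.Ioo (0 : ℝ) 1, ∀ t ∈ Set.Ioo (0 : ℝ) 1,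
      KW s t = (24 / 5) * (max s t) ^ 5 - 12 * (max s t) ^ 4 + 10 * (max s t) ^ 3
        - 3 * (max s t) ^ 2 - 9 * t ^ 2 * (t - 1) ^ 2 * s ^ 2 * (s - 1) ^ 2
        + 1 / 5 := by
  intro s hs t ht
  have hm : max s t ∈ Set.Ioo (0 : ℝ) 1 := by
    constructor
    · exact lt_of_lt_of_le hs.1 (le_max_left s t)
    · exact max_lt hs.2 ht.2
  have hΨval : ∀ u ∈ Set.Ioo (0 : ℝ) 1, Ψ u = 3 * u ^ 2 * (u - 1) ^ 2 := by
    intro u hu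
    rw [hΨ u, pushforward_integral P U hU hlaw (fun x => 2 * x - 1) (by fun_prop) hu,
      integ1]
  have hsq : (∫ ω in {ω | max s t ≤ U ω}, (2 * U ω - 1) ^ 2 ∂P)
      = 24 / 5 * (max s t) ^ 5 - 12 * (max s t) ^ 4 + 10 * (max s t) ^ 3
        - 3 * (max s t) ^ 2 + 1 / 5 := by
    rw [pushforward_integral P U hU hlaw (fun x => (2 * x - 1) ^ 2) (by fun_prop) hm, integ2]
  rw [hKW, hsq, hΨval s hs, hΨval t ht]
  ring
end
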